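/- arXiv:2201.01063 — 3 statements merged into one kernel-verified Lean document; each statement's English description precedes it below -/
import Mathlib

section
/- Let n ≥ 3 and T ⊆ {1,…,n} with {n−1, n} ⊆ T. If |T| is odd, the geometric realization of the induced subcomplex K'_{χ',T} is homotopy equivalent to the sphere S^{|T|−1}. If |T| is even, the geometric realization of K'_{χ',T} is contractible. -/
/-- The `(i,j)` entry of the characteristic matrix `χ'` of the small cover over
`P₅ × I^{n−2}` (rows `1,…,n`, columns `1,…,2n+1`): row `i` has `1`'s exactly at positions
`i`, `n+i` and `2n+1`. -/
def chi'Entry (n i j : ℕ) : ZMod 2 :=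
  if j = i ∨ j = n + i ∨ j = 2 * n + 1 then 1 else 0

/-- The support of `χ'_T = ∑_{i∈T} (row i of χ')`, as a subset of `{1,…,2n+1}`. -/
def chi'Supp (n : ℕ) (T : Finset ℕ) : Finset ℕ :=
  (Finset.Icc 1 (2 * n + 1)).filter (fun j => (∑ i ∈ T, chi'Entry n i j) ≠ 0)

/-- The vertex set of the 5-cycle `C₅`, in cyclic order `n−1, n, 2n−1, 2n, 2n+1`. -/
def pentCyc (n : ℕ) : Finset ℕ := {n - 1, n, 2 * n - 1, 2 * n, 2 * n + 1}

/-- The edges of the 5-cycle `C₅` with vertices `n−1, n, 2n−1, 2n, 2n+1` in cyclic order. -/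
def pentEdges (n : ℕ) : Finset (Finset ℕ) :=
  {{n - 1, n}, {n, 2 * n - 1}, {2 * n - 1, 2 * n}, {2 * n, 2 * n + 1}, {2 * n + 1, n - 1}}

/-- Faces of `K'`, the simplicial join of the 5-cycle `C₅` (on vertices
`n−1, n, 2n−1, 2n, 2n+1`) with the boundary complex of the `(n−2)`-dimensional cross
polytope on `{1,…,n−2} ∪ {n+1,…,2n−2}` with antipodal pairs `{i, n+i}` (`1 ≤ i ≤ n−2`):
`t` is a face iff its intersection with the cycle is a face of the cycle (empty, a vertex,
or an edge) and it contains no antipodal pair. -/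
def pentFace (n : ℕ) (t : Finset ℕ) : Prop :=
  t ⊆ Finset.Icc 1 (2 * n + 1) ∧
  (∀ i ∈ Finset.Icc 1 (n - 2), ¬(i ∈ t ∧ n + i ∈ t)) ∧
  (t ∩ pentCyc n = ∅ ∨ (∃ a ∈ pentCyc n, t ∩ pentCyc n = {a}) ∨ t ∩ pentCyc n ∈ pentEdges n)

/-- The geometric realization of an abstract simplicial complex with vertices among
`{0,…,m−1}`, whose faces are given by the predicate `K`: the space of convex weight
functions whose support is a face of `K`. -/
abbrev GeomReal (m : ℕ) (K : Finset ℕ → Prop) : Type :=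
  {f : Fin m → ℝ // (∀ v, 0 ≤ f v) ∧ (∑ v, f v = 1) ∧
    K ((Finset.univ.filter (fun v => f v ≠ 0)).image Fin.val)}


noncomputable section Pent

/-- Pentagon vertex weights: barycentric-type coordinates for the convex pentagon
with vertices `(1,0), (0,1), (-2,1), (-1,-1), (1,-1)` around the origin. -/
def pg1 (x y : ℝ) : ℝ := max 0 (min (x + y) x)
def pg2 (x y : ℝ) : ℝ := max 0 (min y ((x + 2*y)/2))
def pg3 (x y : ℝ) : ℝ := max 0 (min (-x/2) ((y - x)/3))
def pg4 (x y : ℝ) : ℝ := max 0 (min ((-x - 2*y)/3) ((-x - y)/2))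
def pg5 (x y : ℝ) : ℝ := max 0 (min ((x - y)/2) (-y))

lemma pg1_nonneg (x y : ℝ) : 0 ≤ pg1 x y := le_max_left _ _
lemma pg2_nonneg (x y : ℝ) : 0 ≤ pg2 x y := le_max_left _ _
lemma pg3_nonneg (x y : ℝ) : 0 ≤ pg3 x y := le_max_left _ _
lemma pg4_nonneg (x y : ℝ) : 0 ≤ pg4 x y := le_max_left _ _
lemma pg5_nonneg (x y : ℝ) : 0 ≤ pg5 x y := le_max_left _ _

section evals
variable {x y : ℝ}

lemma sec1_eval (hx : 0 ≤ x) (hy : 0 ≤ y) :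
    pg1 x y = x ∧ pg2 x y = y ∧ pg3 x y = 0 ∧ pg4 x y = 0 ∧ pg5 x y = 0 := by
  unfold pg1 pg2 pg3 pg4 pg5
  refine ⟨?_, ?_, ?_, ?_, ?_⟩
  · rw [min_eq_right (by linarith), max_eq_right hx]
  · rw [min_eq_left (by linarith), max_eq_right hy]
  · exact max_eq_left (le_trans (min_le_left _ _) (by linarith))
  · exact max_eq_left (le_trans (min_le_left _ _) (by linarith))
  · exact max_eq_left (le_trans (min_le_right _ _) (by linarith))

lemma sec2_eval (hx : x ≤ 0) (h : 0 ≤ x + 2*y) :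
    pg1 x y = 0 ∧ pg2 x y = (x + 2*y)/2 ∧ pg3 x y = -x/2 ∧ pg4 x y = 0 ∧ pg5 x y = 0 := by
  unfold pg1 pg2 pg3 pg4 pg5
  refine ⟨?_, ?_, ?_, ?_, ?_⟩
  · exact max_eq_left (le_trans (min_le_right _ _) (by linarith))
  · rw [min_eq_right (by linarith), max_eq_right (by linarith)]
  · rw [min_eq_left (by linarith), max_eq_right (by linarith)]
  · exact max_eq_left (le_trans (min_le_left _ _) (by linarith))
  · exact max_eq_left (le_trans (min_le_right _ _) (by linarith))

lemma sec3_eval (h1 : x + 2*y ≤ 0) (h2 : x ≤ y) :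
    pg1 x y = 0 ∧ pg2 x y = 0 ∧ pg3 x y = (y - x)/3 ∧ pg4 x y = (-x - 2*y)/3 ∧ pg5 x y = 0 := by
  unfold pg1 pg2 pg3 pg4 pg5
  refine ⟨?_, ?_, ?_, ?_, ?_⟩
  · exact max_eq_left (le_trans (min_le_right _ _) (by linarith))
  · exact max_eq_left (le_trans (min_le_right _ _) (by linarith))
  · rw [min_eq_right (by linarith), max_eq_right (by linarith)]
  · rw [min_eq_left (by linarith), max_eq_right (by linarith)]
  · exact max_eq_left (le_trans (min_le_left _ _) (by linarith))

lemma sec4_eval (h1 : y ≤ x) (h2 : x + y ≤ 0) :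
    pg1 x y = 0 ∧ pg2 x y = 0 ∧ pg3 x y = 0 ∧ pg4 x y = (-x - y)/2 ∧ pg5 x y = (x - y)/2 := by
  unfold pg1 pg2 pg3 pg4 pg5
  refine ⟨?_, ?_, ?_, ?_, ?_⟩
  · exact max_eq_left (le_trans (min_le_left _ _) (by linarith))
  · exact max_eq_left (le_trans (min_le_left _ _) (by linarith))
  · exact max_eq_left (le_trans (min_le_right _ _) (by linarith))
  · rw [min_eq_right (by linarith), max_eq_right (by linarith)]
  · rw [min_eq_left (by linarith), max_eq_right (by linarith)]

lemma sec5_eval (h1 : 0 ≤ x + y) (h2 : y ≤ 0) :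
    pg1 x y = x + y ∧ pg2 x y = 0 ∧ pg3 x y = 0 ∧ pg4 x y = 0 ∧ pg5 x y = -y := by
  unfold pg1 pg2 pg3 pg4 pg5
  refine ⟨?_, ?_, ?_, ?_, ?_⟩
  · rw [min_eq_left (by linarith), max_eq_right h1]
  · exact max_eq_left (le_trans (min_le_left _ _) (by linarith))
  · exact max_eq_left (le_trans (min_le_left _ _) (by linarith))
  · exact max_eq_left (le_trans (min_le_right _ _) (by linarith))
  · rw [min_eq_right (by linarith), max_eq_right (by linarith)]

end evals

/-- Every direction lies in one of the five sectors. -/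
lemma pg_cover (x y : ℝ) :
    (0 ≤ x ∧ 0 ≤ y) ∨ (x ≤ 0 ∧ 0 ≤ x + 2*y) ∨ (x + 2*y ≤ 0 ∧ x ≤ y) ∨
    (y ≤ x ∧ x + y ≤ 0) ∨ (0 ≤ x + y ∧ y ≤ 0) := by
  rcases le_total 0 x with hx | hx <;> rcases le_total 0 y with hy | hy <;>
    rcases le_total 0 (x + y) with hxy | hxy <;> rcases le_total 0 (x + 2*y) with h2 | h2 <;>
    rcases le_total x y with hyx | hyx <;>
    first
      | exact Or.inl ⟨by linarith, by linarith⟩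
      | exact Or.inr (Or.inl ⟨by linarith, by linarith⟩)
      | exact Or.inr (Or.inr (Or.inl ⟨by linarith, by linarith⟩))
      | exact Or.inr (Or.inr (Or.inr (Or.inl ⟨by linarith, by linarith⟩)))
      | exact Or.inr (Or.inr (Or.inr (Or.inr ⟨by linarith, by linarith⟩)))

/-- The weights reproduce the point: first coordinate. -/
lemma pg_sum_x (x y : ℝ) :
    pg1 x y * 1 + pg2 x y * 0 + pg3 x y * (-2) + pg4 x y * (-1) + pg5 x y * 1 = x := by
  rcases pg_cover x y with ⟨h1, h2⟩ | ⟨h1, h2⟩ | ⟨h1, h2⟩ | ⟨h1, h2⟩ | ⟨h1, h2⟩ <;>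
    [obtain ⟨e1,e2,e3,e4,e5⟩ := sec1_eval h1 h2; obtain ⟨e1,e2,e3,e4,e5⟩ := sec2_eval h1 h2;
     obtain ⟨e1,e2,e3,e4,e5⟩ := sec3_eval h1 h2; obtain ⟨e1,e2,e3,e4,e5⟩ := sec4_eval h1 h2;
     obtain ⟨e1,e2,e3,e4,e5⟩ := sec5_eval h1 h2] <;>
  rw [e1, e2, e3, e4, e5] <;> ring

/-- The weights reproduce the point: second coordinate. -/
lemma pg_sum_y (x y : ℝ) :
    pg1 x y * 0 + pg2 x y * 1 + pg3 x y * 1 + pg4 x y * (-1) + pg5 x y * (-1) = y := by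
  rcases pg_cover x y with ⟨h1, h2⟩ | ⟨h1, h2⟩ | ⟨h1, h2⟩ | ⟨h1, h2⟩ | ⟨h1, h2⟩ <;>
    [obtain ⟨e1,e2,e3,e4,e5⟩ := sec1_eval h1 h2; obtain ⟨e1,e2,e3,e4,e5⟩ := sec2_eval h1 h2;
     obtain ⟨e1,e2,e3,e4,e5⟩ := sec3_eval h1 h2; obtain ⟨e1,e2,e3,e4,e5⟩ := sec4_eval h1 h2;
     obtain ⟨e1,e2,e3,e4,e5⟩ := sec5_eval h1 h2] <;>
  rw [e1, e2, e3, e4, e5] <;> ring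

end Pent


section Gen

lemma finset_subset_pair {s : Finset ℕ} {a b : ℕ} (h : s ⊆ {a, b}) :
    s = ∅ ∨ s = {a} ∨ s = {b} ∨ s = ({a, b} : Finset ℕ) := by
  classical
  by_cases ha : a ∈ s <;> by_cases hb : b ∈ s
  · right; right; right
    apply Finset.Subset.antisymm h
    intro x hx
    simp only [Finset.mem_insert, Finset.mem_singleton] at hx
    rcases hx with rfl | rfl <;> assumption
  · right; left
    apply Finset.Subset.antisymm
    · intro x hx
      have := h hx
      simp only [Finset.mem_insert, Finset.mem_singleton] at this ⊢
      rcases this with rfl | rfl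
      · rfl
      · exact absurd hx hb
    · simpa using ha
  · right; right; left
    apply Finset.Subset.antisymm
    · intro x hx
      have := h hx
      simp only [Finset.mem_insert, Finset.mem_singleton] at this ⊢
      rcases this with rfl | rfl
      · exact absurd hx ha
      · rfl
    · simpa using hb
  · left
    rw [Finset.eq_empty_iff_forall_notMem]
    intro x hx
    have := h hx
    simp only [Finset.mem_insert, Finset.mem_singleton] at this
    rcases this with rfl | rfl <;> [exact ha hx; exact hb hx]

/-- `pentFace` together with a subset constraint is downward closed. -/
lemma pentFace_mono {n : ℕ} {s r : Finset ℕ} (hs : pentFace n s) (hr : r ⊆ s) :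
    pentFace n r := by
  obtain ⟨h1, h2, h3⟩ := hs
  refine ⟨hr.trans h1, fun i hi hmem => h2 i hi ⟨hr hmem.1, hr hmem.2⟩, ?_⟩
  have hsub : r ∩ pentCyc n ⊆ s ∩ pentCyc n := Finset.inter_subset_inter hr le_rfl
  rcases h3 with h | ⟨a, _, h⟩ | h
  · left
    rw [← Finset.subset_empty, ← h]; exact hsub
  · rw [h] at hsub
    rcases Finset.subset_singleton_iff.1 hsub with h' | h'
    · left; exact h'
    · right; left; exact ⟨a, by assumption, h'⟩
  · have : ∃ a b, s ∩ pentCyc n = ({a, b} : Finset ℕ) ∧ a ∈ pentCyc n ∧ b ∈ pentCyc n := by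
      simp only [pentEdges, Finset.mem_insert, Finset.mem_singleton] at h
      rcases h with h | h | h | h | h <;> refine ⟨_, _, h, ?_, ?_⟩ <;>
        simp [pentCyc, Finset.mem_insert]
    obtain ⟨a, b, hab, hac, hbc⟩ := this
    rw [hab] at hsub
    rcases finset_subset_pair hsub with h' | h' | h' | h'
    · left; exact h'
    · right; left; exact ⟨a, hac, h'⟩
    · right; left; exact ⟨b, hbc, h'⟩
    · right; right; rw [h', ← hab]; assumption

/-- Characterization of membership in `chi'Supp`. -/
lemma mem_chi'Supp {n : ℕ} (hn : 3 ≤ n) {T : Finset ℕ} (hT : T ⊆ Finset.Icc 1 n) (j : ℕ) :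
    j ∈ chi'Supp n T ↔
      (j ∈ T ∨ (∃ i ∈ T, j = n + i) ∨ (j = 2*n + 1 ∧ ¬ Even T.card)) := by
  classical
  have hTr : ∀ i ∈ T, 1 ≤ i ∧ i ≤ n := fun i hi => Finset.mem_Icc.1 (hT hi)
  constructor
  · rintro hj
    rw [chi'Supp, Finset.mem_filter, Finset.mem_Icc] at hj
    obtain ⟨⟨hj1, hj2⟩, hne⟩ := hj
    by_contra hcon
    push_neg at hcon
    obtain ⟨hc1, hc2, hc3⟩ := hcon
    apply hne
    by_cases h21 : j = 2*n + 1
    · have : ∀ i ∈ T, chi'Entry n i j = 1 := by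
        intro i hi
        rw [chi'Entry, if_pos]
        right; right; exact h21
      rw [Finset.sum_congr rfl this, Finset.sum_const, nsmul_eq_mul, mul_one]
      rw [ZMod.natCast_eq_zero_iff]
      exact even_iff_two_dvd.1 (hc3 h21)
    · have : ∀ i ∈ T, chi'Entry n i j = 0 := by
        intro i hi
        obtain ⟨hi1, hi2⟩ := hTr i hi
        rw [chi'Entry, if_neg]
        rintro (rfl | h | h)
        · exact hc1 hi
        · exact hc2 i hi h
        · exact h21 h
      rw [Finset.sum_congr rfl this, Finset.sum_const, smul_zero]
  · intro hj
    rw [chi'Supp, Finset.mem_filter, Finset.mem_Icc]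
    rcases hj with hj | ⟨i0, hi0, rfl⟩ | ⟨rfl, hodd⟩
    · obtain ⟨hj1, hj2⟩ := hTr j hj
      refine ⟨⟨hj1, by omega⟩, ?_⟩
      have : ∀ i ∈ T, chi'Entry n i j = if i = j then 1 else 0 := by
        intro i hi
        obtain ⟨hi1, hi2⟩ := hTr i hi
        rw [chi'Entry]
        by_cases hij : i = j
        · rw [if_pos (by omega), if_pos hij]
        · rw [if_neg, if_neg hij]
          rintro (rfl | h | h) <;> omega
      rw [Finset.sum_congr rfl this, Finset.sum_ite_eq' T j (fun _ => (1 : ZMod 2)),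
        if_pos hj]
      decide
    · obtain ⟨hi1, hi2⟩ := hTr i0 hi0
      refine ⟨⟨by omega, by omega⟩, ?_⟩
      have : ∀ i ∈ T, chi'Entry n i (n + i0) = if i = i0 then 1 else 0 := by
        intro i hi
        obtain ⟨ha, hb⟩ := hTr i hi
        rw [chi'Entry]
        by_cases hij : i = i0
        · rw [if_pos (by omega), if_pos hij]
        · rw [if_neg, if_neg hij]
          rintro (h | h | h) <;> omega
      rw [Finset.sum_congr rfl this, Finset.sum_ite_eq' T i0 (fun _ => (1 : ZMod 2)),
        if_pos hi0]
      decide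
    · refine ⟨⟨by omega, le_rfl⟩, ?_⟩
      have : ∀ i ∈ T, chi'Entry n i (2*n+1) = 1 := by
        intro i hi
        rw [chi'Entry, if_pos]
        right; right; rfl
      rw [Finset.sum_congr rfl this, Finset.sum_const, nsmul_eq_mul, mul_one]
      intro h0
      rw [ZMod.natCast_eq_zero_iff] at h0
      exact hodd (even_iff_two_dvd.2 h0)

end Gen


section EvenCase

/-- The face predicate of the induced subcomplex. -/
def Kp (n : ℕ) (T : Finset ℕ) (t : Finset ℕ) : Prop :=
  pentFace n t ∧ t ⊆ chi'Supp n T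

lemma Kp_mono {n : ℕ} {T : Finset ℕ} {s r : Finset ℕ} (hs : Kp n T s) (hr : r ⊆ s) :
    Kp n T r := ⟨pentFace_mono hs.1 hr, hr.trans hs.2⟩

/-- Support of a weight function, as a finset of naturals. -/
noncomputable def fsupp {m : ℕ} (f : Fin m → ℝ) : Finset ℕ :=
  (Finset.univ.filter (fun v => f v ≠ 0)).image Fin.val

lemma mem_fsupp {m : ℕ} {f : Fin m → ℝ} {j : ℕ} :
    j ∈ fsupp f ↔ ∃ h : j < m, f ⟨j, h⟩ ≠ 0 := by
  constructor
  · intro hj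
    rw [fsupp, Finset.mem_image] at hj
    obtain ⟨v, hv, rfl⟩ := hj
    rw [Finset.mem_filter] at hv
    exact ⟨v.isLt, by simpa [Fin.eta] using hv.2⟩
  · rintro ⟨h, hf⟩
    rw [fsupp, Finset.mem_image]
    exact ⟨⟨j, h⟩, Finset.mem_filter.2 ⟨Finset.mem_univ _, hf⟩, rfl⟩

lemma mem_pentCyc {n x : ℕ} :
    x ∈ pentCyc n ↔ x = n-1 ∨ x = n ∨ x = 2*n-1 ∨ x = 2*n ∨ x = 2*n+1 := by
  simp [pentCyc]

lemma mem_pentEdges {n : ℕ} {e : Finset ℕ} :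
    e ∈ pentEdges n ↔ e = {n-1, n} ∨ e = {n, 2*n-1} ∨ e = {2*n-1, 2*n} ∨
      e = {2*n, 2*n+1} ∨ e = {2*n+1, n-1} := by
  simp [pentEdges]

section FaceLemmas
variable {n : ℕ} {T : Finset ℕ} (hn : 3 ≤ n)

lemma inter_cyc_union {s : Finset ℕ} {c : ℕ} (hc : c ∈ pentCyc n) :
    (s ∪ {c}) ∩ pentCyc n = (s ∩ pentCyc n) ∪ {c} := by
  rw [Finset.union_inter_distrib_right, Finset.singleton_inter_of_mem hc]

/-- Generic helper: adding a cycle vertex `c` keeps the non-cycle conditions. -/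
lemma Kp_add_aux {s : Finset ℕ} {c : ℕ} (hK : Kp n T s)
    (hc1 : 1 ≤ c) (hc2 : c ≤ 2*n+1) (hcBig : n - 1 ≤ c) (hcNot : ∀ i, 1 ≤ i → i ≤ n - 2 → c ≠ n + i)
    (hchi : c ∈ chi'Supp n T)
    (hcyc : (s ∪ {c}) ∩ pentCyc n = ∅ ∨
      (∃ a ∈ pentCyc n, (s ∪ {c}) ∩ pentCyc n = {a}) ∨
      (s ∪ {c}) ∩ pentCyc n ∈ pentEdges n) :
    Kp n T (s ∪ {c}) := by
  obtain ⟨⟨hsub, hanti, _⟩, hchiS⟩ := hK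
  refine ⟨⟨?_, ?_, hcyc⟩, ?_⟩
  · exact Finset.union_subset hsub (by simp [Finset.mem_Icc, hc1, hc2])
  · intro i hi
    rw [Finset.mem_Icc] at hi
    rintro ⟨ha, hb⟩
    rw [Finset.mem_union, Finset.mem_singleton] at ha hb
    rcases ha with ha | rfl
    · rcases hb with hb | hb
      · exact hanti i (Finset.mem_Icc.2 hi) ⟨ha, hb⟩
      · exact hcNot i hi.1 hi.2 hb.symm
    · omega
  · exact Finset.union_subset hchiS (by simpa using hchi)

include hn in
/-- Adding `2n-1` when `2n ∈ s`, `2n+1 ∉ s`. -/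
lemma Kp_addC {s : Finset ℕ} (hK : Kp n T s) (h1 : n - 1 ∈ T)
    (hT : T ⊆ Finset.Icc 1 n)
    (hD : 2*n ∈ s) (hE : 2*n+1 ∉ s) : Kp n T (s ∪ {2*n-1}) := by
  have hcC : (2*n-1 : ℕ) ∈ pentCyc n := mem_pentCyc.2 (by omega)
  have hcD : (2*n : ℕ) ∈ pentCyc n := mem_pentCyc.2 (by omega)
  have hDm : 2*n ∈ s ∩ pentCyc n := Finset.mem_inter.2 ⟨hD, hcD⟩
  refine Kp_add_aux hK (by omega) (by omega) (by omega) (fun i hi1 hi2 => by omega)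
    ((mem_chi'Supp hn hT _).2 (Or.inr (Or.inl ⟨n-1, h1, by omega⟩))) ?_
  rw [inter_cyc_union hcC]
  rcases hK.1.2.2 with h0 | ⟨a, ha, hsing⟩ | hedge
  · rw [h0] at hDm; exact absurd hDm (Finset.notMem_empty _)
  · rw [hsing] at hDm
    rw [Finset.mem_singleton] at hDm
    subst hDm
    right; right
    rw [hsing]
    refine mem_pentEdges.2 (Or.inr (Or.inr (Or.inl ?_)))
    ext x; simp only [Finset.mem_union, Finset.mem_singleton, Finset.mem_insert] <;> omega
  · rcases mem_pentEdges.1 hedge with h | h | h | h | h <;> rw [h] at hDm <;>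
      simp only [Finset.mem_insert, Finset.mem_singleton] at hDm
    · omega
    · omega
    · right; right
      rw [h]
      refine mem_pentEdges.2 (Or.inr (Or.inr (Or.inl ?_)))
      ext x; simp only [Finset.mem_union, Finset.mem_singleton, Finset.mem_insert] <;> omega
    · exfalso
      apply hE
      have : (2*n+1 : ℕ) ∈ s ∩ pentCyc n := by
        rw [h]; simp
      exact (Finset.mem_inter.1 this).1
    · omega

include hn in
/-- Adding `n` when `2n-1 ∈ s` and `2n, 2n+1 ∉ s`. -/
lemma Kp_addB1 {s : Finset ℕ} (hK : Kp n T s) (h2 : n ∈ T)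
    (hT : T ⊆ Finset.Icc 1 n)
    (hC : 2*n-1 ∈ s) (hD : 2*n ∉ s) (hE : 2*n+1 ∉ s) : Kp n T (s ∪ {n}) := by
  have hcB : (n : ℕ) ∈ pentCyc n := mem_pentCyc.2 (by omega)
  have hcC : (2*n-1 : ℕ) ∈ pentCyc n := mem_pentCyc.2 (by omega)
  have hCm : 2*n-1 ∈ s ∩ pentCyc n := Finset.mem_inter.2 ⟨hC, hcC⟩
  refine Kp_add_aux hK (by omega) (by omega) (by omega) (fun i hi1 hi2 => by omega)
    ((mem_chi'Supp hn hT _).2 (Or.inl h2)) ?_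
  rw [inter_cyc_union hcB]
  rcases hK.1.2.2 with h0 | ⟨a, ha, hsing⟩ | hedge
  · rw [h0] at hCm; exact absurd hCm (Finset.notMem_empty _)
  · rw [hsing] at hCm
    rw [Finset.mem_singleton] at hCm
    subst hCm
    right; right
    rw [hsing]
    refine mem_pentEdges.2 (Or.inr (Or.inl ?_))
    ext x; simp only [Finset.mem_union, Finset.mem_singleton, Finset.mem_insert] <;> omega
  · rcases mem_pentEdges.1 hedge with h | h | h | h | h <;> rw [h] at hCm <;>
      simp only [Finset.mem_insert, Finset.mem_singleton] at hCm
    · omega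
    · right; right
      rw [h]
      refine mem_pentEdges.2 (Or.inr (Or.inl ?_))
      ext x; simp only [Finset.mem_union, Finset.mem_singleton, Finset.mem_insert] <;> omega
    · exfalso
      apply hD
      have : (2*n : ℕ) ∈ s ∩ pentCyc n := by rw [h]; simp
      exact (Finset.mem_inter.1 this).1
    · omega
    · omega

include hn in
/-- Adding `n` when `n-1 ∈ s` and `2n-1, 2n, 2n+1 ∉ s`. -/
lemma Kp_addB2 {s : Finset ℕ} (hK : Kp n T s) (h2 : n ∈ T)
    (hT : T ⊆ Finset.Icc 1 n)
    (hA : n-1 ∈ s) (hC : 2*n-1 ∉ s) (hD : 2*n ∉ s) (hE : 2*n+1 ∉ s) :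
    Kp n T (s ∪ {n}) := by
  have hcB : (n : ℕ) ∈ pentCyc n := mem_pentCyc.2 (by omega)
  have hcA : (n-1 : ℕ) ∈ pentCyc n := mem_pentCyc.2 (by omega)
  have hAm : n-1 ∈ s ∩ pentCyc n := Finset.mem_inter.2 ⟨hA, hcA⟩
  refine Kp_add_aux hK (by omega) (by omega) (by omega) (fun i hi1 hi2 => by omega)
    ((mem_chi'Supp hn hT _).2 (Or.inl h2)) ?_
  rw [inter_cyc_union hcB]
  rcases hK.1.2.2 with h0 | ⟨a, ha, hsing⟩ | hedge
  · rw [h0] at hAm; exact absurd hAm (Finset.notMem_empty _)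
  · rw [hsing] at hAm
    rw [Finset.mem_singleton] at hAm
    subst hAm
    right; right
    rw [hsing]
    refine mem_pentEdges.2 (Or.inl ?_)
    ext x; simp only [Finset.mem_union, Finset.mem_singleton, Finset.mem_insert] <;> omega
  · rcases mem_pentEdges.1 hedge with h | h | h | h | h <;> rw [h] at hAm <;>
      simp only [Finset.mem_insert, Finset.mem_singleton] at hAm
    · right; right
      rw [h]
      refine mem_pentEdges.2 (Or.inl ?_)
      ext x; simp only [Finset.mem_union, Finset.mem_singleton, Finset.mem_insert] <;> omega
    · omega
    · omega
    · omega
    · exfalso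
      apply hE
      have : (2*n+1 : ℕ) ∈ s ∩ pentCyc n := by
        rw [h]; simp
      exact (Finset.mem_inter.1 this).1

include hn in
/-- Adding `n` when no other cycle vertex is in `s`. -/
lemma Kp_addB3 {s : Finset ℕ} (hK : Kp n T s) (h2 : n ∈ T)
    (hT : T ⊆ Finset.Icc 1 n)
    (hA : n-1 ∉ s) (hC : 2*n-1 ∉ s) (hD : 2*n ∉ s) (hE : 2*n+1 ∉ s) :
    Kp n T (s ∪ {n}) := by
  have hcB : (n : ℕ) ∈ pentCyc n := mem_pentCyc.2 (by omega)
  refine Kp_add_aux hK (by omega) (by omega) (by omega) (fun i hi1 hi2 => by omega)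
    ((mem_chi'Supp hn hT _).2 (Or.inl h2)) ?_
  rw [inter_cyc_union hcB]
  have hsub : s ∩ pentCyc n ⊆ {n} := by
    intro x hx
    rw [Finset.mem_inter] at hx
    rcases mem_pentCyc.1 hx.2 with h | h | h | h | h <;> subst h <;>
      first
        | (exact Finset.mem_singleton.2 rfl)
        | (exact absurd hx.1 (by assumption))
  rcases Finset.subset_singleton_iff.1 hsub with h | h <;> rw [h]
  · right; left
    exact ⟨n, hcB, by simp⟩
  · right; left
    exact ⟨n, hcB, by simp⟩

end FaceLemmas

end EvenCase


section Move

/-- The membership condition of `GeomReal`. -/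
def GCond (n : ℕ) (T : Finset ℕ) (f : Fin (2*n+2) → ℝ) : Prop :=
  (∀ v, 0 ≤ f v) ∧ (∑ v, f v = 1) ∧ Kp n T (fsupp f)

/-- Linearly move mass from coordinate `a` to coordinate `b`. -/
def mvFun {m : ℕ} (a b : Fin m) (t : ℝ) (f : Fin m → ℝ) : Fin m → ℝ :=
  fun v => f v + t * f a * ((if v = b then 1 else 0) - (if v = a then 1 else 0))

lemma mvFun_sum {m : ℕ} (a b : Fin m) (t : ℝ) (f : Fin m → ℝ) :
    ∑ v, mvFun a b t f v = ∑ v, f v := by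
  simp only [mvFun]
  rw [Finset.sum_add_distrib, ← Finset.mul_sum, Finset.sum_sub_distrib,
    Finset.sum_ite_eq' Finset.univ b (fun _ => (1:ℝ)),
    Finset.sum_ite_eq' Finset.univ a (fun _ => (1:ℝ))]
  simp

lemma mvFun_apply_other {m : ℕ} {a b v : Fin m} (t : ℝ) (f : Fin m → ℝ)
    (hva : v ≠ a) (hvb : v ≠ b) : mvFun a b t f v = f v := by
  simp [mvFun, hva, hvb]

lemma mvFun_apply_a {m : ℕ} {a b : Fin m} (hab : a ≠ b) (t : ℝ) (f : Fin m → ℝ) :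
    mvFun a b t f a = (1 - t) * f a := by
  simp [mvFun, hab]; ring

lemma mvFun_one_a {m : ℕ} {a b : Fin m} (hab : a ≠ b) (f : Fin m → ℝ) :
    mvFun a b 1 f a = 0 := by
  rw [mvFun_apply_a hab]; ring

lemma mvFun_zero_t {m : ℕ} (a b : Fin m) (f : Fin m → ℝ) : mvFun a b 0 f = f := by
  funext v; simp [mvFun]

lemma mvFun_of_apex_zero {m : ℕ} (a b : Fin m) (t : ℝ) {f : Fin m → ℝ} (h : f a = 0) :
    mvFun a b t f = f := by
  funext v; simp [mvFun, h]

lemma mvFun_nonneg {m : ℕ} {a b : Fin m} (hab : a ≠ b) {t : ℝ} (ht0 : 0 ≤ t) (ht1 : t ≤ 1)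
    {f : Fin m → ℝ} (hf : ∀ v, 0 ≤ f v) (v : Fin m) : 0 ≤ mvFun a b t f v := by
  by_cases hvb : v = b
  · rw [mvFun, if_pos hvb, if_neg (fun h => hab ((h.symm.trans hvb)))]
    nlinarith [hf v, hf a]
  · by_cases hva : v = a
    · rw [mvFun, if_neg hvb, if_pos hva, ← hva]
      nlinarith [hf v]
    · rw [mvFun_apply_other t f hva hvb]; exact hf v

lemma mvFun_supp {m : ℕ} {a b : Fin m} {t : ℝ} {f : Fin m → ℝ} :
    fsupp (mvFun a b t f) ⊆ fsupp f ∪ {(b : ℕ)} ∪ {(a : ℕ)} := by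
  intro j hj
  obtain ⟨hlt, hne⟩ := mem_fsupp.1 hj
  by_cases hvb : (⟨j, hlt⟩ : Fin m) = b
  · exact Finset.mem_union_left _ (Finset.mem_union_right _ (by
      simp [← hvb]))
  · by_cases hva : (⟨j, hlt⟩ : Fin m) = a
    · exact Finset.mem_union_right _ (by simp [← hva])
    · rw [mvFun_apply_other t f hva hvb] at hne
      exact Finset.mem_union_left _ (Finset.mem_union_left _ (mem_fsupp.2 ⟨hlt, hne⟩))

lemma fin_val_mem_supp {m : ℕ} {f : Fin m → ℝ} {v : Fin m} (h : f v ≠ 0) :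
    (v : ℕ) ∈ fsupp f := mem_fsupp.2 ⟨v.isLt, by simpa [Fin.eta] using h⟩

/-- Key step lemma: moving mass from `a` to `b` stays in the complex. -/
lemma mv_mem {n : ℕ} {T : Finset ℕ} {a b : Fin (2*n+2)} (hab : a ≠ b)
    {t : ℝ} (ht0 : 0 ≤ t) (ht1 : t ≤ 1) {f : Fin (2*n+2) → ℝ} (hf : GCond n T f)
    (hface : f a ≠ 0 → Kp n T (fsupp f ∪ {(b : ℕ)})) :
    GCond n T (mvFun a b t f) := by
  obtain ⟨hpos, hsum, hK⟩ := hf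
  refine ⟨mvFun_nonneg hab ht0 ht1 hpos, by rw [mvFun_sum, hsum], ?_⟩
  by_cases ha : f a = 0
  · rw [mvFun_of_apex_zero a b t ha]; exact hK
  · refine Kp_mono (hface ha) ?_
    refine mvFun_supp.trans ?_
    apply Finset.union_subset (le_rfl)
    intro x hx
    rw [Finset.mem_singleton] at hx
    subst hx
    exact Finset.mem_union_left _ (fin_val_mem_supp ha)

lemma mvFun_continuous {m : ℕ} (a b : Fin m) :
    Continuous (fun p : ℝ × (Fin m → ℝ) => mvFun a b p.1 p.2) := by
  apply continuous_pi
  intro v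
  simp only [mvFun]
  fun_prop

end Move


section Lin

def linFun {m : ℕ} (b : Fin m) (t : ℝ) (f : Fin m → ℝ) : Fin m → ℝ :=
  fun v => (1-t) * f v + t * (if v = b then 1 else 0)

lemma linFun_zero {m : ℕ} (b : Fin m) (f : Fin m → ℝ) : linFun b 0 f = f := by
  funext v; simp [linFun]

lemma linFun_one {m : ℕ} (b : Fin m) (f : Fin m → ℝ) :
    linFun b 1 f = fun v => if v = b then 1 else 0 := by
  funext v; simp [linFun]

lemma linFun_sum {m : ℕ} (b : Fin m) (t : ℝ) {f : Fin m → ℝ} (hsum : ∑ v, f v = 1) :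
    ∑ v, linFun b t f v = 1 := by
  simp only [linFun]
  rw [Finset.sum_add_distrib, ← Finset.mul_sum, ← Finset.mul_sum, hsum,
    Finset.sum_ite_eq' Finset.univ b (fun _ => (1:ℝ))]
  simp

lemma linFun_nonneg {m : ℕ} (b : Fin m) {t : ℝ} (h0 : 0 ≤ t) (h1 : t ≤ 1)
    {f : Fin m → ℝ} (hf : ∀ v, 0 ≤ f v) (v : Fin m) : 0 ≤ linFun b t f v := by
  rw [linFun]
  by_cases hvb : v = b
  · rw [if_pos hvb]; nlinarith [hf v]
  · rw [if_neg hvb]; nlinarith [hf v]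

lemma linFun_supp {m : ℕ} {b : Fin m} {t : ℝ} {f : Fin m → ℝ} :
    fsupp (linFun b t f) ⊆ fsupp f ∪ {(b : ℕ)} := by
  intro j hj
  obtain ⟨hlt, hne⟩ := mem_fsupp.1 hj
  by_cases hvb : (⟨j, hlt⟩ : Fin m) = b
  · exact Finset.mem_union_right _ (by simp [← hvb])
  · rw [linFun, if_neg hvb] at hne
    refine Finset.mem_union_left _ (mem_fsupp.2 ⟨hlt, fun h0 => hne ?_⟩)
    rw [h0]; ring

lemma lin_mem {n : ℕ} {T : Finset ℕ} {b : Fin (2*n+2)} {t : ℝ} (h0 : 0 ≤ t) (h1 : t ≤ 1)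
    {f : Fin (2*n+2) → ℝ} (hf : GCond n T f) (hKadd : Kp n T (fsupp f ∪ {(b : ℕ)})) :
    GCond n T (linFun b t f) :=
  ⟨linFun_nonneg b h0 h1 hf.1, linFun_sum b t hf.2.1, Kp_mono hKadd linFun_supp⟩

lemma linFun_continuous {m : ℕ} (b : Fin m) :
    Continuous (fun p : ℝ × (Fin m → ℝ) => linFun b p.1 p.2) := by
  apply continuous_pi
  intro v
  simp only [linFun]
  fun_prop

lemma not_mem_fsupp {m : ℕ} {f : Fin m → ℝ} {v : Fin m} (h : f v = 0) :
    (v : ℕ) ∉ fsupp f := by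
  intro hmem
  obtain ⟨hlt, hne⟩ := mem_fsupp.1 hmem
  exact hne (by rwa [show (⟨(v : ℕ), hlt⟩ : Fin m) = v from Fin.ext rfl])

end Lin

theorem even_contractible {n : ℕ} (hn : 3 ≤ n) {T : Finset ℕ}
    (hT : T ⊆ Finset.Icc 1 n) (h1 : n - 1 ∈ T) (h2 : n ∈ T) (heven : Even T.card) :
    ContractibleSpace
      (GeomReal (2 * n + 2) (fun t => pentFace n t ∧ t ⊆ chi'Supp n T)) := by
  set GR := GeomReal (2 * n + 2) (fun t => pentFace n t ∧ t ⊆ chi'Supp n T) with hGR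
  let vA : Fin (2*n+2) := ⟨n-1, by omega⟩
  let vB : Fin (2*n+2) := ⟨n, by omega⟩
  let vC : Fin (2*n+2) := ⟨2*n-1, by omega⟩
  let vD : Fin (2*n+2) := ⟨2*n, by omega⟩
  let vE : Fin (2*n+2) := ⟨2*n+1, by omega⟩
  have hDC : vD ≠ vC := Fin.ne_of_val_ne (show 2*n ≠ 2*n-1 by omega)
  have hCB : vC ≠ vB := Fin.ne_of_val_ne (show 2*n-1 ≠ n by omega)
  have hAB : vA ≠ vB := Fin.ne_of_val_ne (show n-1 ≠ n by omega)
  have hEC : vE ≠ vC := Fin.ne_of_val_ne (show 2*n+1 ≠ 2*n-1 by omega)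
  have hED : vE ≠ vD := Fin.ne_of_val_ne (show 2*n+1 ≠ 2*n by omega)
  have hEB : vE ≠ vB := Fin.ne_of_val_ne (show 2*n+1 ≠ n by omega)
  have hDB : vD ≠ vB := Fin.ne_of_val_ne (show 2*n ≠ n by omega)
  have hDA : vD ≠ vA := Fin.ne_of_val_ne (show 2*n ≠ n-1 by omega)
  have hCA : vC ≠ vA := Fin.ne_of_val_ne (show 2*n-1 ≠ n-1 by omega)
  have hEA : vE ≠ vA := Fin.ne_of_val_ne (show 2*n+1 ≠ n-1 by omega)
  have hKf : ∀ f : GR, GCond n T f.1 := fun f => f.2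
  -- the last cycle vertex is never in the support
  have hEchi : (2*n+1 : ℕ) ∉ chi'Supp n T := by
    rw [mem_chi'Supp hn hT]
    rintro (h | ⟨i, hi, hji⟩ | ⟨-, hodd⟩)
    · have := Finset.mem_Icc.1 (hT h); omega
    · have := Finset.mem_Icc.1 (hT hi); omega
    · exact hodd heven
  have hEzero : ∀ f : GR, f.1 vE = 0 := by
    intro f
    by_contra h
    exact hEchi ((hKf f).2.2.2 (fin_val_mem_supp h))
  -- step 1 : move the mass of 2n onto 2n-1
  have hm1 : ∀ t : ℝ, 0 ≤ t → t ≤ 1 → ∀ f : GR, GCond n T (mvFun vD vC t f.1) := by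
    intro t h0 h1' f
    refine mv_mem hDC h0 h1' (hKf f) ?_
    intro hD
    exact Kp_addC hn (hKf f).2.2 h1 hT (fin_val_mem_supp hD) (not_mem_fsupp (hEzero f))
  let g1 : GR → (Fin (2*n+2) → ℝ) := fun f => mvFun vD vC 1 f.1
  have hg1 : ∀ f : GR, GCond n T (g1 f) := fun f => hm1 1 zero_le_one le_rfl f
  have hg1D : ∀ f : GR, g1 f vD = 0 := fun f => mvFun_one_a hDC f.1
  have hg1E : ∀ f : GR, g1 f vE = 0 := fun f => by
    rw [show g1 f vE = f.1 vE from mvFun_apply_other 1 f.1 hED hEC, hEzero f]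
  -- step 2 : move the mass of 2n-1 onto n
  have hm2 : ∀ t : ℝ, 0 ≤ t → t ≤ 1 → ∀ f : GR, GCond n T (mvFun vC vB t (g1 f)) := by
    intro t h0 h1' f
    refine mv_mem hCB h0 h1' (hg1 f) ?_
    intro hC
    exact Kp_addB1 hn (hg1 f).2.2 h2 hT (fin_val_mem_supp hC)
      (not_mem_fsupp (hg1D f)) (not_mem_fsupp (hg1E f))
  let g2 : GR → (Fin (2*n+2) → ℝ) := fun f => mvFun vC vB 1 (g1 f)
  have hg2 : ∀ f : GR, GCond n T (g2 f) := fun f => hm2 1 zero_le_one le_rfl f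
  have hg2C : ∀ f : GR, g2 f vC = 0 := fun f => mvFun_one_a hCB (g1 f)
  have hg2D : ∀ f : GR, g2 f vD = 0 := fun f => by
    rw [show g2 f vD = g1 f vD from mvFun_apply_other 1 (g1 f) hDC hDB, hg1D f]
  have hg2E : ∀ f : GR, g2 f vE = 0 := fun f => by
    rw [show g2 f vE = g1 f vE from mvFun_apply_other 1 (g1 f) hEC hEB, hg1E f]
  -- step 3 : move the mass of n-1 onto n
  have hm3 : ∀ t : ℝ, 0 ≤ t → t ≤ 1 → ∀ f : GR, GCond n T (mvFun vA vB t (g2 f)) := by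
    intro t h0 h1' f
    refine mv_mem hAB h0 h1' (hg2 f) ?_
    intro hA
    exact Kp_addB2 hn (hg2 f).2.2 h2 hT (fin_val_mem_supp hA)
      (not_mem_fsupp (hg2C f)) (not_mem_fsupp (hg2D f)) (not_mem_fsupp (hg2E f))
  let g3 : GR → (Fin (2*n+2) → ℝ) := fun f => mvFun vA vB 1 (g2 f)
  have hg3 : ∀ f : GR, GCond n T (g3 f) := fun f => hm3 1 zero_le_one le_rfl f
  have hg3A : ∀ f : GR, g3 f vA = 0 := fun f => mvFun_one_a hAB (g2 f)
  have hg3C : ∀ f : GR, g3 f vC = 0 := fun f => by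
    rw [show g3 f vC = g2 f vC from mvFun_apply_other 1 (g2 f) hCA hCB, hg2C f]
  have hg3D : ∀ f : GR, g3 f vD = 0 := fun f => by
    rw [show g3 f vD = g2 f vD from mvFun_apply_other 1 (g2 f) hDA hDB, hg2D f]
  have hg3E : ∀ f : GR, g3 f vE = 0 := fun f => by
    rw [show g3 f vE = g2 f vE from mvFun_apply_other 1 (g2 f) hEA hEB, hg2E f]
  -- step 4 : contract the cone to the vertex n
  have hm4 : ∀ t : ℝ, 0 ≤ t → t ≤ 1 → ∀ f : GR, GCond n T (linFun vB t (g3 f)) := by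
    intro t h0 h1' f
    refine lin_mem h0 h1' (hg3 f) ?_
    exact Kp_addB3 hn (hg3 f).2.2 h2 hT (not_mem_fsupp (hg3A f))
      (not_mem_fsupp (hg3C f)) (not_mem_fsupp (hg3D f)) (not_mem_fsupp (hg3E f))
  -- the base point
  have hpBmem : GCond n T (fun v => if v = vB then 1 else 0) := by
    refine ⟨fun v => by positivity, by
      rw [Finset.sum_ite_eq' Finset.univ vB (fun _ => (1:ℝ))]; simp, ?_⟩
    have hsupp : fsupp (fun v : Fin (2*n+2) => if v = vB then (1:ℝ) else 0) = {n} := by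
      ext j
      rw [mem_fsupp]
      constructor
      · rintro ⟨hlt, hne⟩
        by_cases hvb : (⟨j, hlt⟩ : Fin (2*n+2)) = vB
        · have : j = n := congrArg Fin.val hvb
          simp [this]
        · rw [if_neg hvb] at hne; exact absurd rfl hne
      · intro hj
        rw [Finset.mem_singleton] at hj
        subst hj
        refine ⟨by omega, ?_⟩
        rw [if_pos (Fin.ext rfl)]
        norm_num
    rw [hsupp]
    have hBcyc : (n : ℕ) ∈ pentCyc n := mem_pentCyc.2 (by omega)
    refine ⟨⟨?_, ?_, ?_⟩, ?_⟩
    · intro x hx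
      rw [Finset.mem_singleton] at hx
      subst hx
      rw [Finset.mem_Icc]; omega
    · intro i hi
      rw [Finset.mem_Icc] at hi
      rintro ⟨ha, hb⟩
      rw [Finset.mem_singleton] at ha hb
      omega
    · right; left
      exact ⟨n, hBcyc, Finset.singleton_inter_of_mem hBcyc⟩
    · intro x hx
      rw [Finset.mem_singleton] at hx
      subst hx
      exact (mem_chi'Supp hn hT _).2 (Or.inl h2)
  let pB : GR := ⟨fun v => if v = vB then 1 else 0, hpBmem⟩
  -- continuous maps
  have hcg1 : Continuous g1 :=
    (mvFun_continuous vD vC).comp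
      ((continuous_const : Continuous fun _ : GR => (1:ℝ)).prodMk continuous_subtype_val)
  have hcg2 : Continuous g2 :=
    (mvFun_continuous vC vB).comp
      ((continuous_const : Continuous fun _ : GR => (1:ℝ)).prodMk hcg1)
  have hcg3 : Continuous g3 :=
    (mvFun_continuous vA vB).comp
      ((continuous_const : Continuous fun _ : GR => (1:ℝ)).prodMk hcg2)
  let c1 : C(GR, GR) := ⟨fun f => ⟨g1 f, hg1 f⟩, Continuous.subtype_mk hcg1 _⟩
  let c2 : C(GR, GR) := ⟨fun f => ⟨g2 f, hg2 f⟩, Continuous.subtype_mk hcg2 _⟩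
  let c3 : C(GR, GR) := ⟨fun f => ⟨g3 f, hg3 f⟩, Continuous.subtype_mk hcg3 _⟩
  -- homotopies
  let H1 : ContinuousMap.Homotopy (ContinuousMap.id GR) c1 :=
    { toFun := fun p => ⟨mvFun vD vC (p.1 : ℝ) p.2.1, hm1 _ p.1.2.1 p.1.2.2 p.2⟩
      continuous_toFun := by
        apply Continuous.subtype_mk
        exact (mvFun_continuous vD vC).comp
          ((continuous_subtype_val.comp continuous_fst).prodMk
            (continuous_subtype_val.comp continuous_snd))
      map_zero_left := fun f => Subtype.ext (by
        show mvFun vD vC ((0 : unitInterval) : ℝ) f.1 = f.1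
        rw [show ((0 : unitInterval) : ℝ) = 0 from rfl, mvFun_zero_t])
      map_one_left := fun f => Subtype.ext (by
        show mvFun vD vC ((1 : unitInterval) : ℝ) f.1 = g1 f
        rw [show ((1 : unitInterval) : ℝ) = 1 from rfl]) }
  let H2 : ContinuousMap.Homotopy c1 c2 :=
    { toFun := fun p => ⟨mvFun vC vB (p.1 : ℝ) (g1 p.2), hm2 _ p.1.2.1 p.1.2.2 p.2⟩
      continuous_toFun := by
        apply Continuous.subtype_mk
        exact (mvFun_continuous vC vB).comp
          ((continuous_subtype_val.comp continuous_fst).prodMk (hcg1.comp continuous_snd))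
      map_zero_left := fun f => Subtype.ext (by
        show mvFun vC vB ((0 : unitInterval) : ℝ) (g1 f) = g1 f
        rw [show ((0 : unitInterval) : ℝ) = 0 from rfl, mvFun_zero_t])
      map_one_left := fun f => Subtype.ext (by
        show mvFun vC vB ((1 : unitInterval) : ℝ) (g1 f) = g2 f
        rw [show ((1 : unitInterval) : ℝ) = 1 from rfl]) }
  let H3 : ContinuousMap.Homotopy c2 c3 :=
    { toFun := fun p => ⟨mvFun vA vB (p.1 : ℝ) (g2 p.2), hm3 _ p.1.2.1 p.1.2.2 p.2⟩
      continuous_toFun := by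
        apply Continuous.subtype_mk
        exact (mvFun_continuous vA vB).comp
          ((continuous_subtype_val.comp continuous_fst).prodMk (hcg2.comp continuous_snd))
      map_zero_left := fun f => Subtype.ext (by
        show mvFun vA vB ((0 : unitInterval) : ℝ) (g2 f) = g2 f
        rw [show ((0 : unitInterval) : ℝ) = 0 from rfl, mvFun_zero_t])
      map_one_left := fun f => Subtype.ext (by
        show mvFun vA vB ((1 : unitInterval) : ℝ) (g2 f) = g3 f
        rw [show ((1 : unitInterval) : ℝ) = 1 from rfl]) }
  let H4 : ContinuousMap.Homotopy c3 (ContinuousMap.const GR pB) :=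
    { toFun := fun p => ⟨linFun vB (p.1 : ℝ) (g3 p.2), hm4 _ p.1.2.1 p.1.2.2 p.2⟩
      continuous_toFun := by
        apply Continuous.subtype_mk
        exact (linFun_continuous vB).comp
          ((continuous_subtype_val.comp continuous_fst).prodMk (hcg3.comp continuous_snd))
      map_zero_left := fun f => Subtype.ext (by
        show linFun vB ((0 : unitInterval) : ℝ) (g3 f) = g3 f
        rw [show ((0 : unitInterval) : ℝ) = 0 from rfl, linFun_zero])
      map_one_left := fun f => Subtype.ext (by
        show linFun vB ((1 : unitInterval) : ℝ) (g3 f) = fun v => if v = vB then 1 else 0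
        rw [show ((1 : unitInterval) : ℝ) = 1 from rfl, linFun_one]) }
  have hnull : (ContinuousMap.id GR).Nullhomotopic :=
    ⟨pB, ⟨(H1.trans H2).trans (H3.trans H4)⟩⟩
  exact (contractible_iff_id_nullhomotopic GR).2 hnull


noncomputable section OddDefs

/-- Position of an element of `T` in the enumeration of `T`. -/
def widx (T : Finset ℕ) (i : ℕ) (hi : i ∈ T) : Fin T.card :=
  (T.orderIsoOfFin rfl).symm ⟨i, hi⟩

/-- The element of `T` at a given position. -/
def tidx (T : Finset ℕ) (j : Fin T.card) : ℕ := ((T.orderIsoOfFin rfl) j : ℕ)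

lemma tidx_mem (T : Finset ℕ) (j : Fin T.card) : tidx T j ∈ T :=
  ((T.orderIsoOfFin rfl) j).2

lemma tidx_widx (T : Finset ℕ) (i : ℕ) (hi : i ∈ T) : tidx T (widx T i hi) = i := by
  rw [tidx, widx, OrderIso.apply_symm_apply]

lemma widx_tidx (T : Finset ℕ) (j : Fin T.card) (h : tidx T j ∈ T) :
    widx T (tidx T j) h = j := by
  rw [widx]
  have : (⟨tidx T j, h⟩ : {x // x ∈ T}) = (T.orderIsoOfFin rfl) j := Subtype.ext rfl
  rw [this, OrderIso.symm_apply_apply]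

lemma widx_congr (T' : Finset ℕ) {a b : ℕ} (h : a = b) (ha : a ∈ T') (hb : b ∈ T') :
    widx T' a ha = widx T' b hb := by subst h; rfl

lemma tidx_inj {T : Finset ℕ} {j j' : Fin T.card} (h : tidx T j = tidx T j') : j = j' := by
  have := Subtype.ext h (p := fun x => x ∈ T)
  exact (T.orderIsoOfFin rfl).injective this

/-- The five cycle vertices of the pentagon, as elements of `Fin (2n+2)`. -/
def cv1 (n : ℕ) : Fin (2*n+2) := ⟨n-1, by omega⟩
def cv2 (n : ℕ) : Fin (2*n+2) := ⟨n, by omega⟩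
def cv3 (n : ℕ) : Fin (2*n+2) := ⟨2*n-1, by omega⟩
def cv4 (n : ℕ) : Fin (2*n+2) := ⟨2*n, by omega⟩
def cv5 (n : ℕ) : Fin (2*n+2) := ⟨2*n+1, by omega⟩

/-- First pentagon coordinate. -/
def Y1 (n : ℕ) (f : Fin (2*n+2) → ℝ) : ℝ :=
  f (cv1 n) - 2 * f (cv3 n) - f (cv4 n) + f (cv5 n)

/-- Second pentagon coordinate. -/
def Y2 (n : ℕ) (f : Fin (2*n+2) → ℝ) : ℝ :=
  f (cv2 n) + f (cv3 n) - f (cv4 n) - f (cv5 n)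

/-- The linear map from the realization into euclidean space. -/
def PhiMap (n : ℕ) (T : Finset ℕ) (hT : T ⊆ Finset.Icc 1 n) (f : Fin (2*n+2) → ℝ) :
    EuclideanSpace ℝ (Fin T.card) := WithLp.toLp 2 (fun j =>
  if tidx T j = n - 1 then Y1 n f
  else if tidx T j = n then Y2 n f
  else f ⟨tidx T j, by have := Finset.mem_Icc.1 (hT (tidx_mem T j)); omega⟩
     - f ⟨n + tidx T j, by have := Finset.mem_Icc.1 (hT (tidx_mem T j)); omega⟩)

/-- The inverse weight construction. -/
def wRaw (n : ℕ) (T : Finset ℕ) (h1 : n - 1 ∈ T) (h2 : n ∈ T)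
    (u : Fin T.card → ℝ) : Fin (2*n+2) → ℝ := fun v =>
  if v.val = n - 1 then pg1 (u (widx T (n-1) h1)) (u (widx T n h2))
  else if v.val = n then pg2 (u (widx T (n-1) h1)) (u (widx T n h2))
  else if v.val = 2*n - 1 then pg3 (u (widx T (n-1) h1)) (u (widx T n h2))
  else if v.val = 2*n then pg4 (u (widx T (n-1) h1)) (u (widx T n h2))
  else if v.val = 2*n + 1 then pg5 (u (widx T (n-1) h1)) (u (widx T n h2))
  else if hv : v.val ∈ T ∧ v.val ≤ n - 2 then max (u (widx T v.val hv.1)) 0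
  else if hv : n + 1 ≤ v.val ∧ v.val ≤ 2*n - 2 ∧ v.val - n ∈ T then
    max (-(u (widx T (v.val - n) hv.2.2))) 0
  else 0

/-- Total mass of the inverse weights. -/
def MM (n : ℕ) (T : Finset ℕ) (h1 : n - 1 ∈ T) (h2 : n ∈ T) (u : Fin T.card → ℝ) : ℝ :=
  ∑ v, wRaw n T h1 h2 u v

end OddDefs

section OddEval

variable {n : ℕ} {T : Finset ℕ} (hn : 3 ≤ n) (h1 : n - 1 ∈ T) (h2 : n ∈ T)

include hn

lemma wRaw_cv1 (u : Fin T.card → ℝ) :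
    wRaw n T h1 h2 u (cv1 n) = pg1 (u (widx T (n-1) h1)) (u (widx T n h2)) := by
  rw [wRaw]; simp only [cv1]; simp

lemma wRaw_cv2 (u : Fin T.card → ℝ) :
    wRaw n T h1 h2 u (cv2 n) = pg2 (u (widx T (n-1) h1)) (u (widx T n h2)) := by
  rw [wRaw]
  simp only [cv2]
  rw [if_neg (by omega)]; simp

lemma wRaw_cv3 (u : Fin T.card → ℝ) :
    wRaw n T h1 h2 u (cv3 n) = pg3 (u (widx T (n-1) h1)) (u (widx T n h2)) := by
  rw [wRaw]
  simp only [cv3]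
  rw [if_neg (by omega), if_neg (by omega)]; simp

lemma wRaw_cv4 (u : Fin T.card → ℝ) :
    wRaw n T h1 h2 u (cv4 n) = pg4 (u (widx T (n-1) h1)) (u (widx T n h2)) := by
  rw [wRaw]
  simp only [cv4]
  rw [if_neg (by omega), if_neg (by omega), if_neg (by omega)]; simp

lemma wRaw_cv5 (u : Fin T.card → ℝ) :
    wRaw n T h1 h2 u (cv5 n) = pg5 (u (widx T (n-1) h1)) (u (widx T n h2)) := by
  rw [wRaw]
  simp only [cv5]
  rw [if_neg (by omega), if_neg (by omega), if_neg (by omega), if_neg (by omega)]; simp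

lemma wRaw_pair (hT : T ⊆ Finset.Icc 1 n) (u : Fin T.card → ℝ) {v : Fin (2*n+2)}
    (hvT : (v : ℕ) ∈ T) (hv2 : (v : ℕ) ≤ n - 2) :
    wRaw n T h1 h2 u v = max (u (widx T (v : ℕ) hvT)) 0 := by
  have hv1 : 1 ≤ (v : ℕ) := (Finset.mem_Icc.1 (hT hvT)).1
  rw [wRaw]
  rw [if_neg (by omega), if_neg (by omega), if_neg (by omega), if_neg (by omega),
    if_neg (by omega), dif_pos ⟨hvT, hv2⟩]

lemma wRaw_npair (hT : T ⊆ Finset.Icc 1 n) (u : Fin T.card → ℝ) {v : Fin (2*n+2)}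
    {i : ℕ} (hvi : (v : ℕ) = n + i) (hiT : i ∈ T) (hi2 : i ≤ n - 2) :
    wRaw n T h1 h2 u v = max (-(u (widx T i hiT))) 0 := by
  have hi1 : 1 ≤ i := (Finset.mem_Icc.1 (hT hiT)).1
  rw [wRaw]
  rw [if_neg (by omega), if_neg (by omega), if_neg (by omega), if_neg (by omega),
    if_neg (by omega),
    dif_neg (fun hc => by have := (Finset.mem_Icc.1 (hT hc.1)).2; omega),
    dif_pos ⟨by omega, by omega, by rw [hvi, Nat.add_sub_cancel_left]; exact hiT⟩]
  rw [widx_congr T (show (v : ℕ) - n = i by omega) _ hiT]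

lemma wRaw_other (hT : T ⊆ Finset.Icc 1 n) (u : Fin T.card → ℝ) {v : Fin (2*n+2)}
    (hv1 : (v : ℕ) ≠ n - 1) (hv2 : (v : ℕ) ≠ n) (hv3 : (v : ℕ) ≠ 2*n - 1)
    (hv4 : (v : ℕ) ≠ 2*n) (hv5 : (v : ℕ) ≠ 2*n + 1)
    (hp : ¬((v : ℕ) ∈ T ∧ (v : ℕ) ≤ n - 2))
    (hq : ¬(n + 1 ≤ (v : ℕ) ∧ (v : ℕ) ≤ 2*n - 2 ∧ (v : ℕ) - n ∈ T)) :
    wRaw n T h1 h2 u v = 0 := by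
  rw [wRaw]
  rw [if_neg hv1, if_neg hv2, if_neg hv3, if_neg hv4, if_neg hv5, dif_neg hp, dif_neg hq]

omit hn

lemma wRaw_nonneg (u : Fin T.card → ℝ) (v : Fin (2*n+2)) :
    0 ≤ wRaw n T h1 h2 u v := by
  rw [wRaw]
  split_ifs <;>
    first
      | exact pg1_nonneg _ _
      | exact pg2_nonneg _ _
      | exact pg3_nonneg _ _
      | exact pg4_nonneg _ _
      | exact pg5_nonneg _ _
      | exact le_max_right _ _
      | exact le_refl 0

end OddEval


section OddAlg

lemma max0_smul {c a : ℝ} (hc : 0 ≤ c) : max (c * a) 0 = c * max a 0 := by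
  rcases le_total a 0 with h | h
  · rw [max_eq_right (by nlinarith), max_eq_right h, mul_zero]
  · rw [max_eq_left (by positivity), max_eq_left h]

lemma min_smul' {c a b : ℝ} (hc : 0 ≤ c) : min (c * a) (c * b) = c * min a b := by
  rcases le_total a b with h | h
  · rw [min_eq_left (by nlinarith), min_eq_left h]
  · rw [min_eq_right (by nlinarith), min_eq_right h]

lemma max0min_smul {c a b : ℝ} (hc : 0 ≤ c) :
    max 0 (min (c * a) (c * b)) = c * max 0 (min a b) := by
  rw [min_smul' hc, show max 0 (c * min a b) = max (c * min a b) 0 from max_comm _ _,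
    max0_smul hc, max_comm]

lemma pg1_smul {c x y : ℝ} (hc : 0 ≤ c) : pg1 (c*x) (c*y) = c * pg1 x y := by
  rw [pg1, pg1, show c*x + c*y = c*(x+y) by ring, max0min_smul hc]

lemma pg2_smul {c x y : ℝ} (hc : 0 ≤ c) : pg2 (c*x) (c*y) = c * pg2 x y := by
  rw [pg2, pg2, show (c*x + 2*(c*y))/2 = c*((x+2*y)/2) by ring,
    show c*y = c*y from rfl, max0min_smul hc]

lemma pg3_smul {c x y : ℝ} (hc : 0 ≤ c) : pg3 (c*x) (c*y) = c * pg3 x y := by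
  rw [pg3, pg3, show -(c*x)/2 = c*(-x/2) by ring, show (c*y - c*x)/3 = c*((y-x)/3) by ring,
    max0min_smul hc]

lemma pg4_smul {c x y : ℝ} (hc : 0 ≤ c) : pg4 (c*x) (c*y) = c * pg4 x y := by
  rw [pg4, pg4, show (-(c*x) - 2*(c*y))/3 = c*((-x-2*y)/3) by ring,
    show (-(c*x) - c*y)/2 = c*((-x-y)/2) by ring, max0min_smul hc]

lemma pg5_smul {c x y : ℝ} (hc : 0 ≤ c) : pg5 (c*x) (c*y) = c * pg5 x y := by
  rw [pg5, pg5, show (c*x - c*y)/2 = c*((x-y)/2) by ring, show -(c*y) = c*(-y) by ring,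
    max0min_smul hc]

lemma max_sub_max_neg (a : ℝ) : max a 0 - max (-a) 0 = a := by
  rcases le_total 0 a with h | h
  · rw [max_eq_left h, max_eq_right (by linarith), sub_zero]
  · rw [max_eq_right h, max_eq_left (by linarith)]; ring

end OddAlg

section OddMain

variable {n : ℕ} {T : Finset ℕ}

lemma wRaw_smul (h1 : n - 1 ∈ T) (h2 : n ∈ T) {c : ℝ} (hc : 0 ≤ c)
    (u : Fin T.card → ℝ) :
    wRaw n T h1 h2 (fun j => c * u j) = fun v => c * wRaw n T h1 h2 u v := by
  funext v
  rw [wRaw, wRaw]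
  split_ifs with hv1 hv2 hv3 hv4 hv5 hv6 hv7
  · exact pg1_smul hc
  · exact pg2_smul hc
  · exact pg3_smul hc
  · exact pg4_smul hc
  · exact pg5_smul hc
  · exact max0_smul hc
  · rw [show -(c * u (widx T ((v:ℕ) - n) hv7.2.2)) = c * (-(u (widx T ((v:ℕ) - n) hv7.2.2)))
      by ring, max0_smul hc]
  · ring

lemma MM_smul (h1 : n - 1 ∈ T) (h2 : n ∈ T) {c : ℝ} (hc : 0 ≤ c) (u : Fin T.card → ℝ) :
    MM n T h1 h2 (fun j => c * u j) = c * MM n T h1 h2 u := by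
  rw [MM, MM, wRaw_smul h1 h2 hc, Finset.mul_sum]

lemma MM_nonneg (h1 : n - 1 ∈ T) (h2 : n ∈ T) (u : Fin T.card → ℝ) :
    0 ≤ MM n T h1 h2 u :=
  Finset.sum_nonneg fun v _ => wRaw_nonneg h1 h2 u v

lemma PhiMap_smul (hT : T ⊆ Finset.Icc 1 n) (c : ℝ) (f : Fin (2*n+2) → ℝ) :
    PhiMap n T hT (fun v => c * f v) = c • PhiMap n T hT f := by
  ext j
  rw [PiLp.smul_apply, smul_eq_mul]
  rw [PhiMap, PhiMap, PiLp.toLp_apply, PiLp.toLp_apply]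
  split_ifs
  · rw [Y1, Y1]; ring
  · rw [Y2, Y2]; ring
  · ring

lemma PhiMap_zero (hT : T ⊆ Finset.Icc 1 n) :
    PhiMap n T hT (fun _ => 0) = 0 := by
  ext j
  rw [show (0 : EuclideanSpace ℝ (Fin T.card)) j = 0 from rfl, PhiMap, PiLp.toLp_apply]
  split_ifs
  · rw [Y1]; ring
  · rw [Y2]; ring
  · ring

/-- The support of a `GCond` function meets the cycle in one of five configurations. -/
lemma cyc_cases (hn : 3 ≤ n) {f : Fin (2*n+2) → ℝ} (hf : GCond n T f) :
    (f (cv3 n) = 0 ∧ f (cv4 n) = 0 ∧ f (cv5 n) = 0) ∨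
    (f (cv1 n) = 0 ∧ f (cv4 n) = 0 ∧ f (cv5 n) = 0) ∨
    (f (cv1 n) = 0 ∧ f (cv2 n) = 0 ∧ f (cv5 n) = 0) ∨
    (f (cv1 n) = 0 ∧ f (cv2 n) = 0 ∧ f (cv3 n) = 0) ∨
    (f (cv2 n) = 0 ∧ f (cv3 n) = 0 ∧ f (cv4 n) = 0) := by
  have hz : ∀ (j : ℕ) (hlt : j < 2*n+2), j ∈ pentCyc n → j ∉ fsupp f ∩ pentCyc n →
      f ⟨j, hlt⟩ = 0 := by
    intro j hlt hcyc hnot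
    by_contra hne
    exact hnot (Finset.mem_inter.2 ⟨fin_val_mem_supp hne, hcyc⟩)
  have c1 : (n-1 : ℕ) ∈ pentCyc n := mem_pentCyc.2 (by omega)
  have c2 : (n : ℕ) ∈ pentCyc n := mem_pentCyc.2 (by omega)
  have c3 : (2*n-1 : ℕ) ∈ pentCyc n := mem_pentCyc.2 (by omega)
  have c4 : (2*n : ℕ) ∈ pentCyc n := mem_pentCyc.2 (by omega)
  have c5 : (2*n+1 : ℕ) ∈ pentCyc n := mem_pentCyc.2 (by omega)
  rcases hf.2.2.1.2.2 with h0 | ⟨a, ha, hs⟩ | he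
  · left
    exact ⟨hz _ _ c3 (by rw [h0]; simp), hz _ _ c4 (by rw [h0]; simp),
      hz _ _ c5 (by rw [h0]; simp)⟩
  · rcases mem_pentCyc.1 ha with rfl | rfl | rfl | rfl | rfl
    · left
      refine ⟨hz _ _ c3 ?_, hz _ _ c4 ?_, hz _ _ c5 ?_⟩ <;>
        (rw [hs, Finset.mem_singleton]; omega)
    · left
      refine ⟨hz _ _ c3 ?_, hz _ _ c4 ?_, hz _ _ c5 ?_⟩ <;>
        (rw [hs, Finset.mem_singleton]; omega)
    · right; left
      refine ⟨hz _ _ c1 ?_, hz _ _ c4 ?_, hz _ _ c5 ?_⟩ <;>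
        (rw [hs, Finset.mem_singleton]; omega)
    · right; right; left
      refine ⟨hz _ _ c1 ?_, hz _ _ c2 ?_, hz _ _ c5 ?_⟩ <;>
        (rw [hs, Finset.mem_singleton]; omega)
    · right; right; right; left
      refine ⟨hz _ _ c1 ?_, hz _ _ c2 ?_, hz _ _ c3 ?_⟩ <;>
        (rw [hs, Finset.mem_singleton]; omega)
  · rcases mem_pentEdges.1 he with h | h | h | h | h
    · left
      refine ⟨hz _ _ c3 ?_, hz _ _ c4 ?_, hz _ _ c5 ?_⟩ <;>
        (rw [h, Finset.mem_insert, Finset.mem_singleton]; omega)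
    · right; left
      refine ⟨hz _ _ c1 ?_, hz _ _ c4 ?_, hz _ _ c5 ?_⟩ <;>
        (rw [h, Finset.mem_insert, Finset.mem_singleton]; omega)
    · right; right; left
      refine ⟨hz _ _ c1 ?_, hz _ _ c2 ?_, hz _ _ c5 ?_⟩ <;>
        (rw [h, Finset.mem_insert, Finset.mem_singleton]; omega)
    · right; right; right; left
      refine ⟨hz _ _ c1 ?_, hz _ _ c2 ?_, hz _ _ c3 ?_⟩ <;>
        (rw [h, Finset.mem_insert, Finset.mem_singleton]; omega)
    · right; right; right; right
      refine ⟨hz _ _ c2 ?_, hz _ _ c3 ?_, hz _ _ c4 ?_⟩ <;>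
        (rw [h, Finset.mem_insert, Finset.mem_singleton]; omega)

/-- The pentagon weights of the image point recover the cycle coordinates. -/
lemma pg_of_f (hn : 3 ≤ n) {f : Fin (2*n+2) → ℝ} (hf : GCond n T f) :
    pg1 (Y1 n f) (Y2 n f) = f (cv1 n) ∧ pg2 (Y1 n f) (Y2 n f) = f (cv2 n) ∧
    pg3 (Y1 n f) (Y2 n f) = f (cv3 n) ∧ pg4 (Y1 n f) (Y2 n f) = f (cv4 n) ∧
    pg5 (Y1 n f) (Y2 n f) = f (cv5 n) := by
  have hp := hf.1
  rcases cyc_cases hn hf with ⟨hA, hB, hC⟩ | ⟨hA, hB, hC⟩ | ⟨hA, hB, hC⟩ |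
    ⟨hA, hB, hC⟩ | ⟨hA, hB, hC⟩
  · have e1 : Y1 n f = f (cv1 n) := by rw [Y1, hA, hB, hC]; ring
    have e2 : Y2 n f = f (cv2 n) := by rw [Y2, hA, hB, hC]; ring
    obtain ⟨g1, g2, g3, g4, g5⟩ := sec1_eval (x := f (cv1 n)) (y := f (cv2 n))
      (hp _) (hp _)
    rw [e1, e2, g1, g2, g3, g4, g5]
    exact ⟨rfl, rfl, hA.symm, hB.symm, hC.symm⟩
  · have e1 : Y1 n f = -2 * f (cv3 n) := by rw [Y1, hA, hB, hC]; ring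
    have e2 : Y2 n f = f (cv2 n) + f (cv3 n) := by rw [Y2, hB, hC]; ring
    obtain ⟨g1, g2, g3, g4, g5⟩ := sec2_eval (x := Y1 n f) (y := Y2 n f)
      (by rw [e1]; nlinarith [hp (cv3 n)]) (by rw [e1, e2]; nlinarith [hp (cv2 n)])
    rw [g1, g2, g3, g4, g5, e1, e2]
    refine ⟨hA.symm, by ring, by ring, hB.symm, hC.symm⟩
  · have e1 : Y1 n f = -2 * f (cv3 n) - f (cv4 n) := by rw [Y1, hA, hC]; ring
    have e2 : Y2 n f = f (cv3 n) - f (cv4 n) := by rw [Y2, hB, hC]; ring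
    obtain ⟨g1, g2, g3, g4, g5⟩ := sec3_eval (x := Y1 n f) (y := Y2 n f)
      (by rw [e1, e2]; nlinarith [hp (cv4 n)]) (by rw [e1, e2]; nlinarith [hp (cv3 n)])
    rw [g1, g2, g3, g4, g5, e1, e2]
    refine ⟨hA.symm, hB.symm, by ring, by ring, hC.symm⟩
  · have e1 : Y1 n f = -(f (cv4 n)) + f (cv5 n) := by rw [Y1, hA, hC]; ring
    have e2 : Y2 n f = -(f (cv4 n)) - f (cv5 n) := by rw [Y2, hB, hC]; ring
    obtain ⟨g1, g2, g3, g4, g5⟩ := sec4_eval (x := Y1 n f) (y := Y2 n f)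
      (by rw [e1, e2]; nlinarith [hp (cv5 n)]) (by rw [e1, e2]; nlinarith [hp (cv4 n)])
    rw [g1, g2, g3, g4, g5, e1, e2]
    refine ⟨hA.symm, hB.symm, hC.symm, by ring, by ring⟩
  · have e1 : Y1 n f = f (cv1 n) + f (cv5 n) := by rw [Y1, hB, hC]; ring
    have e2 : Y2 n f = -(f (cv5 n)) := by rw [Y2, hA, hB, hC]; ring
    obtain ⟨g1, g2, g3, g4, g5⟩ := sec5_eval (x := Y1 n f) (y := Y2 n f)
      (by rw [e1, e2]; nlinarith [hp (cv1 n)]) (by rw [e2]; nlinarith [hp (cv5 n)])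
    rw [g1, g2, g3, g4, g5, e1, e2]
    refine ⟨by ring, hA.symm, hB.symm, hC.symm, by ring⟩

end OddMain


section OddRec

variable {n : ℕ} {T : Finset ℕ}

lemma Phi_at_A (hn : 3 ≤ n) (hT : T ⊆ Finset.Icc 1 n) (h1 : n - 1 ∈ T)
    (f : Fin (2*n+2) → ℝ) :
    PhiMap n T hT f (widx T (n-1) h1) = Y1 n f := by
  simp only [PhiMap, PiLp.toLp_apply]
  rw [if_pos (show tidx T (widx T (n-1) h1) = n - 1 from tidx_widx _ _ _)]

lemma Phi_at_B (hn : 3 ≤ n) (hT : T ⊆ Finset.Icc 1 n) (h2 : n ∈ T)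
    (f : Fin (2*n+2) → ℝ) :
    PhiMap n T hT f (widx T n h2) = Y2 n f := by
  simp only [PhiMap, PiLp.toLp_apply]
  rw [if_neg (show ¬ tidx T (widx T n h2) = n - 1 by rw [tidx_widx]; omega),
    if_pos (tidx_widx _ _ _)]

/-- Core recovery: the inverse weights of the image recover the original point. -/
lemma wRaw_PhiMap (hn : 3 ≤ n) (hT : T ⊆ Finset.Icc 1 n) (h1 : n - 1 ∈ T) (h2 : n ∈ T)
    {f : Fin (2*n+2) → ℝ} (hf : GCond n T f) :
    wRaw n T h1 h2 (PhiMap n T hT f) = f := by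
  obtain ⟨q1, q2, q3, q4, q5⟩ := pg_of_f hn hf
  have hx := Phi_at_A hn hT h1 f
  have hy := Phi_at_B hn hT h2 f
  funext v
  by_cases hv1 : (v : ℕ) = n - 1
  · rw [show v = cv1 n from Fin.ext hv1, wRaw_cv1 hn h1 h2, hx, hy, q1]
  by_cases hv2 : (v : ℕ) = n
  · rw [show v = cv2 n from Fin.ext hv2, wRaw_cv2 hn h1 h2, hx, hy, q2]
  by_cases hv3 : (v : ℕ) = 2*n - 1
  · rw [show v = cv3 n from Fin.ext hv3, wRaw_cv3 hn h1 h2, hx, hy, q3]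
  by_cases hv4 : (v : ℕ) = 2*n
  · rw [show v = cv4 n from Fin.ext hv4, wRaw_cv4 hn h1 h2, hx, hy, q4]
  by_cases hv5 : (v : ℕ) = 2*n + 1
  · rw [show v = cv5 n from Fin.ext hv5, wRaw_cv5 hn h1 h2, hx, hy, q5]
  by_cases hvp : (v : ℕ) ∈ T ∧ (v : ℕ) ≤ n - 2
  · rw [wRaw_pair hn h1 h2 hT _ hvp.1 hvp.2]
    have ht : tidx T (widx T (v : ℕ) hvp.1) = (v : ℕ) := tidx_widx _ _ _
    have hlt1 : (v : ℕ) < 2*n+2 := v.isLt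
    have hlt2 : n + (v : ℕ) < 2*n+2 := by omega
    have hΦ : PhiMap n T hT f (widx T (v : ℕ) hvp.1) =
        f ⟨(v : ℕ), hlt1⟩ - f ⟨n + (v : ℕ), hlt2⟩ := by
      simp only [PhiMap, PiLp.toLp_apply]
      rw [if_neg (fun hc => by rw [ht] at hc; omega),
        if_neg (fun hc => by rw [ht] at hc; omega)]
      congr 1 <;> exact congrArg f (Fin.mk_eq_mk.2 (by omega))
    have hanti := hf.2.2.1.2.1 (v : ℕ)
      (Finset.mem_Icc.2 ⟨(Finset.mem_Icc.1 (hT hvp.1)).1, hvp.2⟩)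
    by_cases hz : f ⟨n + (v : ℕ), hlt2⟩ = 0
    · rw [hΦ, hz, sub_zero]
      rw [show (⟨(v : ℕ), hlt1⟩ : Fin (2*n+2)) = v from Fin.ext rfl]
      exact max_eq_left (hf.1 v)
    · have hz2 : f v = 0 := by
        by_contra hne
        exact hanti ⟨fin_val_mem_supp hne, by
          have : (⟨n + (v : ℕ), hlt2⟩ : Fin (2*n+2)).val = n + (v : ℕ) := rfl
          exact this ▸ fin_val_mem_supp hz⟩
      rw [hΦ, show (⟨(v : ℕ), hlt1⟩ : Fin (2*n+2)) = v from Fin.ext rfl, hz2, zero_sub]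
      exact max_eq_right (by linarith [hf.1 ⟨n + (v : ℕ), hlt2⟩])
  by_cases hvq : n + 1 ≤ (v : ℕ) ∧ (v : ℕ) ≤ 2*n - 2 ∧ (v : ℕ) - n ∈ T
  · have hvi : (v : ℕ) = n + ((v : ℕ) - n) := by omega
    have hile : (v : ℕ) - n ≤ n - 2 := by omega
    rw [wRaw_npair hn h1 h2 hT _ hvi hvq.2.2 hile]
    have ht : tidx T (widx T ((v : ℕ) - n) hvq.2.2) = (v : ℕ) - n := tidx_widx _ _ _
    have hlt1 : (v : ℕ) - n < 2*n+2 := by omega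
    have hlt2 : n + ((v : ℕ) - n) < 2*n+2 := by omega
    have hΦ : PhiMap n T hT f (widx T ((v : ℕ) - n) hvq.2.2) =
        f ⟨(v : ℕ) - n, hlt1⟩ - f ⟨n + ((v : ℕ) - n), hlt2⟩ := by
      simp only [PhiMap, PiLp.toLp_apply]
      rw [if_neg (fun hc => by rw [ht] at hc; omega),
        if_neg (fun hc => by rw [ht] at hc; omega)]
      congr 1 <;> exact congrArg f (Fin.mk_eq_mk.2 (by omega))
    have hveq : (⟨n + ((v : ℕ) - n), hlt2⟩ : Fin (2*n+2)) = v :=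
      Fin.ext (show n + ((v : ℕ) - n) = (v : ℕ) by omega)
    have hanti := hf.2.2.1.2.1 ((v : ℕ) - n)
      (Finset.mem_Icc.2 ⟨(Finset.mem_Icc.1 (hT hvq.2.2)).1, hile⟩)
    by_cases hz : f ⟨(v : ℕ) - n, hlt1⟩ = 0
    · rw [hΦ, hveq, hz, zero_sub, neg_neg]
      exact max_eq_left (hf.1 v)
    · have hz2 : f v = 0 := by
        by_contra hne
        refine hanti ⟨?_, ?_⟩
        · have : (⟨(v : ℕ) - n, hlt1⟩ : Fin (2*n+2)).val = (v : ℕ) - n := rfl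
          exact this ▸ fin_val_mem_supp hz
        · have hh := fin_val_mem_supp hne
          have : n + ((v : ℕ) - n) = (v : ℕ) := by omega
          rw [this]
          exact hh
      rw [hΦ, hveq, hz2, sub_zero]
      exact max_eq_right (by linarith [hf.1 (⟨(v : ℕ) - n, hlt1⟩ : Fin (2*n+2))])
  · rw [wRaw_other hn h1 h2 hT _ hv1 hv2 hv3 hv4 hv5 hvp hvq]
    symm
    by_contra hne
    have hchi := hf.2.2.2 (fin_val_mem_supp hne)
    rcases (mem_chi'Supp hn hT _).1 hchi with hvT | ⟨i, hi, hvi⟩ | ⟨hv5', _⟩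
    · have := Finset.mem_Icc.1 (hT hvT)
      exact hvp ⟨hvT, by omega⟩
    · have hiI := Finset.mem_Icc.1 (hT hi)
      by_cases hin1 : i = n - 1
      · exact hv3 (by omega)
      by_cases hin : i = n
      · exact hv4 (by omega)
      · refine hvq ⟨by omega, by omega, ?_⟩
        rw [show (v : ℕ) - n = i from by omega]
        exact hi
    · exact hv5 hv5'

/-- The image of the inverse weights is the original vector. -/
lemma PhiMap_wRaw (hn : 3 ≤ n) (hT : T ⊆ Finset.Icc 1 n) (h1 : n - 1 ∈ T) (h2 : n ∈ T)
    (u : Fin T.card → ℝ) :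
    PhiMap n T hT (wRaw n T h1 h2 u) = u := by
  funext j
  have hsx := pg_sum_x (u (widx T (n-1) h1)) (u (widx T n h2))
  have hsy := pg_sum_y (u (widx T (n-1) h1)) (u (widx T n h2))
  simp only [PhiMap, PiLp.toLp_apply]
  by_cases hj1 : tidx T j = n - 1
  · rw [if_pos hj1]
    have hjw : j = widx T (n-1) h1 := tidx_inj (by rw [hj1, tidx_widx])
    rw [hjw, Y1, wRaw_cv1 hn h1 h2, wRaw_cv3 hn h1 h2, wRaw_cv4 hn h1 h2,
      wRaw_cv5 hn h1 h2]
    linarith [hsx]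
  by_cases hj2 : tidx T j = n
  · rw [if_neg hj1, if_pos hj2]
    have hjw : j = widx T n h2 := tidx_inj (by rw [hj2, tidx_widx])
    rw [hjw, Y2, wRaw_cv2 hn h1 h2, wRaw_cv3 hn h1 h2, wRaw_cv4 hn h1 h2,
      wRaw_cv5 hn h1 h2]
    linarith [hsy]
  · rw [if_neg hj1, if_neg hj2]
    have hmem := tidx_mem T j
    have hIcc := Finset.mem_Icc.1 (hT hmem)
    have h2' : tidx T j ≤ n - 2 := by omega
    rw [wRaw_pair hn h1 h2 hT u (v := ⟨tidx T j, by omega⟩) hmem h2',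
      wRaw_npair hn h1 h2 hT u (v := ⟨n + tidx T j, by omega⟩) rfl hmem h2',
      widx_tidx T j hmem]
    exact max_sub_max_neg (u j)

end OddRec


section OddFace

variable {n : ℕ} {T : Finset ℕ}

/-- The support of the inverse weights is a face of the induced subcomplex. -/
lemma wRaw_Kp (hn : 3 ≤ n) (hT : T ⊆ Finset.Icc 1 n) (h1 : n - 1 ∈ T) (h2 : n ∈ T)
    (hodd : ¬ Even T.card) (u : Fin T.card → ℝ) :
    Kp n T (fsupp (wRaw n T h1 h2 u)) := by
  refine ⟨⟨?_, ?_, ?_⟩, ?_⟩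
  · -- contained in Icc 1 (2n+1)
    intro j hj
    obtain ⟨hlt, hne⟩ := mem_fsupp.1 hj
    rw [Finset.mem_Icc]
    refine ⟨?_, by omega⟩
    rcases Nat.eq_zero_or_pos j with rfl | hp
    · exact absurd (wRaw_other hn h1 h2 hT u (v := ⟨0, hlt⟩)
        (show (0:ℕ) ≠ n - 1 by omega) (show (0:ℕ) ≠ n by omega)
        (show (0:ℕ) ≠ 2*n - 1 by omega) (show (0:ℕ) ≠ 2*n by omega)
        (show (0:ℕ) ≠ 2*n + 1 by omega)
        (show ¬((0:ℕ) ∈ T ∧ (0:ℕ) ≤ n - 2) from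
          fun hc => by have := (Finset.mem_Icc.1 (hT hc.1)).1; omega)
        (show ¬(n + 1 ≤ (0:ℕ) ∧ (0:ℕ) ≤ 2*n - 2 ∧ (0:ℕ) - n ∈ T) from
          fun hc => by have := hc.1; omega)) hne
    · exact hp
  · -- no antipodal pairs
    intro i hi
    rw [Finset.mem_Icc] at hi
    rintro ⟨hia, hib⟩
    obtain ⟨hlt, hne⟩ := mem_fsupp.1 hia
    obtain ⟨hlt', hne'⟩ := mem_fsupp.1 hib
    by_cases hiT : i ∈ T
    · rw [wRaw_pair hn h1 h2 hT u (v := ⟨i, hlt⟩) hiT (show i ≤ n - 2 by omega)] at hne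
      rw [wRaw_npair hn h1 h2 hT u (v := ⟨n + i, hlt'⟩)
        (show ((⟨n + i, hlt'⟩ : Fin (2*n+2)) : ℕ) = n + i from rfl) hiT
        (show i ≤ n - 2 by omega)] at hne'
      have hpos : 0 < u (widx T i hiT) := by
        rcases lt_or_ge 0 (u (widx T i hiT)) with h | h
        · exact h
        · exact absurd (max_eq_right h) hne
      have hneg : 0 < -(u (widx T i hiT)) := by
        rcases lt_or_ge 0 (-(u (widx T i hiT))) with h | h
        · exact h
        · exact absurd (max_eq_right h) hne'
      linarith
    · exact hne (wRaw_other hn h1 h2 hT u (v := ⟨i, hlt⟩)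
        (show i ≠ n - 1 by omega) (show i ≠ n by omega)
        (show i ≠ 2*n - 1 by omega) (show i ≠ 2*n by omega)
        (show i ≠ 2*n + 1 by omega)
        (show ¬(i ∈ T ∧ i ≤ n - 2) from fun hc => hiT hc.1)
        (show ¬(n + 1 ≤ i ∧ i ≤ 2*n - 2 ∧ i - n ∈ T) from
          fun hc => by have := hc.1; omega))
  · -- intersection with the cycle is a face
    have hfz : ∀ (c : Fin (2*n+2)), wRaw n T h1 h2 u c = 0 →
        ((c : ℕ) ∉ fsupp (wRaw n T h1 h2 u)) := fun c hc => not_mem_fsupp hc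
    have m1 : (n-1 : ℕ) ∈ pentCyc n := mem_pentCyc.2 (by omega)
    have m2 : (n : ℕ) ∈ pentCyc n := mem_pentCyc.2 (by omega)
    have m3 : (2*n-1 : ℕ) ∈ pentCyc n := mem_pentCyc.2 (by omega)
    have m4 : (2*n : ℕ) ∈ pentCyc n := mem_pentCyc.2 (by omega)
    have m5 : (2*n+1 : ℕ) ∈ pentCyc n := mem_pentCyc.2 (by omega)
    have hface : ∀ a b : ℕ, a ∈ pentCyc n → b ∈ pentCyc n →
        ({a, b} : Finset ℕ) ∈ pentEdges n →
        fsupp (wRaw n T h1 h2 u) ∩ pentCyc n ⊆ {a, b} →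
        (fsupp (wRaw n T h1 h2 u) ∩ pentCyc n = ∅ ∨
          (∃ c ∈ pentCyc n, fsupp (wRaw n T h1 h2 u) ∩ pentCyc n = {c}) ∨
          fsupp (wRaw n T h1 h2 u) ∩ pentCyc n ∈ pentEdges n) := by
      intro a b ha hb he hsub
      rcases finset_subset_pair hsub with h | h | h | h
      · exact Or.inl h
      · exact Or.inr (Or.inl ⟨a, ha, h⟩)
      · exact Or.inr (Or.inl ⟨b, hb, h⟩)
      · exact Or.inr (Or.inr (h ▸ he))
    rcases pg_cover (u (widx T (n-1) h1)) (u (widx T n h2)) with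
      ⟨s1, s2⟩ | ⟨s1, s2⟩ | ⟨s1, s2⟩ | ⟨s1, s2⟩ | ⟨s1, s2⟩
    · obtain ⟨g1, g2, g3, g4, g5⟩ := sec1_eval s1 s2
      refine hface (n-1) n m1 m2 (mem_pentEdges.2 (Or.inl rfl)) ?_
      intro z hz
      obtain ⟨hzs, hzc⟩ := Finset.mem_inter.1 hz
      rcases mem_pentCyc.1 hzc with hzeq | hzeq | hzeq | hzeq | hzeq
      · rw [hzeq]; simp
      · rw [hzeq]; simp
      · rw [hzeq] at hzs
        exact absurd hzs (hfz (cv3 n) (by rw [wRaw_cv3 hn h1 h2]; exact g3))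
      · rw [hzeq] at hzs
        exact absurd hzs (hfz (cv4 n) (by rw [wRaw_cv4 hn h1 h2]; exact g4))
      · rw [hzeq] at hzs
        exact absurd hzs (hfz (cv5 n) (by rw [wRaw_cv5 hn h1 h2]; exact g5))
    · obtain ⟨g1, g2, g3, g4, g5⟩ := sec2_eval s1 s2
      refine hface n (2*n-1) m2 m3 (mem_pentEdges.2 (Or.inr (Or.inl rfl))) ?_
      intro z hz
      obtain ⟨hzs, hzc⟩ := Finset.mem_inter.1 hz
      rcases mem_pentCyc.1 hzc with hzeq | hzeq | hzeq | hzeq | hzeq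
      · rw [hzeq] at hzs
        exact absurd hzs (hfz (cv1 n) (by rw [wRaw_cv1 hn h1 h2]; exact g1))
      · rw [hzeq]; simp
      · rw [hzeq]; simp
      · rw [hzeq] at hzs
        exact absurd hzs (hfz (cv4 n) (by rw [wRaw_cv4 hn h1 h2]; exact g4))
      · rw [hzeq] at hzs
        exact absurd hzs (hfz (cv5 n) (by rw [wRaw_cv5 hn h1 h2]; exact g5))
    · obtain ⟨g1, g2, g3, g4, g5⟩ := sec3_eval s1 s2
      refine hface (2*n-1) (2*n) m3 m4 (mem_pentEdges.2 (Or.inr (Or.inr (Or.inl rfl)))) ?_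
      intro z hz
      obtain ⟨hzs, hzc⟩ := Finset.mem_inter.1 hz
      rcases mem_pentCyc.1 hzc with hzeq | hzeq | hzeq | hzeq | hzeq
      · rw [hzeq] at hzs
        exact absurd hzs (hfz (cv1 n) (by rw [wRaw_cv1 hn h1 h2]; exact g1))
      · rw [hzeq] at hzs
        exact absurd hzs (hfz (cv2 n) (by rw [wRaw_cv2 hn h1 h2]; exact g2))
      · rw [hzeq]; simp
      · rw [hzeq]; simp
      · rw [hzeq] at hzs
        exact absurd hzs (hfz (cv5 n) (by rw [wRaw_cv5 hn h1 h2]; exact g5))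
    · obtain ⟨g1, g2, g3, g4, g5⟩ := sec4_eval s1 s2
      refine hface (2*n) (2*n+1) m4 m5
        (mem_pentEdges.2 (Or.inr (Or.inr (Or.inr (Or.inl rfl))))) ?_
      intro z hz
      obtain ⟨hzs, hzc⟩ := Finset.mem_inter.1 hz
      rcases mem_pentCyc.1 hzc with hzeq | hzeq | hzeq | hzeq | hzeq
      · rw [hzeq] at hzs
        exact absurd hzs (hfz (cv1 n) (by rw [wRaw_cv1 hn h1 h2]; exact g1))
      · rw [hzeq] at hzs
        exact absurd hzs (hfz (cv2 n) (by rw [wRaw_cv2 hn h1 h2]; exact g2))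
      · rw [hzeq] at hzs
        exact absurd hzs (hfz (cv3 n) (by rw [wRaw_cv3 hn h1 h2]; exact g3))
      · rw [hzeq]; simp
      · rw [hzeq]; simp
    · obtain ⟨g1, g2, g3, g4, g5⟩ := sec5_eval s1 s2
      refine hface (2*n+1) (n-1) m5 m1
        (mem_pentEdges.2 (Or.inr (Or.inr (Or.inr (Or.inr rfl))))) ?_
      intro z hz
      obtain ⟨hzs, hzc⟩ := Finset.mem_inter.1 hz
      rcases mem_pentCyc.1 hzc with hzeq | hzeq | hzeq | hzeq | hzeq
      · rw [hzeq]; simp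
      · rw [hzeq] at hzs
        exact absurd hzs (hfz (cv2 n) (by rw [wRaw_cv2 hn h1 h2]; exact g2))
      · rw [hzeq] at hzs
        exact absurd hzs (hfz (cv3 n) (by rw [wRaw_cv3 hn h1 h2]; exact g3))
      · rw [hzeq] at hzs
        exact absurd hzs (hfz (cv4 n) (by rw [wRaw_cv4 hn h1 h2]; exact g4))
      · rw [hzeq]; simp
  · -- contained in chi'Supp
    intro j hj
    obtain ⟨hlt, hne⟩ := mem_fsupp.1 hj
    rw [mem_chi'Supp hn hT]
    by_cases e1 : j = n - 1
    · exact Or.inl (e1 ▸ h1)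
    by_cases e2 : j = n
    · exact Or.inl (e2 ▸ h2)
    by_cases e3 : j = 2*n - 1
    · exact Or.inr (Or.inl ⟨n - 1, h1, by omega⟩)
    by_cases e4 : j = 2*n
    · exact Or.inr (Or.inl ⟨n, h2, by omega⟩)
    by_cases e5 : j = 2*n + 1
    · exact Or.inr (Or.inr ⟨e5, hodd⟩)
    by_cases e6 : j ∈ T ∧ j ≤ n - 2
    · exact Or.inl e6.1
    by_cases e7 : n + 1 ≤ j ∧ j ≤ 2*n - 2 ∧ j - n ∈ T
    · exact Or.inr (Or.inl ⟨j - n, e7.2.2, by omega⟩)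
    · exact absurd (wRaw_other hn h1 h2 hT u (v := ⟨j, hlt⟩) e1 e2 e3 e4 e5 e6 e7) hne

/-- If the total mass vanishes, the vector vanishes. -/
lemma eq_zero_of_MM (hn : 3 ≤ n) (hT : T ⊆ Finset.Icc 1 n) (h1 : n - 1 ∈ T) (h2 : n ∈ T)
    (u : EuclideanSpace ℝ (Fin T.card)) (hM : MM n T h1 h2 u = 0) : u = 0 := by
  have hww : ∀ v, wRaw n T h1 h2 u v = 0 := fun v =>
    (Finset.sum_eq_zero_iff_of_nonneg (fun v _ => wRaw_nonneg h1 h2 u v)).1 hM v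
      (Finset.mem_univ v)
  have h0 : wRaw n T h1 h2 u = (fun _ => 0) := funext hww
  have := PhiMap_wRaw hn hT h1 h2 u
  rw [h0, PhiMap_zero] at this
  exact WithLp.ofLp_injective 2 this.symm

end OddFace

section OddCont

variable {n : ℕ} {T : Finset ℕ}

lemma pg1_cont : Continuous fun p : ℝ × ℝ => pg1 p.1 p.2 := by
  unfold pg1; fun_prop

lemma pg2_cont : Continuous fun p : ℝ × ℝ => pg2 p.1 p.2 := by
  unfold pg2; fun_prop

lemma pg3_cont : Continuous fun p : ℝ × ℝ => pg3 p.1 p.2 := by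
  unfold pg3; fun_prop

lemma pg4_cont : Continuous fun p : ℝ × ℝ => pg4 p.1 p.2 := by
  unfold pg4; fun_prop

lemma pg5_cont : Continuous fun p : ℝ × ℝ => pg5 p.1 p.2 := by
  unfold pg5; fun_prop

lemma wRaw_cont_coord (h1 : n - 1 ∈ T) (h2 : n ∈ T) (v : Fin (2*n+2)) :
    Continuous fun u : Fin T.card → ℝ => wRaw n T h1 h2 u v := by
  have hAB : Continuous fun u : Fin T.card → ℝ =>
      (u (widx T (n-1) h1), u (widx T n h2)) :=
    (continuous_apply (widx T (n-1) h1)).prodMk (continuous_apply (widx T n h2))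
  simp only [wRaw]
  split_ifs
  · exact pg1_cont.comp hAB
  · exact pg2_cont.comp hAB
  · exact pg3_cont.comp hAB
  · exact pg4_cont.comp hAB
  · exact pg5_cont.comp hAB
  · exact (continuous_apply _).max continuous_const
  · exact (continuous_apply _).neg.max continuous_const
  · exact continuous_const

lemma MM_cont (h1 : n - 1 ∈ T) (h2 : n ∈ T) :
    Continuous fun u : Fin T.card → ℝ => MM n T h1 h2 u := by
  simp only [MM]
  exact continuous_finset_sum _ fun v _ => wRaw_cont_coord h1 h2 v

lemma PhiMap_cont (hT : T ⊆ Finset.Icc 1 n) :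
    Continuous fun f : Fin (2*n+2) → ℝ => PhiMap n T hT f := by
  have hraw : Continuous fun f : Fin (2*n+2) → ℝ => (fun j => PhiMap n T hT f j :
      Fin T.card → ℝ) := by
    apply continuous_pi
    intro j
    simp only [PhiMap, PiLp.toLp_apply]
    split_ifs
    · unfold Y1; fun_prop
    · unfold Y2; fun_prop
    · exact (continuous_apply _).sub (continuous_apply _)
  exact (PiLp.continuousLinearEquiv 2 ℝ (fun _ : Fin T.card => ℝ)).symm.continuous.comp hraw

end OddCont


theorem odd_sphere_equiv {n : ℕ} {T : Finset ℕ} (hn : 3 ≤ n)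
    (hT : T ⊆ Finset.Icc 1 n) (h1 : n - 1 ∈ T) (h2 : n ∈ T) (hodd : ¬ Even T.card) :
    Nonempty (ContinuousMap.HomotopyEquiv
      (GeomReal (2 * n + 2) (fun t => pentFace n t ∧ t ⊆ chi'Supp n T))
      (Metric.sphere (0 : EuclideanSpace ℝ (Fin T.card)) 1)) := by
  set GR := GeomReal (2 * n + 2) (fun t => pentFace n t ∧ t ⊆ chi'Supp n T) with hGRdef
  have hKf : ∀ f : GR, GCond n T f.1 := fun f => f.2
  have hM1 : ∀ f : GR, MM n T h1 h2 (PhiMap n T hT f.1) = 1 := by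
    intro f
    rw [MM, wRaw_PhiMap hn hT h1 h2 (hKf f)]
    exact (hKf f).2.1
  have hMM0 : MM n T h1 h2 (0 : EuclideanSpace ℝ (Fin T.card)) = 0 := by
    have h00 : (fun j => (0:ℝ) * (0 : EuclideanSpace ℝ (Fin T.card)) j) =
        (0 : EuclideanSpace ℝ (Fin T.card)) := funext fun j => by simp
    rw [← h00, MM_smul h1 h2 le_rfl, zero_mul]
  have hPhine : ∀ f : GR, PhiMap n T hT f.1 ≠ 0 := by
    intro f h0
    have h := hM1 f
    rw [h0, hMM0] at h
    norm_num at h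
  have hnormpos : ∀ f : GR, 0 < ‖PhiMap n T hT f.1‖ := fun f =>
    norm_pos_iff.2 (hPhine f)
  have hMpos : ∀ u : EuclideanSpace ℝ (Fin T.card), u ≠ 0 → 0 < MM n T h1 h2 u := by
    intro u hu
    rcases lt_or_eq_of_le (MM_nonneg h1 h2 u) with h | h
    · exact h
    · exact absurd (eq_zero_of_MM hn hT h1 h2 u h.symm) hu
  have hPsiMem : ∀ u : EuclideanSpace ℝ (Fin T.card), u ≠ 0 →
      GCond n T (fun v => (MM n T h1 h2 u)⁻¹ * wRaw n T h1 h2 u v) := by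
    intro u hu
    have hM := hMpos u hu
    refine ⟨fun v => mul_nonneg (inv_nonneg.2 hM.le) (wRaw_nonneg h1 h2 u v), ?_, ?_⟩
    · rw [← Finset.mul_sum, ← MM]
      exact inv_mul_cancel₀ hM.ne'
    · have hsupp : fsupp (fun v => (MM n T h1 h2 u)⁻¹ * wRaw n T h1 h2 u v) =
          fsupp (wRaw n T h1 h2 u) := by
        ext j
        rw [mem_fsupp, mem_fsupp]
        constructor
        · rintro ⟨hlt, hne⟩
          exact ⟨hlt, fun h0 => hne (by rw [h0, mul_zero])⟩
        · rintro ⟨hlt, hne⟩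
          exact ⟨hlt, mul_ne_zero (inv_ne_zero hM.ne') hne⟩
      rw [hsupp]
      exact wRaw_Kp hn hT h1 h2 hodd u
  have hsne : ∀ u : Metric.sphere (0 : EuclideanSpace ℝ (Fin T.card)) 1,
      (u : EuclideanSpace ℝ (Fin T.card)) ≠ 0 := by
    intro u h0
    have := mem_sphere_zero_iff_norm.1 u.2
    rw [h0] at this
    simp at this
  -- the forward and backward maps
  refine ⟨Homeomorph.toHomotopyEquiv ⟨⟨
      fun f => ⟨‖PhiMap n T hT f.1‖⁻¹ • PhiMap n T hT f.1, by
        rw [mem_sphere_zero_iff_norm, norm_smul, norm_inv, norm_norm]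
        exact inv_mul_cancel₀ (hnormpos f).ne'⟩,
      fun u => ⟨fun v => (MM n T h1 h2 u.1)⁻¹ * wRaw n T h1 h2 u.1 v,
        hPsiMem u.1 (hsne u)⟩, ?_, ?_⟩, ?_, ?_⟩⟩
  · -- left inverse
    intro f
    apply Subtype.ext
    have hcpos := hnormpos f
    have hinv : (0:ℝ) ≤ ‖PhiMap n T hT f.1‖⁻¹ := inv_nonneg.2 hcpos.le
    have hfun : ((‖PhiMap n T hT f.1‖⁻¹ • PhiMap n T hT f.1 : EuclideanSpace ℝ (Fin T.card)) :
        Fin T.card → ℝ) = fun j => ‖PhiMap n T hT f.1‖⁻¹ * PhiMap n T hT f.1 j :=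
      funext fun j => by rw [PiLp.smul_apply, smul_eq_mul]
    have hsm : wRaw n T h1 h2 (‖PhiMap n T hT f.1‖⁻¹ • PhiMap n T hT f.1) =
        fun v => ‖PhiMap n T hT f.1‖⁻¹ * f.1 v := by
      rw [show wRaw n T h1 h2 (‖PhiMap n T hT f.1‖⁻¹ • PhiMap n T hT f.1) =
          wRaw n T h1 h2 (fun j => ‖PhiMap n T hT f.1‖⁻¹ * PhiMap n T hT f.1 j) from
          congrArg _ hfun,
        wRaw_smul h1 h2 hinv, wRaw_PhiMap hn hT h1 h2 (hKf f)]
    have hMM : MM n T h1 h2 (‖PhiMap n T hT f.1‖⁻¹ • PhiMap n T hT f.1) =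
        ‖PhiMap n T hT f.1‖⁻¹ := by
      rw [MM]
      simp only [hsm]
      rw [← Finset.mul_sum, (hKf f).2.1, mul_one]
    funext v
    show (MM n T h1 h2 (‖PhiMap n T hT f.1‖⁻¹ • PhiMap n T hT f.1))⁻¹ *
      wRaw n T h1 h2 (‖PhiMap n T hT f.1‖⁻¹ • PhiMap n T hT f.1) v = f.1 v
    rw [hMM]
    simp only [hsm]
    rw [inv_inv, ← mul_assoc, mul_inv_cancel₀ hcpos.ne', one_mul]
  · -- right inverse
    intro u
    apply Subtype.ext
    have hM := hMpos u.1 (hsne u)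
    have hg : PhiMap n T hT (fun v => (MM n T h1 h2 u.1)⁻¹ * wRaw n T h1 h2 u.1 v) =
        (MM n T h1 h2 u.1)⁻¹ • (u.1 : EuclideanSpace ℝ (Fin T.card)) := by
      rw [PhiMap_smul hT]; congr 1; exact WithLp.ofLp_injective 2 (PhiMap_wRaw hn hT h1 h2 _)
    show ‖PhiMap n T hT _‖⁻¹ • PhiMap n T hT _ = (u : EuclideanSpace ℝ (Fin T.card))
    rw [hg]
    have hnorm1 : ‖(u.1 : EuclideanSpace ℝ (Fin T.card))‖ = 1 :=
      mem_sphere_zero_iff_norm.1 u.2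
    rw [norm_smul, hnorm1, mul_one, norm_inv, Real.norm_eq_abs, abs_of_pos hM, inv_inv,
      smul_smul, mul_inv_cancel₀ hM.ne', one_smul]
  · -- continuity of the forward map
    have hPhiGR : Continuous fun f : GR => PhiMap n T hT f.1 :=
      (PhiMap_cont hT).comp continuous_subtype_val
    exact Continuous.subtype_mk
      (Continuous.smul ((hPhiGR.norm).inv₀ fun f => (hnormpos f).ne') hPhiGR) _
  · -- continuity of the inverse map
    have hval : Continuous fun u : Metric.sphere (0 : EuclideanSpace ℝ (Fin T.card)) 1 =>
        ((u : EuclideanSpace ℝ (Fin T.card)) : Fin T.card → ℝ) :=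
      (PiLp.continuousLinearEquiv 2 ℝ (fun _ : Fin T.card => ℝ)).continuous.comp
        continuous_subtype_val
    refine Continuous.subtype_mk ?_ _
    apply continuous_pi
    intro v
    exact (((MM_cont h1 h2).comp hval).inv₀ fun u => (hMpos u.1 (hsne u)).ne').mul
      ((wRaw_cont_coord h1 h2 v).comp hval)


/-- Let `n ≥ 3` and `T ⊆ {1,…,n}` with `{n−1, n} ⊆ T`. If `|T|` is odd,
the realization of the induced subcomplex `K'_{χ',T}` is homotopy equivalent to
`S^{|T|−1}`; if `|T|` is even, it is contractible. -/
theorem geomReal_pent_subcomplex_both (n : ℕ) (hn : 3 ≤ n) (T : Finset ℕ)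
    (hT : T ⊆ Finset.Icc 1 n) (h1 : n - 1 ∈ T) (h2 : n ∈ T) :
    (¬ Even T.card →
      Nonempty (ContinuousMap.HomotopyEquiv
        (GeomReal (2 * n + 2) (fun t => pentFace n t ∧ t ⊆ chi'Supp n T))
        (Metric.sphere (0 : EuclideanSpace ℝ (Fin T.card)) 1))) ∧
    (Even T.card →
      ContractibleSpace
        (GeomReal (2 * n + 2) (fun t => pentFace n t ∧ t ⊆ chi'Supp n T))) := by
  exact ⟨fun hodd => odd_sphere_equiv hn hT h1 h2 hodd,
    fun heven => even_contractible hn hT h1 h2 heven⟩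
end

section
/- Let n ≥ 3 and let T ⊆ {1,…,n} be nonempty with T ∩ {n−1, n} = ∅ (so T ⊆ {1,…,n−2}). If |T| is even, the geometric realization of the induced subcomplex K'_{χ',T} is homotopy equivalent to the sphere S^{|T|−1}. If |T| is odd, the geometric realization of K'_{χ',T} is contractible (it is a cone with apex the vertex 2n+1). -/
lemma mem_chi'Supp_iff {n : ℕ} {T : Finset ℕ} (hn : 3 ≤ n) (hT : T ⊆ Finset.Icc 1 (n-2)) (j : ℕ) :
    j ∈ chi'Supp n T ↔ j ∈ T ∨ (∃ i ∈ T, j = n + i) ∨ (j = 2*n+1 ∧ ¬ Even T.card) := by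
  have hTb : ∀ i ∈ T, 1 ≤ i ∧ i ≤ n - 2 := fun i hi => Finset.mem_Icc.mp (hT hi)
  rw [chi'Supp, Finset.mem_filter, Finset.mem_Icc]
  by_cases hj1 : j = 2*n+1
  · subst hj1
    have key : ∀ i ∈ T, chi'Entry n i (2*n+1) = 1 := by
      intro i hi; simp [chi'Entry]
    have hsum : (∑ i ∈ T, chi'Entry n i (2*n+1)) = (T.card : ZMod 2) := by
      rw [Finset.sum_congr rfl key, Finset.sum_const, nsmul_eq_mul, mul_one]
    rw [hsum]
    have h2 : ((T.card : ZMod 2) ≠ 0) ↔ ¬ Even T.card := by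
      rw [not_iff_not, ZMod.natCast_eq_zero_iff_even]
    constructor
    · rintro ⟨-, hc⟩
      exact Or.inr (Or.inr ⟨rfl, h2.mp hc⟩)
    · rintro (h | ⟨i, hi, h⟩ | ⟨-, h⟩)
      · exact absurd (hTb _ h).2 (by omega)
      · have := (hTb _ hi).2; omega
      · exact ⟨by omega, h2.mpr h⟩
  · by_cases hj2 : j ≤ n
    · have key : ∀ i ∈ T, chi'Entry n i j = if j = i then 1 else 0 := by
        intro i hi
        have := hTb _ hi
        simp only [chi'Entry]
        by_cases h : j = i
        · rw [if_pos (Or.inl h), if_pos h]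
        · rw [if_neg, if_neg h]; push_neg; exact ⟨h, by omega, by omega⟩
      have hsum : (∑ i ∈ T, chi'Entry n i j) = if j ∈ T then 1 else 0 := by
        rw [Finset.sum_congr rfl key, Finset.sum_ite_eq]
      rw [hsum]
      by_cases hjT : j ∈ T
      · simp only [if_pos hjT]
        have := hTb _ hjT
        exact ⟨fun _ => Or.inl hjT, fun _ => ⟨⟨by omega, by omega⟩, one_ne_zero⟩⟩
      · simp only [if_neg hjT, ne_eq, not_true_eq_false, and_false, false_iff]
        rintro (h | ⟨i, hi, h⟩ | ⟨h, -⟩)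
        · exact hjT h
        · obtain ⟨hi1, hi2⟩ := hTb _ hi; omega
        · omega
    · have key : ∀ i ∈ T, chi'Entry n i j = if j - n = i then 1 else 0 := by
        intro i hi
        have := hTb _ hi
        simp only [chi'Entry]
        by_cases h : j - n = i
        · rw [if_pos (Or.inr (Or.inl (by omega))), if_pos h]
        · rw [if_neg, if_neg h]; push_neg; exact ⟨by omega, by omega, hj1⟩
      have hsum : (∑ i ∈ T, chi'Entry n i j) = if j - n ∈ T then 1 else 0 := by
        rw [Finset.sum_congr rfl key, Finset.sum_ite_eq]
      rw [hsum]
      by_cases hjT : j - n ∈ T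
      · simp only [if_pos hjT]
        have := hTb _ hjT
        refine ⟨fun _ => Or.inr (Or.inl ⟨j - n, hjT, by omega⟩),
          fun _ => ⟨⟨by omega, by omega⟩, one_ne_zero⟩⟩
      · simp only [if_neg hjT, ne_eq, not_true_eq_false, and_false, false_iff]
        rintro (h | ⟨i, hi, h⟩ | ⟨h, -⟩)
        · have := (hTb _ h).2; omega
        · have := (hTb _ hi).2
          have hji : j - n = i := by omega
          exact hjT (hji ▸ hi)
        · omega

lemma face_of_sub {n : ℕ} {T : Finset ℕ} (hn : 3 ≤ n) (hT : T ⊆ Finset.Icc 1 (n-2))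
    (s : Finset ℕ) (hs : s ⊆ chi'Supp n T)
    (hanti : ∀ i ∈ Finset.Icc 1 (n-2), ¬(i ∈ s ∧ n + i ∈ s)) :
    pentFace n s ∧ s ⊆ chi'Supp n T := by
  refine ⟨⟨fun j hj => (Finset.mem_filter.mp (hs hj)).1, hanti, ?_⟩, hs⟩
  have hsub : s ∩ pentCyc n ⊆ {2*n+1} := by
    intro j hj
    obtain ⟨hjs, hjc⟩ := Finset.mem_inter.mp hj
    have hj' := (mem_chi'Supp_iff hn hT j).mp (hs hjs)
    simp only [pentCyc, Finset.mem_insert, Finset.mem_singleton] at hjc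
    rw [Finset.mem_singleton]
    rcases hj' with h | ⟨i, hi, h⟩ | ⟨h, -⟩
    · have := Finset.mem_Icc.mp (hT h); omega
    · have := Finset.mem_Icc.mp (hT hi); omega
    · exact h
  rcases Finset.subset_singleton_iff.mp hsub with h | h
  · exact Or.inl h
  · exact Or.inr (Or.inl ⟨2*n+1, by simp [pentCyc], h⟩)

lemma odd_contractible {n : ℕ} {T : Finset ℕ} (hn : 3 ≤ n) (hT : T ⊆ Finset.Icc 1 (n-2))
    (hodd : ¬ Even T.card) :
    ContractibleSpace (GeomReal (2*n+2) (fun t => pentFace n t ∧ t ⊆ chi'Supp n T)) := by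
  set P : Finset ℕ → Prop := fun t => pentFace n t ∧ t ⊆ chi'Supp n T with hP
  set a : Fin (2*n+2) := ⟨2*n+1, by omega⟩ with ha
  have hamem : (2*n+1) ∈ chi'Supp n T :=
    (mem_chi'Supp_iff hn hT _).mpr (Or.inr (Or.inr ⟨rfl, hodd⟩))
  -- membership helper
  have hmem : ∀ (t : ℝ) (f : Fin (2*n+2) → ℝ), 0 ≤ t → t ≤ 1 →
      ((∀ v, 0 ≤ f v) ∧ (∑ v, f v = 1) ∧
        P ((Finset.univ.filter (fun v => f v ≠ 0)).image Fin.val)) →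
      (∀ v, 0 ≤ (1-t) * f v + t * (if v = a then 1 else 0)) ∧
      (∑ v, ((1-t) * f v + t * (if v = a then 1 else 0)) = 1) ∧
      P ((Finset.univ.filter
        (fun v => (1-t) * f v + t * (if v = a then 1 else 0) ≠ 0)).image Fin.val) := by
    intro t f ht0 ht1 ⟨hf0, hf1, hfP⟩
    have hnn : ∀ v, 0 ≤ (1-t) * f v + t * (if v = a then 1 else 0) := by
      intro v
      have : (0:ℝ) ≤ if v = a then 1 else 0 := by positivity
      have := hf0 v
      nlinarith
    refine ⟨hnn, ?_, ?_⟩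
    · rw [Finset.sum_add_distrib, ← Finset.mul_sum, ← Finset.mul_sum, hf1,
        Finset.sum_ite_eq' Finset.univ a (fun _ => (1:ℝ)), if_pos (Finset.mem_univ a)]
      ring
    · apply face_of_sub hn hT
      · -- subset of chi'Supp
        intro j hj
        simp only [Finset.mem_image, Finset.mem_filter, Finset.mem_univ, true_and] at hj
        obtain ⟨v, hv, rfl⟩ := hj
        by_cases hva : v = a
        · subst hva; exact hamem
        · have hfv : f v ≠ 0 := by
            intro h0
            apply hv
            rw [h0, if_neg hva]; ring
          have : (v : ℕ) ∈ chi'Supp n T := by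
            apply hfP.2
            exact Finset.mem_image.mpr ⟨v, Finset.mem_filter.mpr ⟨Finset.mem_univ v, hfv⟩, rfl⟩
          exact this
      · -- antipodal
        intro i hi ⟨hi1, hi2⟩
        have hiIcc := Finset.mem_Icc.mp hi
        simp only [Finset.mem_image, Finset.mem_filter, Finset.mem_univ, true_and] at hi1 hi2
        obtain ⟨v, hv, hvv⟩ := hi1
        obtain ⟨w, hw, hww⟩ := hi2
        have hva : v ≠ a := by
          intro h; rw [h] at hvv; simp [ha] at hvv; omega
        have hwa : w ≠ a := by
          intro h; rw [h] at hww; simp [ha] at hww; omega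
        have hfv : f v ≠ 0 := by
          intro h0; apply hv; rw [h0, if_neg hva]; ring
        have hfw : f w ≠ 0 := by
          intro h0; apply hw; rw [h0, if_neg hwa]; ring
        refine hfP.1.2.1 i hi ⟨?_, ?_⟩
        · exact Finset.mem_image.mpr ⟨v, Finset.mem_filter.mpr ⟨Finset.mem_univ v, hfv⟩, hvv⟩
        · exact Finset.mem_image.mpr ⟨w, Finset.mem_filter.mpr ⟨Finset.mem_univ w, hfw⟩, hww⟩
  -- the apex point
  have hx₀mem : (∀ v, 0 ≤ (fun v => if v = a then (1:ℝ) else 0) v) ∧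
      (∑ v, (if v = a then (1:ℝ) else 0) = 1) ∧
      P ((Finset.univ.filter
        (fun v => (if v = a then (1:ℝ) else 0) ≠ 0)).image Fin.val) := by
    refine ⟨fun v => by positivity, ?_, ?_⟩
    · rw [Finset.sum_ite_eq' Finset.univ a (fun _ => (1:ℝ)), if_pos (Finset.mem_univ a)]
    · apply face_of_sub hn hT
      · intro j hj
        simp only [Finset.mem_image, Finset.mem_filter, Finset.mem_univ, true_and] at hj
        obtain ⟨v, hv, rfl⟩ := hj
        have : v = a := by by_contra h; exact hv (by rw [if_neg h])
        subst this; exact hamem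
      · intro i hi ⟨hi1, hi2⟩
        have hiIcc := Finset.mem_Icc.mp hi
        simp only [Finset.mem_image, Finset.mem_filter, Finset.mem_univ, true_and] at hi1 hi2
        obtain ⟨v, hv, hvv⟩ := hi1
        have : v = a := by by_contra h; exact hv (by rw [if_neg h])
        subst this
        simp [ha] at hvv
        omega
  set x₀ : GeomReal (2*n+2) P := ⟨fun v => if v = a then (1:ℝ) else 0, hx₀mem⟩ with hx₀
  rw [contractible_iff_id_nullhomotopic]
  refine ⟨x₀, ⟨⟨⟨fun p => ⟨fun v => (1 - (p.1 : ℝ)) * (p.2 : Fin (2*n+2) → ℝ) v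
      + (p.1 : ℝ) * (if v = a then 1 else 0),
      hmem p.1 _ p.1.2.1 p.1.2.2 p.2.2⟩, ?_⟩, ?_, ?_⟩⟩⟩
  · -- continuity
    apply Continuous.subtype_mk
    apply continuous_pi
    intro v
    have h1 : Continuous (fun p : unitInterval × GeomReal (2*n+2) P => (p.1 : ℝ)) :=
      continuous_subtype_val.comp continuous_fst
    have h2 : Continuous (fun p : unitInterval × GeomReal (2*n+2) P =>
        (p.2 : Fin (2*n+2) → ℝ) v) :=
      (continuous_apply v).comp (continuous_subtype_val.comp continuous_snd)
    exact ((continuous_const.sub h1).mul h2).add (h1.mul continuous_const)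
  · intro f
    apply Subtype.ext
    funext v
    simp
  · intro f
    apply Subtype.ext
    funext v
    simp [hx₀]

lemma max_add_max_neg (a : ℝ) : max a 0 + max (-a) 0 = |a| := by
  rcases le_total 0 a with h | h
  · rw [max_eq_left h, max_eq_right (by linarith), abs_of_nonneg h, add_zero]
  · rw [max_eq_right h, max_eq_left (by linarith), abs_of_nonpos h, zero_add]

lemma max_mul_zero' (c a : ℝ) (hc : 0 ≤ c) : max (c * a) 0 = c * max a 0 := by
  rcases le_total 0 a with h | h
  · rw [max_eq_left (mul_nonneg hc h), max_eq_left h]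
  · rw [max_eq_right (mul_nonpos_of_nonneg_of_nonpos hc h), max_eq_right h, mul_zero]

lemma even_case {n k : ℕ} {T : Finset ℕ} (hn : 3 ≤ n) (hT : T ⊆ Finset.Icc 1 (n-2))
    (heven : Even T.card)
    (σ : Fin k → ℕ) (hσT : ∀ i, σ i ∈ T) (hσinj : Function.Injective σ)
    (hσsurj : ∀ j ∈ T, ∃ i, σ i = j) :
    Nonempty (ContinuousMap.HomotopyEquiv
      (GeomReal (2*n+2) (fun t => pentFace n t ∧ t ⊆ chi'Supp n T))
      (Metric.sphere (0 : EuclideanSpace ℝ (Fin k)) 1)) := by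
  set P : Finset ℕ → Prop := fun t => pentFace n t ∧ t ⊆ chi'Supp n T with hP
  set X := GeomReal (2*n+2) P with hX
  have hb : ∀ i, 1 ≤ σ i ∧ σ i ≤ n - 2 := fun i => Finset.mem_Icc.mp (hT (hσT i))
  obtain ⟨vA, hvA⟩ : ∃ vA : Fin k → Fin (2*n+2), ∀ i, (vA i : ℕ) = σ i :=
    ⟨fun i => ⟨σ i, by have := (hb i).2; omega⟩, fun i => rfl⟩
  obtain ⟨vB, hvB⟩ : ∃ vB : Fin k → Fin (2*n+2), ∀ i, (vB i : ℕ) = n + σ i :=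
    ⟨fun i => ⟨n + σ i, by have := (hb i).2; omega⟩, fun i => rfl⟩
  have hvAinj : Function.Injective vA := fun i j h => by
    apply hσinj; rw [← hvA, ← hvA, h]
  have hvBinj : Function.Injective vB := fun i j h => by
    apply hσinj
    have : n + σ i = n + σ j := by rw [← hvB, ← hvB, h]
    omega
  have hvAB : ∀ i j, vA i ≠ vB j := by
    intro i j h
    have := congrArg Fin.val h
    rw [hvA, hvB] at this
    have h1 := (hb i).2; have h2 := (hb j).1
    omega
  -- support characterization
  have hsupp : ∀ (f : Fin (2*n+2) → ℝ),
      ((∀ v, 0 ≤ f v) ∧ (∑ v, f v = 1) ∧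
        P ((Finset.univ.filter (fun v => f v ≠ 0)).image Fin.val)) →
      ∀ v : Fin (2*n+2), f v ≠ 0 → (∃ i, v = vA i) ∨ (∃ i, v = vB i) := by
    intro f hf v hv
    have hmem : (v : ℕ) ∈ chi'Supp n T :=
      hf.2.2.2 (Finset.mem_image.mpr ⟨v, Finset.mem_filter.mpr ⟨Finset.mem_univ v, hv⟩, rfl⟩)
    rcases (mem_chi'Supp_iff hn hT _).mp hmem with h | ⟨i, hi, h⟩ | ⟨-, h⟩
    · obtain ⟨i, hi⟩ := hσsurj _ h
      exact Or.inl ⟨i, Fin.val_injective (by rw [hvA, hi])⟩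
    · obtain ⟨i', hi'⟩ := hσsurj _ hi
      exact Or.inr ⟨i', Fin.val_injective (by rw [hvB, hi', h])⟩
    · exact absurd heven h
  -- at most one of f (vA i), f (vB i) nonzero
  have hnotboth : ∀ (f : Fin (2*n+2) → ℝ),
      ((∀ v, 0 ≤ f v) ∧ (∑ v, f v = 1) ∧
        P ((Finset.univ.filter (fun v => f v ≠ 0)).image Fin.val)) →
      ∀ i, f (vA i) = 0 ∨ f (vB i) = 0 := by
    intro f hf i
    by_contra h
    push_neg at h
    refine hf.2.2.1.2.1 (σ i) (Finset.mem_Icc.mpr (hb i)) ⟨?_, ?_⟩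
    · exact Finset.mem_image.mpr ⟨vA i,
        Finset.mem_filter.mpr ⟨Finset.mem_univ _, h.1⟩, hvA i⟩
    · exact Finset.mem_image.mpr ⟨vB i,
        Finset.mem_filter.mpr ⟨Finset.mem_univ _, h.2⟩, hvB i⟩
  -- the linear map to R^k
  set G : (Fin (2*n+2) → ℝ) → EuclideanSpace ℝ (Fin k) :=
    fun f => (WithLp.equiv 2 (Fin k → ℝ)).symm (fun i => f (vA i) - f (vB i)) with hG
  have hGapp : ∀ f i, G f i = f (vA i) - f (vB i) := fun f i => rfl
  have hGcont : Continuous G := by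
    apply (PiLp.continuous_toLp 2 (fun _ : Fin k => ℝ)).comp
    exact continuous_pi fun i => (continuous_apply (vA i)).sub (continuous_apply (vB i))
  have habs : ∀ (f : Fin (2*n+2) → ℝ),
      ((∀ v, 0 ≤ f v) ∧ (∑ v, f v = 1) ∧
        P ((Finset.univ.filter (fun v => f v ≠ 0)).image Fin.val)) →
      ∀ i, |G f i| = f (vA i) + f (vB i) := by
    intro f hf i
    rw [hGapp]
    rcases hnotboth f hf i with h | h
    · rw [h, zero_sub, abs_neg, abs_of_nonneg (hf.1 _), zero_add]
    · rw [h, sub_zero, abs_of_nonneg (hf.1 _), add_zero]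
  have hl1 : ∀ (f : Fin (2*n+2) → ℝ),
      ((∀ v, 0 ≤ f v) ∧ (∑ v, f v = 1) ∧
        P ((Finset.univ.filter (fun v => f v ≠ 0)).image Fin.val)) →
      ∑ i, |G f i| = 1 := by
    intro f hf
    have h1 : ∑ i, |G f i| = ∑ i, (f (vA i) + f (vB i)) :=
      Finset.sum_congr rfl fun i _ => habs f hf i
    set A : Finset (Fin (2*n+2)) := Finset.univ.image vA with hA
    set B : Finset (Fin (2*n+2)) := Finset.univ.image vB with hB
    have hdisj : Disjoint A B := by
      rw [Finset.disjoint_left]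
      intro v hv hv'
      obtain ⟨i, -, rfl⟩ := Finset.mem_image.mp hv
      obtain ⟨j, -, hj⟩ := Finset.mem_image.mp hv'
      exact hvAB i j hj.symm
    have h2 : ∑ v ∈ A, f v = ∑ i, f (vA i) :=
      Finset.sum_image fun i _ j _ h => hvAinj h
    have h3 : ∑ v ∈ B, f v = ∑ i, f (vB i) :=
      Finset.sum_image fun i _ j _ h => hvBinj h
    have h4 : ∑ v ∈ A ∪ B, f v = ∑ v, f v := by
      apply Finset.sum_subset (Finset.subset_univ _)
      intro v _ hv
      by_contra h0
      rcases hsupp f hf v h0 with ⟨i, rfl⟩ | ⟨i, rfl⟩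
      · exact hv (Finset.mem_union_left _ (Finset.mem_image.mpr ⟨i, Finset.mem_univ i, rfl⟩))
      · exact hv (Finset.mem_union_right _ (Finset.mem_image.mpr ⟨i, Finset.mem_univ i, rfl⟩))
    rw [h1, Finset.sum_add_distrib, ← h2, ← h3, ← Finset.sum_union hdisj, h4, hf.2.1]
  have hGne : ∀ (f : Fin (2*n+2) → ℝ),
      ((∀ v, 0 ≤ f v) ∧ (∑ v, f v = 1) ∧
        P ((Finset.univ.filter (fun v => f v ≠ 0)).image Fin.val)) →
      G f ≠ 0 := by
    intro f hf h0
    have : ∑ i, |G f i| = 0 := by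
      rw [h0]
      apply Finset.sum_eq_zero
      intro i _
      simp
    rw [hl1 f hf] at this
    norm_num at this
  -- the forward map
  have hΦmem : ∀ f : X, ‖G f.val‖⁻¹ • G f.val ∈ Metric.sphere (0 : EuclideanSpace ℝ (Fin k)) 1 := by
    intro f
    have hne : ‖G f.val‖ ≠ 0 := norm_ne_zero_iff.mpr (hGne f.val f.2)
    rw [mem_sphere_zero_iff_norm, norm_smul, norm_inv, norm_norm, inv_mul_cancel₀ hne]
  set Φ : X → Metric.sphere (0 : EuclideanSpace ℝ (Fin k)) 1 :=
    fun f => ⟨‖G f.val‖⁻¹ • G f.val, hΦmem f⟩ with hΦ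
  have hΦcont : Continuous Φ := by
    apply Continuous.subtype_mk
    have h1 : Continuous (fun f : X => G f.val) := hGcont.comp continuous_subtype_val
    exact ((continuous_norm.comp h1).inv₀
      (fun f => norm_ne_zero_iff.mpr (hGne f.val f.2))).smul h1
  -- the inverse map (raw)
  set S : EuclideanSpace ℝ (Fin k) → ℝ := fun x => ∑ j, |x j| with hS
  set Ψ : EuclideanSpace ℝ (Fin k) → (Fin (2*n+2) → ℝ) := fun x v =>
    (S x)⁻¹ * (∑ i, (max (x i) 0 * (if v = vA i then 1 else 0)
      + max (-(x i)) 0 * (if v = vB i then 1 else 0))) with hΨdef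
  have hΨA : ∀ x i0, Ψ x (vA i0) = (S x)⁻¹ * max (x i0) 0 := by
    intro x i0
    rw [hΨdef]
    beta_reduce
    congr 1
    rw [Finset.sum_eq_single i0]
    · rw [if_pos rfl, if_neg (hvAB i0 i0), mul_one, mul_zero, add_zero]
    · intro j _ hj
      rw [if_neg (fun h => hj (hvAinj h).symm), if_neg (hvAB i0 j), mul_zero, mul_zero, add_zero]
    · intro h; exact absurd (Finset.mem_univ i0) h
  have hΨB : ∀ x i0, Ψ x (vB i0) = (S x)⁻¹ * max (-(x i0)) 0 := by
    intro x i0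
    rw [hΨdef]
    beta_reduce
    congr 1
    rw [Finset.sum_eq_single i0]
    · rw [if_pos rfl, if_neg (fun h => hvAB i0 i0 h.symm), mul_one, mul_zero, zero_add]
    · intro j _ hj
      rw [if_neg (fun h => hvAB j i0 h.symm), if_neg (fun h => hj (hvBinj h).symm),
        mul_zero, mul_zero, add_zero]
    · intro h; exact absurd (Finset.mem_univ i0) h
  have hΨ0 : ∀ x v, (∀ i, v ≠ vA i ∧ v ≠ vB i) → Ψ x v = 0 := by
    intro x v hv
    rw [hΨdef]
    simp only []
    rw [Finset.sum_eq_zero, mul_zero]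
    intro i _
    rw [if_neg (hv i).1, if_neg (hv i).2, mul_zero, mul_zero, add_zero]
  -- facts about S on the sphere
  have hSpos : ∀ x : EuclideanSpace ℝ (Fin k), ‖x‖ = 1 → 0 < S x := by
    intro x hx
    rcases (Finset.sum_nonneg (fun j _ => abs_nonneg (x j))).lt_or_eq with h | h
    · exact h
    · exfalso
      have hx0 : x = 0 := by
        ext j
        have := (Finset.sum_eq_zero_iff_of_nonneg (fun j _ => abs_nonneg (x j))).mp h.symm
          j (Finset.mem_univ j)
        simpa using abs_eq_zero.mp this
      rw [hx0, norm_zero] at hx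
      norm_num at hx
  -- membership of Ψ x in X
  have hΨmem : ∀ x : EuclideanSpace ℝ (Fin k), ‖x‖ = 1 →
      ((∀ v, 0 ≤ Ψ x v) ∧ (∑ v, Ψ x v = 1) ∧
        P ((Finset.univ.filter (fun v => Ψ x v ≠ 0)).image Fin.val)) := by
    intro x hx
    have hSx := hSpos x hx
    refine ⟨?_, ?_, ?_⟩
    · intro v
      rw [hΨdef]
      apply mul_nonneg (inv_nonneg.mpr hSx.le)
      apply Finset.sum_nonneg
      intro i _
      apply add_nonneg
      · exact mul_nonneg (le_max_right _ _) (by positivity)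
      · exact mul_nonneg (le_max_right _ _) (by positivity)
    · rw [hΨdef]
      simp only []
      rw [← Finset.mul_sum, Finset.sum_comm]
      have : ∀ i : Fin k, ∑ v : Fin (2*n+2), (max (x i) 0 * (if v = vA i then 1 else 0)
          + max (-(x i)) 0 * (if v = vB i then 1 else 0)) = |x i| := by
        intro i
        rw [Finset.sum_add_distrib, ← Finset.mul_sum, ← Finset.mul_sum,
          Finset.sum_ite_eq' Finset.univ (vA i) (fun _ => (1:ℝ)),
          Finset.sum_ite_eq' Finset.univ (vB i) (fun _ => (1:ℝ)),
          if_pos (Finset.mem_univ _), if_pos (Finset.mem_univ _), mul_one, mul_one,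
          max_add_max_neg]
      rw [Finset.sum_congr rfl (fun i _ => this i)]
      exact inv_mul_cancel₀ hSx.ne'
    · apply face_of_sub hn hT
      · intro j hj
        simp only [Finset.mem_image, Finset.mem_filter, Finset.mem_univ, true_and] at hj
        obtain ⟨v, hv, rfl⟩ := hj
        have : ¬ (∀ i, v ≠ vA i ∧ v ≠ vB i) := fun h => hv (hΨ0 x v h)
        push_neg at this
        obtain ⟨i, hi⟩ := this
        rw [mem_chi'Supp_iff hn hT]
        by_cases h : v = vA i
        · subst h
          exact Or.inl (by rw [hvA]; exact hσT i)
        · have h' := hi h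
          subst h'
          exact Or.inr (Or.inl ⟨σ i, hσT i, hvB i⟩)
      · rintro i hi ⟨hi1, hi2⟩
        have hiIcc := Finset.mem_Icc.mp hi
        simp only [Finset.mem_image, Finset.mem_filter, Finset.mem_univ, true_and] at hi1 hi2
        obtain ⟨v, hv, hvv⟩ := hi1
        obtain ⟨w, hw, hww⟩ := hi2
        have h1 : ¬ (∀ j, v ≠ vA j ∧ v ≠ vB j) := fun h => hv (hΨ0 x v h)
        have h2 : ¬ (∀ j, w ≠ vA j ∧ w ≠ vB j) := fun h => hw (hΨ0 x w h)
        push_neg at h1 h2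
        obtain ⟨i', hi'⟩ := h1
        obtain ⟨j', hj'⟩ := h2
        -- v must be vA i'
        have hv' : v = vA i' ∧ σ i' = i := by
          by_cases h : v = vA i'
          · subst h
            rw [hvA] at hvv
            exact ⟨rfl, hvv⟩
          · have h' := hi' h
            subst h'
            rw [hvB] at hvv
            exfalso
            have := (hb i').1
            omega
        have hw' : w = vB j' ∧ σ j' = i := by
          by_cases h : w = vA j'
          · subst h
            rw [hvA] at hww
            exfalso
            have := (hb j').2
            omega
          · have h' := hj' h
            subst h'
            rw [hvB] at hww
            exact ⟨rfl, by omega⟩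
        have hij : i' = j' := hσinj (by rw [hv'.2, hw'.2])
        rw [hv'.1, hΨA] at hv
        rw [hw'.1, hΨB] at hw
        have hxpos : 0 < x i' := by
          rcases le_or_gt (x i') 0 with h | h
          · exact absurd (by rw [max_eq_right h, mul_zero]) hv
          · exact h
        have hxneg : x j' < 0 := by
          rcases le_or_gt 0 (x j') with h | h
          · exact absurd (by rw [max_eq_right (by linarith), mul_zero]) hw
          · exact h
        rw [hij] at hxpos
        linarith
  -- the inverse map
  set ψ : Metric.sphere (0 : EuclideanSpace ℝ (Fin k)) 1 → X :=
    fun x => ⟨Ψ x.val, hΨmem x.val (mem_sphere_zero_iff_norm.mp x.2)⟩ with hψ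
  have hψcont : Continuous ψ := by
    apply Continuous.subtype_mk
    apply continuous_pi
    intro v
    have hcoord : ∀ j : Fin k, Continuous
        (fun x : Metric.sphere (0 : EuclideanSpace ℝ (Fin k)) 1 => (x.val : Fin k → ℝ) j) :=
      fun j => ((continuous_apply j).comp
        (PiLp.continuous_ofLp 2 (fun _ : Fin k => ℝ))).comp continuous_subtype_val
    have hScont : Continuous
        (fun x : Metric.sphere (0 : EuclideanSpace ℝ (Fin k)) 1 => S x.val) := by
      exact continuous_finset_sum _ fun j _ => (hcoord j).abs
    refine (hScont.inv₀ ?_).mul ?_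
    · intro x
      exact (hSpos x.val (mem_sphere_zero_iff_norm.mp x.2)).ne'
    · exact continuous_finset_sum _ fun i _ =>
        (((hcoord i).max continuous_const).mul continuous_const).add
          (((hcoord i).neg.max continuous_const).mul continuous_const)
  -- Phi after psi is the identity
  have hΦψ : ∀ x, Φ (ψ x) = x := by
    intro x
    have hx1 : ‖x.val‖ = 1 := mem_sphere_zero_iff_norm.mp x.2
    have hSx := hSpos x.val hx1
    apply Subtype.ext
    have hGΨ : G (Ψ x.val) = (S x.val)⁻¹ • x.val := by
      ext i
      rw [hGapp, hΨA, hΨB, PiLp.smul_apply, smul_eq_mul, ← mul_sub, max_sub_max_neg]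
    show ‖G (Ψ x.val)‖⁻¹ • G (Ψ x.val) = x.val
    rw [hGΨ, norm_smul, Real.norm_eq_abs, abs_inv, abs_of_pos hSx, hx1, mul_one,
      inv_inv, smul_smul, mul_inv_cancel₀ hSx.ne', one_smul]
  -- psi after Phi is the identity
  have hψΦ : ∀ f : X, ψ (Φ f) = f := by
    intro f
    have hf := f.2
    have hGn : (0:ℝ) < ‖G f.val‖ := norm_pos_iff.mpr (hGne f.val hf)
    set c : ℝ := ‖G f.val‖⁻¹ with hc
    have hcpos : 0 < c := inv_pos.mpr hGn
    have hcoord : ∀ i, ((Φ f).val : EuclideanSpace ℝ (Fin k)) i = c * G f.val i := by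
      intro i; show (c • G f.val) i = _; rw [PiLp.smul_apply, smul_eq_mul]
    have hSc : S (Φ f).val = c := by
      show ∑ j, |(Φ f).val j| = c
      rw [Finset.sum_congr rfl (fun j _ => by rw [hcoord, abs_mul, abs_of_pos hcpos]),
        ← Finset.mul_sum, hl1 f.val hf, mul_one]
    have hmaxA : ∀ i, max (G f.val i) 0 = f.val (vA i) := by
      intro i
      rw [hGapp]
      rcases hnotboth f.val hf i with h | h
      · rw [h, zero_sub, max_eq_right (neg_nonpos.mpr (hf.1 _))]
      · rw [h, sub_zero, max_eq_left (hf.1 _)]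
    have hmaxB : ∀ i, max (-(G f.val i)) 0 = f.val (vB i) := by
      intro i
      rw [hGapp]
      rcases hnotboth f.val hf i with h | h
      · rw [h, zero_sub, neg_neg, max_eq_left (hf.1 _)]
      · rw [h, sub_zero, max_eq_right (neg_nonpos.mpr (hf.1 _))]
    apply Subtype.ext
    funext v
    show Ψ (Φ f).val v = f.val v
    by_cases hA : ∃ i, v = vA i
    · obtain ⟨i, rfl⟩ := hA
      rw [hΨA, hSc, hcoord, max_mul_zero' c _ hcpos.le, inv_mul_cancel_left₀ hcpos.ne',
        hmaxA]
    · by_cases hB : ∃ i, v = vB i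
      · obtain ⟨i, rfl⟩ := hB
        rw [hΨB, hSc, hcoord, ← mul_neg, max_mul_zero' c _ hcpos.le,
          inv_mul_cancel_left₀ hcpos.ne', hmaxB]
      · push_neg at hA hB
        rw [hΨ0 _ v (fun i => ⟨hA i, hB i⟩)]
        by_contra h0
        rcases hsupp f.val hf v (fun h => h0 h.symm) with ⟨i, hi⟩ | ⟨i, hi⟩
        · exact hA i hi
        · exact hB i hi
  -- assemble the homotopy equivalence
  refine ⟨⟨⟨Φ, hΦcont⟩, ⟨ψ, hψcont⟩, ?_, ?_⟩⟩
  · have heq : (⟨ψ, hψcont⟩ : C(_, X)).comp ⟨Φ, hΦcont⟩ = ContinuousMap.id X :=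
      ContinuousMap.ext hψΦ
    rw [heq]
  · have heq : (⟨Φ, hΦcont⟩ : C(X, _)).comp ⟨ψ, hψcont⟩ = ContinuousMap.id _ :=
      ContinuousMap.ext hΦψ
    rw [heq]

/-- Let `n ≥ 3` and let `T ⊆ {1,…,n}` be nonempty with
`T ∩ {n−1, n} = ∅` (so `T ⊆ {1,…,n−2}`). If `|T|` is even, the realization of the induced
subcomplex `K'_{χ',T}` is homotopy equivalent to `S^{|T|−1}`; if `|T|` is odd, it is
contractible. -/
theorem geomReal_pent_subcomplex_neither (n : ℕ) (hn : 3 ≤ n) (T : Finset ℕ)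
    (hT : T ⊆ Finset.Icc 1 n) (hne : T.Nonempty) (h1 : n - 1 ∉ T) (h2 : n ∉ T) :
    (Even T.card →
      Nonempty (ContinuousMap.HomotopyEquiv
        (GeomReal (2 * n + 2) (fun t => pentFace n t ∧ t ⊆ chi'Supp n T))
        (Metric.sphere (0 : EuclideanSpace ℝ (Fin T.card)) 1))) ∧
    (¬ Even T.card →
      ContractibleSpace
        (GeomReal (2 * n + 2) (fun t => pentFace n t ∧ t ⊆ chi'Supp n T))) := by
  have hT' : T ⊆ Finset.Icc 1 (n-2) := by
    intro i hi
    have hi' := Finset.mem_Icc.mp (hT hi)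
    have hne1 : i ≠ n - 1 := fun h => h1 (h ▸ hi)
    have hne2 : i ≠ n := fun h => h2 (h ▸ hi)
    rw [Finset.mem_Icc]
    omega
  refine ⟨fun he => even_case hn hT' he (T.orderEmbOfFin rfl) ?_ ?_ ?_,
    fun ho => odd_contractible hn hT' ho⟩
  · exact fun i => T.orderEmbOfFin_mem rfl i
  · exact (T.orderEmbOfFin rfl).injective
  · intro j hj
    have hr := T.range_orderEmbOfFin rfl
    have : j ∈ Set.range ⇑(T.orderEmbOfFin rfl) := by rw [hr]; exact hj
    exact this
end

section
/- Let n ≥ 3 and let T ⊆ {1,…,n} contain exactly one of the two elements n−1 and n. Then the geometric realization of the induced subcomplex K'_{χ',T} is homotopy equivalent to the sphere S^{|T|−1}. -/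
open Finset

/-- weight of `f` at natural index `j`. -/
def scWt (n : ℕ) (f : Fin (2*n+2) → ℝ) (j : ℕ) : ℝ :=
  if h : j < 2*n+2 then f ⟨j, h⟩ else 0

lemma scWt_lt (n : ℕ) (f : Fin (2*n+2) → ℝ) {j : ℕ} (h : j < 2*n+2) :
    scWt n f j = f ⟨j, h⟩ := dif_pos h

lemma scWt_fin (n : ℕ) (f : Fin (2*n+2) → ℝ) (v : Fin (2*n+2)) :
    scWt n f v = f v := by rw [scWt_lt n f v.isLt]

lemma scWt_nonneg (n : ℕ) (f : Fin (2*n+2) → ℝ) (hf : ∀ v, 0 ≤ f v) (j : ℕ) :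
    0 ≤ scWt n f j := by
  unfold scWt; split <;> simp [hf]

lemma mem_suppF (n : ℕ) (f : Fin (2*n+2) → ℝ) (j : ℕ) :
    j ∈ (Finset.univ.filter (fun v => f v ≠ 0)).image Fin.val ↔ scWt n f j ≠ 0 := by
  simp only [mem_image, mem_filter, mem_univ, true_and]
  constructor
  · rintro ⟨a, ha, rfl⟩; rwa [scWt_fin]
  · intro h
    rcases Nat.lt_or_ge j (2*n+2) with hj | hj
    · exact ⟨⟨j, hj⟩, by rwa [scWt_lt n f hj] at h, rfl⟩
    · exact absurd (dif_neg (by omega)) h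

/-- membership lemmas for `chi'Supp` -/
lemma chi'Supp_mem_of_T {n : ℕ} {T : Finset ℕ} (hT : T ⊆ Finset.Icc 1 n)
    {i : ℕ} (hi : i ∈ T) : i ∈ chi'Supp n T := by
  have hb := mem_Icc.1 (hT hi)
  refine mem_filter.2 ⟨mem_Icc.2 ⟨hb.1, by omega⟩, ?_⟩
  have : ∀ i' ∈ T, chi'Entry n i' i = if i = i' then 1 else 0 := by
    intro i' hi'
    have hb' := mem_Icc.1 (hT hi')
    unfold chi'Entry
    by_cases h : i = i'
    · simp [h]
    · rw [if_neg (by omega), if_neg h]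
  rw [Finset.sum_congr rfl this, Finset.sum_ite_eq T i (fun _ => (1 : ZMod 2)), if_pos hi]
  decide

lemma chi'Supp_mem_of_T' {n : ℕ} {T : Finset ℕ} (hT : T ⊆ Finset.Icc 1 n)
    {i : ℕ} (hi : i ∈ T) : n + i ∈ chi'Supp n T := by
  have hb := mem_Icc.1 (hT hi)
  refine mem_filter.2 ⟨mem_Icc.2 ⟨by omega, by omega⟩, ?_⟩
  have : ∀ i' ∈ T, chi'Entry n i' (n+i) = if i = i' then 1 else 0 := by
    intro i' hi'
    have hb' := mem_Icc.1 (hT hi')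
    unfold chi'Entry
    by_cases h : i = i'
    · simp [h]
    · rw [if_neg (by omega), if_neg h]
  rw [Finset.sum_congr rfl this, Finset.sum_ite_eq T i (fun _ => (1 : ZMod 2)), if_pos hi]
  decide

lemma chi'Supp_sub {n : ℕ} {T : Finset ℕ} {j : ℕ} (hj : j ∈ chi'Supp n T) :
    j ∈ T ∨ (∃ i ∈ T, j = n + i) ∨ j = 2*n+1 := by
  have h2 := (mem_filter.1 hj).2
  obtain ⟨i, hi, hne⟩ := Finset.exists_ne_zero_of_sum_ne_zero h2
  unfold chi'Entry at hne
  by_cases h : j = i ∨ j = n + i ∨ j = 2*n+1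
  · rcases h with h | h | h
    · exact Or.inl (h ▸ hi)
    · exact Or.inr (Or.inl ⟨i, hi, h⟩)
    · exact Or.inr (Or.inr h)
  · simp [if_neg h] at hne

lemma chi'Supp_not_n {n : ℕ} {T : Finset ℕ} (hn : 3 ≤ n) (hT : T ⊆ Finset.Icc 1 n)
    (h : n ∉ T) : n ∉ chi'Supp n T := by
  intro hmem
  rcases chi'Supp_sub hmem with h1 | ⟨i, hi, h2⟩ | h3
  · exact h h1
  · have := mem_Icc.1 (hT hi); omega
  · omega

lemma chi'Supp_not_2n {n : ℕ} {T : Finset ℕ} (hn : 3 ≤ n) (hT : T ⊆ Finset.Icc 1 n)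
    (h : n ∉ T) : 2*n ∉ chi'Supp n T := by
  intro hmem
  rcases chi'Supp_sub hmem with h1 | ⟨i, hi, h2⟩ | h3
  · have := mem_Icc.1 (hT h1); omega
  · have hb := mem_Icc.1 (hT hi)
    have he : i = n := by omega
    subst he; exact h hi
  · omega

lemma chi'Supp_not_nsub1 {n : ℕ} {T : Finset ℕ} (hn : 3 ≤ n) (hT : T ⊆ Finset.Icc 1 n)
    (h : n - 1 ∉ T) : n - 1 ∉ chi'Supp n T := by
  intro hmem
  rcases chi'Supp_sub hmem with h1 | ⟨i, hi, h2⟩ | h3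
  · exact h h1
  · have := mem_Icc.1 (hT hi); omega
  · omega

noncomputable def scSupp (n : ℕ) (f : Fin (2*n+2) → ℝ) : Finset ℕ :=
  (Finset.univ.filter (fun v => f v ≠ 0)).image Fin.val

lemma mem_scSupp (n : ℕ) (f : Fin (2*n+2) → ℝ) (j : ℕ) :
    j ∈ scSupp n f ↔ scWt n f j ≠ 0 := mem_suppF n f j

lemma pent_pair {n : ℕ} {f : Fin (2*n+2) → ℝ} (hface : pentFace n (scSupp n f))
    {a b : ℕ} (ha : scWt n f a ≠ 0) (hb : scWt n f b ≠ 0)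
    (hac : a ∈ pentCyc n) (hbc : b ∈ pentCyc n) (hab : a ≠ b) :
    ∃ e ∈ pentEdges n, a ∈ e ∧ b ∈ e := by
  have ha' : a ∈ scSupp n f ∩ pentCyc n :=
    Finset.mem_inter.2 ⟨(mem_scSupp n f a).2 ha, hac⟩
  have hb' : b ∈ scSupp n f ∩ pentCyc n :=
    Finset.mem_inter.2 ⟨(mem_scSupp n f b).2 hb, hbc⟩
  rcases hface.2.2 with h | ⟨c, _, h⟩ | h
  · rw [h] at ha'; exact absurd ha' (Finset.notMem_empty a)
  · rw [h] at ha' hb'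
    rw [Finset.mem_singleton] at ha' hb'
    exact absurd (ha'.trans hb'.symm) hab
  · exact ⟨_, h, ha', hb'⟩

lemma sc_cyc1 {n : ℕ} {f : Fin (2*n+2) → ℝ} (hn : 3 ≤ n)
    (hface : pentFace n (scSupp n f)) (h : scWt n f (2*n-1) ≠ 0) :
    scWt n f (n-1) = 0 ∧ scWt n f (2*n+1) = 0 := by
  constructor
  · by_contra hb
    obtain ⟨e, he, h1, h2⟩ := pent_pair hface h hb
      (by simp [pentCyc]) (by simp [pentCyc]) (by omega)
    simp only [pentEdges, Finset.mem_insert, Finset.mem_singleton] at he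
    rcases he with he | he | he | he | he <;>
      (subst he; simp only [Finset.mem_insert, Finset.mem_singleton] at h1 h2; omega)
  · by_contra hb
    obtain ⟨e, he, h1, h2⟩ := pent_pair hface h hb
      (by simp [pentCyc]) (by simp [pentCyc]) (by omega)
    simp only [pentEdges, Finset.mem_insert, Finset.mem_singleton] at he
    rcases he with he | he | he | he | he <;>
      (subst he; simp only [Finset.mem_insert, Finset.mem_singleton] at h1 h2; omega)

lemma sc_cyc2 {n : ℕ} {f : Fin (2*n+2) → ℝ} (hn : 3 ≤ n)
    (hface : pentFace n (scSupp n f)) (h : scWt n f n ≠ 0) :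
    scWt n f (2*n) = 0 ∧ scWt n f (2*n+1) = 0 := by
  constructor
  · by_contra hb
    obtain ⟨e, he, h1, h2⟩ := pent_pair hface h hb
      (by simp [pentCyc]) (by simp [pentCyc]) (by omega)
    simp only [pentEdges, Finset.mem_insert, Finset.mem_singleton] at he
    rcases he with he | he | he | he | he <;>
      (subst he; simp only [Finset.mem_insert, Finset.mem_singleton] at h1 h2; omega)
  · by_contra hb
    obtain ⟨e, he, h1, h2⟩ := pent_pair hface h hb
      (by simp [pentCyc]) (by simp [pentCyc]) (by omega)
    simp only [pentEdges, Finset.mem_insert, Finset.mem_singleton] at he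
    rcases he with he | he | he | he | he <;>
      (subst he; simp only [Finset.mem_insert, Finset.mem_singleton] at h1 h2; omega)

lemma sc_anti {n : ℕ} {f : Fin (2*n+2) → ℝ} (hface : pentFace n (scSupp n f))
    {i : ℕ} (h1 : 1 ≤ i) (h2 : i ≤ n - 2) :
    scWt n f i = 0 ∨ scWt n f (n+i) = 0 := by
  by_contra hb
  push_neg at hb
  exact hface.2.1 i (Finset.mem_Icc.2 ⟨h1, h2⟩)
    ⟨(mem_scSupp n f i).2 hb.1, (mem_scSupp n f (n+i)).2 hb.2⟩

noncomputable def scIdx (T : Finset ℕ) (k : Fin T.card) : ℕ := (T.equivFin.symm k : ℕ)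

lemma scIdx_mem (T : Finset ℕ) (k : Fin T.card) : scIdx T k ∈ T := (T.equivFin.symm k).2

lemma scSum_reindex (T : Finset ℕ) (h : ℕ → ℝ) :
    ∑ k : Fin T.card, h (scIdx T k) = ∑ i ∈ T, h i := by
  rw [← Finset.sum_coe_sort T h]
  exact Equiv.sum_comp T.equivFin.symm (fun x : ↥T => h ↑x)

noncomputable def scEps (n i₀ : ℕ) : ℝ := if i₀ + 1 = n then 1 else -1

def scV (n i₀ : ℕ) : ℕ := if i₀ + 1 = n then i₀ else n + i₀

noncomputable def scPhi (n : ℕ) (T : Finset ℕ) (i₀ : ℕ) (f : Fin (2*n+2) → ℝ) :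
    EuclideanSpace ℝ (Fin T.card) :=
  WithLp.toLp 2 fun k => scWt n f (scIdx T k) - scWt n f (n + scIdx T k) +
    (if scIdx T k = i₀ then scEps n i₀ * scWt n f (2*n+1) else 0)

lemma scSmall {n : ℕ} {T : Finset ℕ} {i₀ : ℕ} (hn : 3 ≤ n) (hT : T ⊆ Finset.Icc 1 n)
    (hcase : (i₀ + 1 = n ∧ n ∉ T) ∨ (i₀ = n ∧ n - 1 ∉ T))
    {i : ℕ} (hi : i ∈ T) (hne : i ≠ i₀) : 1 ≤ i ∧ i ≤ n - 2 := by
  have h1 := Finset.mem_Icc.1 (hT hi)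
  rcases hcase with ⟨h, hn'⟩ | ⟨h, hn'⟩
  · have : i ≠ n := fun he => hn' (he ▸ hi)
    omega
  · have : i ≠ n - 1 := fun he => hn' (he ▸ hi)
    omega

lemma scSum_eq {n : ℕ} {T : Finset ℕ} (hT : T ⊆ Finset.Icc 1 n) {f : Fin (2*n+2) → ℝ}
    (hz : ∀ j, j < 2*n+2 → j ∉ T → (∀ i ∈ T, j ≠ n + i) → j ≠ 2*n+1 → scWt n f j = 0) :
    ∑ v, f v = ∑ i ∈ T, scWt n f i + ∑ i ∈ T, scWt n f (n+i) + scWt n f (2*n+1) := by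
  have e1 : ∑ v, f v = ∑ j ∈ Finset.range (2*n+2), scWt n f j := by
    rw [← Fin.sum_univ_eq_sum_range (fun j => scWt n f j) (2*n+2)]
    exact Finset.sum_congr rfl fun v _ => (scWt_fin n f v).symm
  set D : Finset ℕ := (T ∪ T.image (fun i => n+i)) ∪ {2*n+1} with hD
  have hDsub : D ⊆ Finset.range (2*n+2) := by
    intro j hj
    simp only [hD, Finset.mem_union, Finset.mem_image, Finset.mem_singleton] at hj
    rcases hj with (hj | ⟨a, ha, rfl⟩) | hj
    · have := Finset.mem_Icc.1 (hT hj); simp only [Finset.mem_range]; omega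
    · have := Finset.mem_Icc.1 (hT ha); simp only [Finset.mem_range]; omega
    · simp only [Finset.mem_range]; omega
  have e2 : ∑ j ∈ Finset.range (2*n+2), scWt n f j = ∑ j ∈ D, scWt n f j := by
    refine (Finset.sum_subset hDsub ?_).symm
    intro j hj hjD
    simp only [hD, Finset.mem_union, Finset.mem_image, Finset.mem_singleton, not_or] at hjD
    push_neg at hjD
    refine hz j (Finset.mem_range.1 hj) hjD.1.1 (fun i hi hji => hjD.1.2 i hi hji.symm) hjD.2
  have hd1 : Disjoint (T ∪ T.image (fun i => n+i)) ({2*n+1} : Finset ℕ) := by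
    rw [Finset.disjoint_singleton_right]
    simp only [Finset.mem_union, Finset.mem_image, not_or]
    constructor
    · intro h; have := Finset.mem_Icc.1 (hT h); omega
    · rintro ⟨a, ha, hv⟩; have := Finset.mem_Icc.1 (hT ha); omega
  have hd2 : Disjoint T (T.image (fun i => n+i)) := by
    rw [Finset.disjoint_left]
    intro a ha hb
    obtain ⟨b, hb', hv⟩ := Finset.mem_image.1 hb
    have := Finset.mem_Icc.1 (hT ha); have := Finset.mem_Icc.1 (hT hb'); omega
  have e3 : ∑ j ∈ D, scWt n f j
      = ∑ i ∈ T, scWt n f i + ∑ i ∈ T, scWt n f (n+i) + scWt n f (2*n+1) := by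
    rw [hD, Finset.sum_union hd1, Finset.sum_union hd2, Finset.sum_singleton,
      Finset.sum_image (fun a _ b _ h => by omega)]
  rw [e1, e2, e3]

lemma scPhi_l1 {n : ℕ} {T : Finset ℕ} {i₀ : ℕ} (hn : 3 ≤ n) (hT : T ⊆ Finset.Icc 1 n)
    (hi₀ : i₀ ∈ T) (hcase : (i₀ + 1 = n ∧ n ∉ T) ∨ (i₀ = n ∧ n - 1 ∉ T))
    {f : Fin (2*n+2) → ℝ} (h0 : ∀ v, 0 ≤ f v) (h1 : ∑ v, f v = 1)
    (hface : pentFace n (scSupp n f)) (hsub : scSupp n f ⊆ chi'Supp n T) :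
    ∑ k : Fin T.card, |scPhi n T i₀ f k| = 1 := by
  have hwz : ∀ j, j < 2*n+2 → j ∉ T → (∀ i ∈ T, j ≠ n + i) → j ≠ 2*n+1 → scWt n f j = 0 := by
    intro j hj hj1 hj2 hj3
    by_contra hne
    rcases chi'Supp_sub (hsub ((mem_scSupp n f j).2 hne)) with h | ⟨i, hi, h⟩ | h
    · exact hj1 h
    · exact hj2 i hi h
    · exact hj3 h
  have hnn := scWt_nonneg n f h0
  have hkey : ∀ i ∈ T,
      |scWt n f i - scWt n f (n+i) + (if i = i₀ then scEps n i₀ * scWt n f (2*n+1) else 0)|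
      = scWt n f i + scWt n f (n+i) + (if i = i₀ then scWt n f (2*n+1) else 0) := by
    intro i hi
    by_cases hii : i = i₀
    · subst hii
      rw [if_pos rfl, if_pos rfl]
      rcases hcase with ⟨h, hnT⟩ | ⟨h, hnT⟩
      · -- i = n-1, eps = 1, n+i = 2n-1
        rw [scEps, if_pos h, one_mul]
        have hni : n + i = 2*n-1 := by omega
        rw [hni]
        rcases eq_or_ne (scWt n f (2*n-1)) 0 with hb | hb
        · rw [hb]
          rw [abs_of_nonneg (by have := hnn i; have := hnn (2*n+1); linarith)]
          ring
        · obtain ⟨ha, hc⟩ := sc_cyc1 hn hface hb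
          rw [show (n:ℕ) - 1 = i from by omega] at ha
          rw [ha, hc]
          rw [abs_of_nonpos (by have := hnn (2*n-1); linarith)]
          ring
      · -- i = n, eps = -1, n+i = 2n
        have he : scEps n i = -1 := by rw [scEps, if_neg (by omega)]
        rw [he, neg_one_mul, show n + i = 2*n from by omega]
        rcases eq_or_ne (scWt n f i) 0 with ha | ha
        · rw [ha]
          rw [abs_of_nonpos (by have := hnn (2*n); have := hnn (2*n+1); linarith)]
          ring
        · obtain ⟨hb, hc⟩ := sc_cyc2 hn hface (h ▸ ha)
          rw [hb, hc]
          rw [abs_of_nonneg (by have := hnn i; linarith)]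
          ring
    · rw [if_neg hii, if_neg hii, add_zero, add_zero]
      obtain ⟨hb1, hb2⟩ := scSmall hn hT hcase hi hii
      rcases sc_anti hface hb1 hb2 with ha | ha
      · rw [ha]
        rw [abs_of_nonpos (by have := hnn (n+i); linarith)]
        ring
      · rw [ha]
        rw [abs_of_nonneg (by have := hnn i; linarith)]
        ring
  calc ∑ k : Fin T.card, |scPhi n T i₀ f k|
      = ∑ i ∈ T, |scWt n f i - scWt n f (n+i)
          + (if i = i₀ then scEps n i₀ * scWt n f (2*n+1) else 0)| :=
        scSum_reindex T (fun i => |scWt n f i - scWt n f (n+i)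
          + (if i = i₀ then scEps n i₀ * scWt n f (2*n+1) else 0)|)
    _ = ∑ i ∈ T, (scWt n f i + scWt n f (n+i) + (if i = i₀ then scWt n f (2*n+1) else 0)) :=
        Finset.sum_congr rfl hkey
    _ = ∑ i ∈ T, scWt n f i + ∑ i ∈ T, scWt n f (n+i) + scWt n f (2*n+1) := by
        rw [Finset.sum_add_distrib, Finset.sum_add_distrib,
          Finset.sum_ite_eq' T i₀ (fun _ => scWt n f (2*n+1)), if_pos hi₀]
    _ = ∑ v, f v := (scSum_eq hT hwz).symm
    _ = 1 := h1

noncomputable def scPos (a : ℝ) : ℝ := max a 0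
noncomputable def scNeg (a : ℝ) : ℝ := max (-a) 0

lemma scPos_nonneg (a : ℝ) : 0 ≤ scPos a := le_max_right a 0
lemma scNeg_nonneg (a : ℝ) : 0 ≤ scNeg a := le_max_right (-a) 0
lemma scPos_sub_scNeg (a : ℝ) : scPos a - scNeg a = a := by
  unfold scPos scNeg; rcases le_total a 0 with h | h
  · rw [max_eq_right h, max_eq_left (by linarith)]; ring
  · rw [max_eq_left h, max_eq_right (by linarith)]; ring
lemma scPos_add_scNeg (a : ℝ) : scPos a + scNeg a = |a| := by
  unfold scPos scNeg; rcases le_total a 0 with h | h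
  · rw [max_eq_right h, max_eq_left (by linarith), abs_of_nonpos h]; ring
  · rw [max_eq_left h, max_eq_right (by linarith), abs_of_nonneg h]; ring
lemma scPos_pos {a : ℝ} (h : scPos a ≠ 0) : 0 < a := by
  unfold scPos at h; rcases le_total a 0 with h' | h'
  · exact absurd (max_eq_right h') h
  · rcases h'.lt_or_eq with h'' | h''
    · exact h''
    · exact absurd (by rw [← h'', max_self]) h
lemma scNeg_neg {a : ℝ} (h : scNeg a ≠ 0) : a < 0 := by
  have := scPos_pos (a := -a) (by unfold scPos; unfold scNeg at h; exact h)
  linarith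
lemma scPos_of_nonneg {a : ℝ} (h : 0 ≤ a) : scPos a = a := max_eq_left h
lemma scNeg_of_nonneg {a : ℝ} (h : 0 ≤ a) : scNeg a = 0 := max_eq_right (by linarith)
lemma scPos_of_nonpos {a : ℝ} (h : a ≤ 0) : scPos a = 0 := max_eq_right h
lemma scNeg_of_nonpos {a : ℝ} (h : a ≤ 0) : scNeg a = -a := max_eq_left (by linarith)

noncomputable def scGF (n : ℕ) (T : Finset ℕ) (z : Fin T.card → ℝ) : Fin (2*n+2) → ℝ :=
  fun v => ∑ k, (scPos (z k) * (if (v:ℕ) = scIdx T k then 1 else 0)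
               + scNeg (z k) * (if (v:ℕ) = n + scIdx T k then 1 else 0))

lemma scGF_nonneg (n : ℕ) (T : Finset ℕ) (z : Fin T.card → ℝ) (v : Fin (2*n+2)) :
    0 ≤ scGF n T z v := by
  refine Finset.sum_nonneg fun k _ => add_nonneg
    (mul_nonneg (scPos_nonneg _) (by positivity)) (mul_nonneg (scNeg_nonneg _) (by positivity))

lemma scIdx_val_inj {T : Finset ℕ} {k k' : Fin T.card} (h : scIdx T k = scIdx T k') : k = k' := by
  unfold scIdx at h
  exact T.equivFin.symm.injective (Subtype.ext h)

lemma scIdx_apply {T : Finset ℕ} {i : ℕ} (hi : i ∈ T) : scIdx T (T.equivFin ⟨i, hi⟩) = i := by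
  unfold scIdx; rw [Equiv.symm_apply_apply]

lemma scGF_wt1 {n : ℕ} {T : Finset ℕ} (hT : T ⊆ Finset.Icc 1 n) (z : Fin T.card → ℝ)
    {i : ℕ} (hi : i ∈ T) : scWt n (scGF n T z) i = scPos (z (T.equivFin ⟨i, hi⟩)) := by
  have hb := Finset.mem_Icc.1 (hT hi)
  rw [scWt_lt n _ (by omega : i < 2*n+2)]
  show ∑ k, _ = _
  simp only [Fin.val_mk]
  rw [Finset.sum_eq_single (T.equivFin ⟨i, hi⟩)]
  · rw [scIdx_apply hi, if_pos rfl, if_neg (by omega), mul_zero, add_zero, mul_one]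
  · intro k _ hk
    have h1 : i ≠ scIdx T k := by
      intro he; exact hk (scIdx_val_inj (by rw [scIdx_apply hi, he]))
    have hbk := Finset.mem_Icc.1 (hT (scIdx_mem T k))
    rw [if_neg h1, if_neg (by omega), mul_zero, mul_zero, add_zero]
  · intro h; exact absurd (Finset.mem_univ _) h

lemma scGF_wt2 {n : ℕ} {T : Finset ℕ} (hT : T ⊆ Finset.Icc 1 n) (z : Fin T.card → ℝ)
    {i : ℕ} (hi : i ∈ T) : scWt n (scGF n T z) (n+i) = scNeg (z (T.equivFin ⟨i, hi⟩)) := by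
  have hb := Finset.mem_Icc.1 (hT hi)
  rw [scWt_lt n _ (by omega : n+i < 2*n+2)]
  show ∑ k, _ = _
  simp only [Fin.val_mk]
  rw [Finset.sum_eq_single (T.equivFin ⟨i, hi⟩)]
  · rw [scIdx_apply hi, if_pos rfl, if_neg (by omega), mul_zero, zero_add, mul_one]
  · intro k _ hk
    have h1 : n + i ≠ n + scIdx T k := by
      intro he; exact hk (scIdx_val_inj (by rw [scIdx_apply hi]; omega))
    have hbk := Finset.mem_Icc.1 (hT (scIdx_mem T k))
    rw [if_neg (by omega), if_neg h1, mul_zero, mul_zero, add_zero]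
  · intro h; exact absurd (Finset.mem_univ _) h

lemma scGF_wt0 {n : ℕ} {T : Finset ℕ} (hT : T ⊆ Finset.Icc 1 n) (z : Fin T.card → ℝ)
    {j : ℕ} (hj1 : j ∉ T) (hj2 : ∀ i ∈ T, j ≠ n + i) : scWt n (scGF n T z) j = 0 := by
  unfold scWt
  split
  · show ∑ k, _ = _
    refine Finset.sum_eq_zero fun k _ => ?_
    have h1 : j ≠ scIdx T k := fun he => hj1 (he ▸ scIdx_mem T k)
    have h2 : j ≠ n + scIdx T k := hj2 _ (scIdx_mem T k)
    rw [if_neg h1, if_neg h2, mul_zero, mul_zero, add_zero]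
  · rfl

lemma sc_sum_ind (m c : ℕ) (h : c < m) :
    ∑ v : Fin m, (if (v:ℕ) = c then (1:ℝ) else 0) = 1 := by
  rw [Fin.sum_univ_eq_sum_range (fun j => if j = c then (1:ℝ) else 0) m,
    Finset.sum_ite_eq' (Finset.range m) c (fun _ => (1:ℝ)), if_pos (Finset.mem_range.2 h)]

lemma scGF_sum {n : ℕ} {T : Finset ℕ} (hT : T ⊆ Finset.Icc 1 n) (z : Fin T.card → ℝ) :
    ∑ v, scGF n T z v = ∑ k, |z k| := by
  unfold scGF
  rw [Finset.sum_comm]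
  refine Finset.sum_congr rfl fun k _ => ?_
  have hb := Finset.mem_Icc.1 (hT (scIdx_mem T k))
  rw [Finset.sum_add_distrib, ← Finset.mul_sum, ← Finset.mul_sum,
    sc_sum_ind (2*n+2) (scIdx T k) (by omega), sc_sum_ind (2*n+2) (n + scIdx T k) (by omega),
    mul_one, mul_one, scPos_add_scNeg]

lemma scGF_supp_cases {n : ℕ} {T : Finset ℕ} (hT : T ⊆ Finset.Icc 1 n) (z : Fin T.card → ℝ)
    {j : ℕ} (hj : scWt n (scGF n T z) j ≠ 0) : j ∈ T ∨ ∃ i ∈ T, j = n + i := by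
  by_contra h; push_neg at h; exact hj (scGF_wt0 hT z h.1 h.2)

lemma scGF_face {n : ℕ} {T : Finset ℕ} {i₀ : ℕ} (hn : 3 ≤ n) (hT : T ⊆ Finset.Icc 1 n)
    (hi₀ : i₀ ∈ T) (hcase : (i₀ + 1 = n ∧ n ∉ T) ∨ (i₀ = n ∧ n - 1 ∉ T))
    (z : Fin T.card → ℝ) :
    pentFace n (scSupp n (scGF n T z)) ∧ scSupp n (scGF n T z) ⊆ chi'Supp n T := by
  set g := scGF n T z with hg
  have hb₀ := Finset.mem_Icc.1 (hT hi₀)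
  refine ⟨⟨?_, ?_, ?_⟩, ?_⟩
  · -- subset Icc
    intro j hj
    rw [mem_scSupp] at hj
    rcases scGF_supp_cases hT z hj with h | ⟨a, ha, rfl⟩
    · have := Finset.mem_Icc.1 (hT h); exact Finset.mem_Icc.2 (by omega)
    · have := Finset.mem_Icc.1 (hT ha); exact Finset.mem_Icc.2 (by omega)
  · -- antipodal
    intro i hi ⟨h1, h2⟩
    rw [mem_scSupp] at h1 h2
    rw [Finset.mem_Icc] at hi
    have hiT : i ∈ T := by
      rcases scGF_supp_cases hT z h1 with h | ⟨a, ha, he⟩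
      · exact h
      · have := Finset.mem_Icc.1 (hT ha); omega
    rw [scGF_wt1 hT z hiT] at h1
    have hpos := scPos_pos h1
    rcases scGF_supp_cases hT z h2 with h | ⟨a, ha, he⟩
    · have := Finset.mem_Icc.1 (hT h); omega
    · rw [scGF_wt2 hT z hiT] at h2
      have hneg := scNeg_neg h2
      linarith
  · -- cycle condition
    have hnb : ¬(scWt n g i₀ ≠ 0 ∧ scWt n g (n+i₀) ≠ 0) := by
      rintro ⟨h1, h2⟩
      rw [scGF_wt1 hT z hi₀] at h1
      rw [scGF_wt2 hT z hi₀] at h2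
      have := scPos_pos h1; have := scNeg_neg h2; linarith
    have hsubcyc : ∀ j ∈ scSupp n g ∩ pentCyc n, j = i₀ ∨ j = n + i₀ := by
      intro j hj
      obtain ⟨hjs, hjc⟩ := Finset.mem_inter.1 hj
      rw [mem_scSupp] at hjs
      simp only [pentCyc, Finset.mem_insert, Finset.mem_singleton] at hjc
      rcases scGF_supp_cases hT z hjs with hjT | ⟨a, ha, rfl⟩
      · have hbj := Finset.mem_Icc.1 (hT hjT)
        rcases hcase with ⟨h, hn'⟩ | ⟨h, hn'⟩
        · have : j ≠ n := fun he => hn' (he ▸ hjT); left; omega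
        · have : j ≠ n - 1 := fun he => hn' (he ▸ hjT); left; omega
      · have hba := Finset.mem_Icc.1 (hT ha)
        rcases hcase with ⟨h, hn'⟩ | ⟨h, hn'⟩
        · have : a ≠ n := fun he => hn' (he ▸ ha); right; omega
        · have : a ≠ n - 1 := fun he => hn' (he ▸ ha); right; omega
    have hcycmem : i₀ ∈ pentCyc n ∧ n + i₀ ∈ pentCyc n := by
      constructor
      · simp only [pentCyc, Finset.mem_insert, Finset.mem_singleton]
        rcases hcase with ⟨h, _⟩ | ⟨h, _⟩ <;> omega
      · simp only [pentCyc, Finset.mem_insert, Finset.mem_singleton]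
        rcases hcase with ⟨h, _⟩ | ⟨h, _⟩ <;> omega
    by_cases hzz : scWt n g i₀ = 0
    · have hss : scSupp n g ∩ pentCyc n ⊆ {n + i₀} := by
        intro j hj
        rcases hsubcyc j hj with he | he
        · rw [he] at hj
          exact absurd ((mem_scSupp n g _).1 (Finset.mem_inter.1 hj).1) (not_not.2 hzz)
        · subst he; exact Finset.mem_singleton_self _
      rcases Finset.subset_singleton_iff.1 hss with he | he
      · exact Or.inl he
      · exact Or.inr (Or.inl ⟨n + i₀, hcycmem.2, he⟩)
    · have hz2 : scWt n g (n + i₀) = 0 := by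
        by_contra hz2; exact hnb ⟨hzz, hz2⟩
      have hss : scSupp n g ∩ pentCyc n ⊆ {i₀} := by
        intro j hj
        rcases hsubcyc j hj with he | he
        · subst he; exact Finset.mem_singleton_self _
        · rw [he] at hj
          exact absurd ((mem_scSupp n g _).1 (Finset.mem_inter.1 hj).1) (not_not.2 hz2)
      rcases Finset.subset_singleton_iff.1 hss with he | he
      · exact Or.inl he
      · exact Or.inr (Or.inl ⟨i₀, hcycmem.1, he⟩)
  · -- subset chi'Supp
    intro j hj
    rw [mem_scSupp] at hj
    rcases scGF_supp_cases hT z hj with h | ⟨a, ha, rfl⟩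
    · exact chi'Supp_mem_of_T hT h
    · exact chi'Supp_mem_of_T' hT ha

lemma scEquiv_idx (T : Finset ℕ) (k : Fin T.card) :
    T.equivFin ⟨scIdx T k, scIdx_mem T k⟩ = k := by
  have : (⟨scIdx T k, scIdx_mem T k⟩ : {x // x ∈ T}) = T.equivFin.symm k := Subtype.ext rfl
  rw [this, Equiv.apply_symm_apply]

lemma scPhi_unfold {n : ℕ} (T : Finset ℕ) (i₀ : ℕ) (f : Fin (2*n+2) → ℝ)
    {a : ℕ} (ha : a ∈ T) :
    scPhi n T i₀ f (T.equivFin ⟨a, ha⟩)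
      = scWt n f a - scWt n f (n+a)
        + (if a = i₀ then scEps n i₀ * scWt n f (2*n+1) else 0) := by
  show scWt n f (scIdx T _) - scWt n f (n + scIdx T _) + _ = _
  rw [scIdx_apply ha]

lemma sc_2n1_notT {n : ℕ} {T : Finset ℕ} (hn : 3 ≤ n) (hT : T ⊆ Finset.Icc 1 n) :
    2*n+1 ∉ T ∧ ∀ i ∈ T, 2*n+1 ≠ n + i := by
  constructor
  · intro h; have := Finset.mem_Icc.1 (hT h); omega
  · intro i hi; have := Finset.mem_Icc.1 (hT hi); omega

lemma scPhi_scGF {n : ℕ} {T : Finset ℕ} {i₀ : ℕ} (hn : 3 ≤ n) (hT : T ⊆ Finset.Icc 1 n)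
    (z : Fin T.card → ℝ) (k : Fin T.card) :
    scPhi n T i₀ (scGF n T z) k = z k := by
  have hm := scIdx_mem T k
  have h2n1 : scWt n (scGF n T z) (2*n+1) = 0 :=
    scGF_wt0 hT z (sc_2n1_notT hn hT).1 (sc_2n1_notT hn hT).2
  show scWt n (scGF n T z) (scIdx T k) - scWt n (scGF n T z) (n + scIdx T k) + _ = z k
  rw [scGF_wt1 hT z hm, scGF_wt2 hT z hm, scEquiv_idx, h2n1]
  rw [mul_zero, ite_self, add_zero, scPos_sub_scNeg]

lemma sc_wz {n : ℕ} {T : Finset ℕ} {f : Fin (2*n+2) → ℝ}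
    (hsub : scSupp n f ⊆ chi'Supp n T)
    {j : ℕ} (hj1 : j ∉ T) (hj2 : ∀ i ∈ T, j ≠ n + i) (hj3 : j ≠ 2*n+1) :
    scWt n f j = 0 := by
  by_contra hne
  rcases chi'Supp_sub (hsub ((mem_scSupp n f j).2 hne)) with h | ⟨i, hi, h⟩ | h
  · exact hj1 h
  · exact hj2 i hi h
  · exact hj3 h

/-- The key retraction identity: `G(φ(f)) = r(f)`. -/
lemma scGF_scPhi {n : ℕ} {T : Finset ℕ} {i₀ : ℕ} (hn : 3 ≤ n) (hT : T ⊆ Finset.Icc 1 n)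
    (hi₀ : i₀ ∈ T) (hcase : (i₀ + 1 = n ∧ n ∉ T) ∨ (i₀ = n ∧ n - 1 ∉ T))
    {f : Fin (2*n+2) → ℝ} (h0 : ∀ v, 0 ≤ f v)
    (hface : pentFace n (scSupp n f)) (hsub : scSupp n f ⊆ chi'Supp n T) (j : ℕ) :
    scWt n (scGF n T (scPhi n T i₀ f)) j
      = scWt n f j + scWt n f (2*n+1) *
          ((if j = scV n i₀ then 1 else 0) - (if j = 2*n+1 then 1 else 0)) := by
  have hnn := scWt_nonneg n f h0
  have hb₀ := Finset.mem_Icc.1 (hT hi₀)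
  by_cases hjT : j ∈ T
  · -- j ∈ T
    have hbj := Finset.mem_Icc.1 (hT hjT)
    rw [scGF_wt1 hT _ hjT, scPhi_unfold T i₀ f hjT]
    rw [if_neg (by omega : j ≠ 2*n+1)]
    by_cases hji : j = i₀
    · subst hji
      rw [if_pos rfl]
      rcases hcase with ⟨h, hn'⟩ | ⟨h, hn'⟩
      · have hV : scV n j = j := by unfold scV; rw [if_pos h]
        rw [hV, if_pos rfl, scEps, if_pos h, one_mul,
          show n + j = 2*n-1 from by omega]
        rcases eq_or_ne (scWt n f (2*n-1)) 0 with hb | hb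
        · rw [hb, sub_zero,
            scPos_of_nonneg (by have := hnn j; have := hnn (2*n+1); linarith)]
          ring
        · obtain ⟨ha, hc⟩ := sc_cyc1 hn hface hb
          rw [show (n:ℕ) - 1 = j from by omega] at ha
          rw [ha, hc,
            scPos_of_nonpos (by have := hnn (2*n-1); linarith)]
          linarith
      · have hV : scV n j = n + j := by unfold scV; rw [if_neg (by omega)]
        rw [hV, if_neg (by omega), scEps, if_neg (by omega), neg_one_mul]
        rcases eq_or_ne (scWt n f j) 0 with ha | ha
        · rw [ha,
            scPos_of_nonpos (by have := hnn (n+j); have := hnn (2*n+1); linarith)]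
          ring
        · obtain ⟨hb, hc⟩ := sc_cyc2 hn hface (h ▸ ha)
          rw [show 2*n = n + j from by omega] at hb
          rw [hb, hc,
            scPos_of_nonneg (by have := hnn j; linarith)]
          ring
    · rw [if_neg hji]
      have hVne : j ≠ scV n i₀ := by unfold scV; split <;> omega
      rw [if_neg hVne, add_zero]
      obtain ⟨hs1, hs2⟩ := scSmall hn hT hcase hjT hji
      rcases sc_anti hface hs1 hs2 with ha | ha
      · rw [ha, scPos_of_nonpos (by have := hnn (n+j); linarith)]
        linarith
      · rw [ha, sub_zero, scPos_of_nonneg (hnn j)]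
        ring
  · by_cases hjI : ∃ a ∈ T, j = n + a
    · obtain ⟨a, ha, rfl⟩ := hjI
      have hba := Finset.mem_Icc.1 (hT ha)
      rw [scGF_wt2 hT _ ha, scPhi_unfold T i₀ f ha]
      rw [if_neg (by omega : n + a ≠ 2*n+1)]
      by_cases hai : a = i₀
      · subst hai
        rcases hcase with ⟨h, hn'⟩ | ⟨h, hn'⟩
        · have hVne : n + a ≠ scV n a := by unfold scV; rw [if_pos h]; omega
          rw [if_pos rfl, if_neg hVne, scEps, if_pos h, one_mul,
            show n + a = 2*n-1 from by omega]
          rcases eq_or_ne (scWt n f (2*n-1)) 0 with hb | hb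
          · rw [hb, sub_zero,
              scNeg_of_nonneg (by have := hnn a; have := hnn (2*n+1); linarith)]
            linarith
          · obtain ⟨ha', hc⟩ := sc_cyc1 hn hface hb
            rw [show (n:ℕ) - 1 = a from by omega] at ha'
            rw [ha', hc,
              scNeg_of_nonpos (by have := hnn (2*n-1); linarith)]
            ring_nf
        · have hV : n + a = scV n a := by unfold scV; rw [if_neg (by omega)]
          rw [if_pos rfl, if_pos hV, scEps, if_neg (by omega), neg_one_mul]
          rcases eq_or_ne (scWt n f a) 0 with ha' | ha'
          · rw [ha',
              scNeg_of_nonpos (by have := hnn (n+a); have := hnn (2*n+1); linarith)]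
            ring_nf
          · obtain ⟨hb, hc⟩ := sc_cyc2 hn hface (h ▸ ha')
            rw [show 2*n = n + a from by omega] at hb
            rw [hb, hc,
              scNeg_of_nonneg (by have := hnn a; linarith)]
            linarith
      · rw [if_neg hai, add_zero]
        have hVne : n + a ≠ scV n i₀ := by unfold scV; split <;> omega
        rw [if_neg hVne]
        obtain ⟨hs1, hs2⟩ := scSmall hn hT hcase ha hai
        rcases sc_anti hface hs1 hs2 with ha' | ha'
        · rw [ha', scNeg_of_nonpos (by have := hnn (n+a); linarith)]
          linarith
        · rw [ha', sub_zero, scNeg_of_nonneg (hnn a)]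
          linarith
    · push_neg at hjI
      rw [scGF_wt0 hT _ hjT (fun i hi => hjI i hi)]
      have hVne : j ≠ scV n i₀ := by
        unfold scV; split
        · intro he; exact hjT (he ▸ hi₀)
        · intro he; exact hjI i₀ hi₀ he
      rw [if_neg hVne]
      by_cases hj1 : j = 2*n+1
      · subst hj1
        rw [if_pos rfl]
        ring
      · rw [if_neg hj1, sc_wz hsub hjT (fun i hi => hjI i hi) hj1]
        ring

lemma sc_subset_pair {α : Type*} [DecidableEq α] {s : Finset α} {x y : α}
    (h : s ⊆ {x, y}) : s = ∅ ∨ s = {x} ∨ s = {y} ∨ s = {x, y} := by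
  by_cases hx : x ∈ s <;> by_cases hy : y ∈ s
  · refine Or.inr (Or.inr (Or.inr (Finset.Subset.antisymm h ?_)))
    exact Finset.insert_subset hx (Finset.singleton_subset_iff.2 hy)
  · refine Or.inr (Or.inl (Finset.Subset.antisymm ?_ (Finset.singleton_subset_iff.2 hx)))
    intro a ha
    rcases Finset.mem_insert.1 (h ha) with h' | h'
    · exact Finset.mem_singleton.2 h'
    · exact absurd (Finset.mem_singleton.1 h' ▸ ha) hy
  · refine Or.inr (Or.inr (Or.inl (Finset.Subset.antisymm ?_ (Finset.singleton_subset_iff.2 hy))))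
    intro a ha
    rcases Finset.mem_insert.1 (h ha) with h' | h'
    · exact absurd (h' ▸ ha) hx
    · exact h'
  · refine Or.inl (Finset.eq_empty_of_forall_notMem fun a ha => ?_)
    rcases Finset.mem_insert.1 (h ha) with h' | h'
    · exact hx (h' ▸ ha)
    · exact hy (Finset.mem_singleton.1 h' ▸ ha)

lemma scFace_down {n : ℕ} {s t : Finset ℕ} (hst : s ⊆ t) (ht : pentFace n t) :
    pentFace n s := by
  refine ⟨hst.trans ht.1, fun i hi hmem => ht.2.1 i hi ⟨hst hmem.1, hst hmem.2⟩, ?_⟩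
  have hsc : s ∩ pentCyc n ⊆ t ∩ pentCyc n :=
    Finset.inter_subset_inter hst (Finset.Subset.refl _)
  rcases ht.2.2 with h | ⟨a, hac, h⟩ | h
  · rw [h] at hsc
    exact Or.inl (Finset.subset_empty.1 hsc)
  · rw [h] at hsc
    rcases Finset.subset_singleton_iff.1 hsc with e | e
    · exact Or.inl e
    · exact Or.inr (Or.inl ⟨a, hac, e⟩)
  · simp only [pentEdges, Finset.mem_insert, Finset.mem_singleton] at h
    rcases h with h | h | h | h | h <;>
      (rw [h] at hsc
       rcases sc_subset_pair hsc with e | e | e | e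
       · exact Or.inl e
       · exact Or.inr (Or.inl ⟨_, by simp [pentCyc], e⟩)
       · exact Or.inr (Or.inl ⟨_, by simp [pentCyc], e⟩)
       · refine Or.inr (Or.inr ?_)
         rw [e]
         simp [pentEdges])

lemma scV_cases {n i₀ : ℕ} (hn : 3 ≤ n) (hcase : i₀ + 1 = n ∨ i₀ = n) :
    (scV n i₀ = i₀ ∧ i₀ + 1 = n) ∨ (scV n i₀ = n + i₀ ∧ i₀ = n) := by
  rcases hcase with h | h
  · exact Or.inl ⟨by unfold scV; rw [if_pos h], h⟩
  · exact Or.inr ⟨by unfold scV; rw [if_neg (by omega)], h⟩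

lemma scR_face_insert {n : ℕ} {T : Finset ℕ} {i₀ : ℕ} (hn : 3 ≤ n)
    (hT : T ⊆ Finset.Icc 1 n) (hi₀ : i₀ ∈ T)
    (hcase : (i₀ + 1 = n ∧ n ∉ T) ∨ (i₀ = n ∧ n - 1 ∉ T))
    {f : Fin (2*n+2) → ℝ}
    (hface : pentFace n (scSupp n f)) (hsub : scSupp n f ⊆ chi'Supp n T)
    (hc : scWt n f (2*n+1) ≠ 0) :
    pentFace n (insert (scV n i₀) (scSupp n f))
      ∧ insert (scV n i₀) (scSupp n f) ⊆ chi'Supp n T := by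
  have hb₀ := Finset.mem_Icc.1 (hT hi₀)
  have hV := scV_cases hn (hcase.imp And.left And.left)
  have hVcyc : scV n i₀ ∈ pentCyc n := by
    rcases hV with ⟨hv, h⟩ | ⟨hv, h⟩
    · rw [hv, show i₀ = n - 1 from by omega]; simp [pentCyc]
    · rw [hv, h, show n + n = 2*n from by omega]; simp [pentCyc]
  have h2cyc : (2*n+1 : ℕ) ∈ pentCyc n := by simp [pentCyc]
  have h2mem : (2*n+1 : ℕ) ∈ scSupp n f ∩ pentCyc n :=
    Finset.mem_inter.2 ⟨(mem_scSupp n f _).2 hc, h2cyc⟩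
  refine ⟨⟨?_, ?_, ?_⟩, ?_⟩
  · refine Finset.insert_subset (Finset.mem_Icc.2 ?_) hface.1
    rcases hV with ⟨hv, h⟩ | ⟨hv, h⟩ <;> omega
  · intro i hi hmem
    rw [Finset.mem_Icc] at hi
    obtain ⟨h1, h2⟩ := hmem
    rcases Finset.mem_insert.1 h1 with h1' | h1'
    · rcases hV with ⟨hv, h⟩ | ⟨hv, h⟩ <;> omega
    · rcases Finset.mem_insert.1 h2 with h2' | h2'
      · rcases hV with ⟨hv, h⟩ | ⟨hv, h⟩ <;> omega
      · exact hface.2.1 i (Finset.mem_Icc.2 hi) ⟨h1', h2'⟩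
  · rw [Finset.insert_inter_of_mem hVcyc]
    rcases hface.2.2 with h | ⟨a, hac, he⟩ | he
    · rw [h] at h2mem; exact absurd h2mem (Finset.notMem_empty _)
    · rw [he] at h2mem
      have ha2 : a = 2*n+1 := (Finset.mem_singleton.1 h2mem).symm
      subst ha2
      rw [he]
      refine Or.inr (Or.inr ?_)
      rcases hV with ⟨hv, h⟩ | ⟨hv, h⟩
      · rw [hv, show i₀ = n - 1 from by omega, Finset.pair_comm]
        simp [pentEdges]
      · rw [hv, h, show n + n = 2*n from by omega]
        simp [pentEdges]
    · simp only [pentEdges, Finset.mem_insert, Finset.mem_singleton] at he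
      rcases he with he | he | he | he | he
      · rw [he] at h2mem
        simp only [Finset.mem_insert, Finset.mem_singleton] at h2mem
        omega
      · rw [he] at h2mem
        simp only [Finset.mem_insert, Finset.mem_singleton] at h2mem
        omega
      · rw [he] at h2mem
        simp only [Finset.mem_insert, Finset.mem_singleton] at h2mem
        omega
      · -- t ∩ cyc = {2n, 2n+1}
        have h2n : (2*n:ℕ) ∈ scSupp n f := by
          have : (2*n:ℕ) ∈ scSupp n f ∩ pentCyc n := by
            rw [he]; exact Finset.mem_insert_self _ _
          exact (Finset.mem_inter.1 this).1
        rcases hV with ⟨hv, h⟩ | ⟨hv, h⟩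
        · -- case 1: n ∉ T, contradiction
          rcases hcase with ⟨_, hn'⟩ | ⟨h', _⟩
          · exact absurd (hsub h2n) (chi'Supp_not_2n hn hT hn')
          · omega
        · rw [he, hv, h, show n + n = 2*n from by omega,
            Finset.insert_eq_self.2 (Finset.mem_insert_self _ _)]
          refine Or.inr (Or.inr ?_)
          simp [pentEdges]
      · -- t ∩ cyc = {2n+1, n-1}
        have hn1 : (n-1:ℕ) ∈ scSupp n f := by
          have : (n-1:ℕ) ∈ scSupp n f ∩ pentCyc n := by
            rw [he]; exact Finset.mem_insert_of_mem (Finset.mem_singleton_self _)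
          exact (Finset.mem_inter.1 this).1
        rcases hV with ⟨hv, h⟩ | ⟨hv, h⟩
        · rw [he, hv, show i₀ = n - 1 from by omega,
            Finset.insert_eq_self.2 (Finset.mem_insert_of_mem (Finset.mem_singleton_self _))]
          refine Or.inr (Or.inr ?_)
          simp [pentEdges]
        · rcases hcase with ⟨h', _⟩ | ⟨_, hn'⟩
          · omega
          · exact absurd (hsub hn1) (chi'Supp_not_nsub1 hn hT hn')
  · refine Finset.insert_subset ?_ hsub
    rcases hV with ⟨hv, h⟩ | ⟨hv, h⟩
    · rw [hv]; exact chi'Supp_mem_of_T hT hi₀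
    · rw [hv]; exact chi'Supp_mem_of_T' hT hi₀

noncomputable def scR (n i₀ : ℕ) (s : ℝ) (f : Fin (2*n+2) → ℝ) : Fin (2*n+2) → ℝ :=
  fun v => f v + s * scWt n f (2*n+1) *
    ((if (v:ℕ) = scV n i₀ then 1 else 0) - (if (v:ℕ) = 2*n+1 then 1 else 0))

lemma scWt_scR {n i₀ : ℕ} (hlt : scV n i₀ < 2*n+2) (s : ℝ) (f : Fin (2*n+2) → ℝ) (j : ℕ) :
    scWt n (scR n i₀ s f) j = scWt n f j + s * scWt n f (2*n+1) *
      ((if j = scV n i₀ then 1 else 0) - (if j = 2*n+1 then 1 else 0)) := by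
  by_cases h : j < 2*n+2
  · rw [scWt_lt n _ h, scWt_lt n f h]
    show f _ + _ = _
    simp only [Fin.val_mk]
  · rw [scWt.eq_def, dif_neg h, scWt.eq_def, dif_neg h,
      if_neg (by omega), if_neg (by omega)]
    ring

lemma scR_mem {n : ℕ} {T : Finset ℕ} {i₀ : ℕ} (hn : 3 ≤ n) (hT : T ⊆ Finset.Icc 1 n)
    (hi₀ : i₀ ∈ T) (hcase : (i₀ + 1 = n ∧ n ∉ T) ∨ (i₀ = n ∧ n - 1 ∉ T))
    {f : Fin (2*n+2) → ℝ} (h0 : ∀ v, 0 ≤ f v) (h1 : ∑ v, f v = 1)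
    (hface : pentFace n (scSupp n f)) (hsub : scSupp n f ⊆ chi'Supp n T)
    {s : ℝ} (hs0 : 0 ≤ s) (hs1 : s ≤ 1) :
    (∀ v, 0 ≤ scR n i₀ s f v) ∧ (∑ v, scR n i₀ s f v = 1) ∧
      pentFace n (scSupp n (scR n i₀ s f)) ∧ scSupp n (scR n i₀ s f) ⊆ chi'Supp n T := by
  have hb₀ := Finset.mem_Icc.1 (hT hi₀)
  have hV := scV_cases hn (hcase.imp And.left And.left)
  have hVlt : scV n i₀ ≤ 2*n := by rcases hV with ⟨hv, h⟩ | ⟨hv, h⟩ <;> omega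
  have hc0 : 0 ≤ scWt n f (2*n+1) := scWt_nonneg n f h0 _
  refine ⟨?_, ?_, ?_⟩
  · intro v
    show 0 ≤ f v + _
    by_cases hv1 : (v:ℕ) = scV n i₀
    · rw [if_pos hv1, if_neg (by omega)]
      nlinarith [h0 v, mul_nonneg hs0 hc0]
    · by_cases hv2 : (v:ℕ) = 2*n+1
      · rw [if_neg hv1, if_pos hv2]
        have hfv : f v = scWt n f (2*n+1) := by rw [← scWt_fin n f v, hv2]
        rw [hfv]
        nlinarith [mul_le_of_le_one_left hc0 hs1]
      · rw [if_neg hv1, if_neg hv2]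
        simpa using h0 v
  · show ∑ v, (f v + _) = 1
    rw [Finset.sum_add_distrib, h1, ← Finset.mul_sum, Finset.sum_sub_distrib,
      sc_sum_ind (2*n+2) (scV n i₀) (by omega), sc_sum_ind (2*n+2) (2*n+1) (by omega)]
    ring
  · by_cases hc : scWt n f (2*n+1) = 0
    · have hfe : scR n i₀ s f = f := funext fun v => by simp [scR, hc]
      rw [hfe]
      exact ⟨hface, hsub⟩
    · obtain ⟨hfi, hsi⟩ := scR_face_insert hn hT hi₀ hcase hface hsub hc
      have hss : scSupp n (scR n i₀ s f) ⊆ insert (scV n i₀) (scSupp n f) := by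
        intro j hj
        rw [mem_scSupp, scWt_scR (by omega) s f j] at hj
        by_cases hj1 : j = scV n i₀
        · exact Finset.mem_insert.2 (Or.inl hj1)
        · by_cases hj2 : j = 2*n+1
          · exact Finset.mem_insert_of_mem ((mem_scSupp n f j).2 (by rw [hj2]; exact hc))
          · rw [if_neg hj1, if_neg hj2] at hj
            refine Finset.mem_insert_of_mem ((mem_scSupp n f j).2 ?_)
            intro h'
            apply hj
            rw [h']
            ring
      exact ⟨scFace_down hss hfi, hss.trans hsi⟩

lemma scWt_cont {n : ℕ} {α : Type*} [TopologicalSpace α] {F : α → (Fin (2*n+2) → ℝ)}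
    (hF : Continuous F) (j : ℕ) : Continuous fun a => scWt n (F a) j := by
  by_cases h : j < 2*n+2
  · have he : (fun a => scWt n (F a) j) = fun a => F a ⟨j, h⟩ :=
      funext fun a => scWt_lt n (F a) h
    rw [he]
    exact (continuous_apply _).comp hF
  · have he : (fun a => scWt n (F a) j) = fun _ => 0 := funext fun a => dif_neg h
    rw [he]
    exact continuous_const

lemma scPhi_cont {n : ℕ} {T : Finset ℕ} {i₀ : ℕ} {α : Type*} [TopologicalSpace α]
    {F : α → (Fin (2*n+2) → ℝ)} (hF : Continuous F) :
    Continuous fun a => scPhi n T i₀ (F a) := by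
  have h1 : Continuous fun (a : α) (k : Fin T.card) =>
      scWt n (F a) (scIdx T k) - scWt n (F a) (n + scIdx T k) +
        (if scIdx T k = i₀ then scEps n i₀ * scWt n (F a) (2*n+1) else 0) := by
    apply continuous_pi
    intro k
    refine ((scWt_cont hF _).sub (scWt_cont hF _)).add ?_
    by_cases hk : scIdx T k = i₀
    · simp only [if_pos hk]
      exact continuous_const.mul (scWt_cont hF _)
    · simp only [if_neg hk]
      exact continuous_const
  exact (PiLp.continuous_toLp 2 (fun _ : Fin T.card => ℝ)).comp h1

theorem scMain {n : ℕ} (hn : 3 ≤ n) {T : Finset ℕ} (hT : T ⊆ Finset.Icc 1 n)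
    {i₀ : ℕ} (hi₀ : i₀ ∈ T)
    (hcase : (i₀ + 1 = n ∧ n ∉ T) ∨ (i₀ = n ∧ n - 1 ∉ T)) :
    Nonempty (ContinuousMap.HomotopyEquiv
      (GeomReal (2 * n + 2) (fun t => pentFace n t ∧ t ⊆ chi'Supp n T))
      (Metric.sphere (0 : EuclideanSpace ℝ (Fin T.card)) 1)) := by
  classical
  set X := GeomReal (2 * n + 2) (fun t => pentFace n t ∧ t ⊆ chi'Supp n T) with hX
  set S := Metric.sphere (0 : EuclideanSpace ℝ (Fin T.card)) 1 with hS
  have hφ1 : ∀ f : X, ∑ k, |scPhi n T i₀ f.1 k| = 1 :=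
    fun f => scPhi_l1 hn hT hi₀ hcase f.2.1 f.2.2.1 f.2.2.2.1 f.2.2.2.2
  have hφne : ∀ f : X, scPhi n T i₀ f.1 ≠ 0 := by
    intro f h
    have h1 := hφ1 f
    rw [h] at h1
    simp at h1
  have hφnorm : ∀ f : X, ‖scPhi n T i₀ f.1‖ ≠ 0 := fun f => norm_ne_zero_iff.2 (hφne f)
  set ψf : X → EuclideanSpace ℝ (Fin T.card) :=
    fun f => ‖scPhi n T i₀ f.1‖⁻¹ • scPhi n T i₀ f.1 with hψf
  have hψmem : ∀ f, ψf f ∈ S := fun f => by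
    rw [hS, mem_sphere_zero_iff_norm]
    exact norm_smul_inv_norm (hφne f)
  have hψcont : Continuous ψf := by
    have h1 : Continuous fun f : X => scPhi n T i₀ f.1 := scPhi_cont continuous_subtype_val
    exact (h1.norm.inv₀ hφnorm).smul h1
  have hSpos : ∀ y : S, 0 < ∑ k, |(y.1) k| := by
    intro y
    have hy : ‖y.1‖ = 1 := mem_sphere_zero_iff_norm.1 y.2
    rcases (Finset.sum_nonneg (fun k _ => abs_nonneg ((y.1) k))).lt_or_eq with h | h
    · exact h
    · exfalso
      have hz : ∀ k, ‖y.1 k‖ = 0 := by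
        intro k
        have h0 := (Finset.sum_eq_zero_iff_of_nonneg
          (fun k _ => abs_nonneg ((y.1) k))).1 h.symm k (Finset.mem_univ k)
        simpa using h0
      have hzero : ‖y.1‖ = 0 := by
        rw [EuclideanSpace.norm_eq]
        simp [hz]
      rw [hzero] at hy; norm_num at hy
  set gz : EuclideanSpace ℝ (Fin T.card) → (Fin T.card → ℝ) :=
    fun y k => y k / ∑ j, |y j| with hgz
  set gf : S → (Fin (2*n+2) → ℝ) := fun y => scGF n T (gz y.1) with hgf
  have hgl1 : ∀ y : S, ∑ k, |gz y.1 k| = 1 := by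
    intro y
    have hp := hSpos y
    have habs : ∀ k : Fin T.card, |gz y.1 k| = |y.1 k| / ∑ j, |y.1 j| := fun k => by
      rw [hgz]
      show |y.1 k / _| = _
      rw [abs_div, abs_of_pos hp]
    rw [Finset.sum_congr rfl (fun k _ => habs k), ← Finset.sum_div]
    exact div_self (ne_of_gt hp)
  have hgmem : ∀ y : S, (∀ v, 0 ≤ gf y v) ∧ (∑ v, gf y v = 1) ∧
      (pentFace n (scSupp n (gf y)) ∧ scSupp n (gf y) ⊆ chi'Supp n T) := by
    intro y
    refine ⟨scGF_nonneg n T _, ?_, scGF_face hn hT hi₀ hcase _⟩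
    rw [hgf]
    show ∑ v, scGF n T (gz y.1) v = 1
    rw [scGF_sum hT]
    exact hgl1 y
  have hgcont : Continuous gf := by
    apply continuous_pi
    intro v
    apply continuous_finset_sum
    intro k _
    have hyk : ∀ (j : Fin T.card), Continuous fun y : S => y.1 j :=
      fun j => (PiLp.continuous_apply 2 (fun _ : Fin T.card => ℝ) j).comp continuous_subtype_val
    have hSc : Continuous fun y : S => ∑ j, |y.1 j| :=
      continuous_finset_sum _ (fun j _ => (hyk j).abs)
    have hzc : Continuous fun y : S => gz y.1 k :=
      (hyk k).div hSc (fun y => ne_of_gt (hSpos y))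
    exact (((continuous_id.max continuous_const).comp hzc).mul continuous_const).add
      (((continuous_neg.max continuous_const).comp hzc).mul continuous_const)
  -- ψ ∘ g = id
  have hright : ∀ y : S, ψf ⟨gf y, hgmem y⟩ = y.1 := by
    intro y
    have hp := hSpos y
    have hy1 : ‖y.1‖ = 1 := mem_sphere_zero_iff_norm.1 y.2
    have hphi : scPhi n T i₀ (gf y) = WithLp.toLp 2 (gz y.1) :=
      PiLp.ext fun k => scPhi_scGF hn hT (gz y.1) k
    rw [hψf]
    show ‖scPhi n T i₀ (gf y)‖⁻¹ • scPhi n T i₀ (gf y) = y.1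
    rw [hphi]
    have hzy : WithLp.toLp 2 (gz y.1) = (∑ j, |y.1 j|)⁻¹ • y.1 := by
      refine PiLp.ext fun k => ?_
      show y.1 k / _ = _
      rw [PiLp.smul_apply, smul_eq_mul,
        div_eq_inv_mul]
    rw [hzy, norm_smul, Real.norm_eq_abs, abs_inv, abs_of_pos hp, hy1, mul_one, inv_inv,
      smul_smul, mul_inv_cancel₀ (ne_of_gt hp), one_smul]
  -- g ∘ ψ = retraction at time 1
  have hleft : ∀ f : X, gf ⟨ψf f, hψmem f⟩ = scR n i₀ 1 f.1 := by
    intro f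
    have hnφ : (0:ℝ) ≤ ‖scPhi n T i₀ f.1‖⁻¹ := inv_nonneg.2 (norm_nonneg _)
    have happ : ∀ j : Fin T.card, ψf f j = ‖scPhi n T i₀ f.1‖⁻¹ * scPhi n T i₀ f.1 j :=
      fun j => rfl
    have hsum : ∑ j, |ψf f j| = ‖scPhi n T i₀ f.1‖⁻¹ := by
      have h1 : ∀ j : Fin T.card, |ψf f j| = ‖scPhi n T i₀ f.1‖⁻¹ * |scPhi n T i₀ f.1 j| :=
        fun j => by rw [happ, abs_mul, abs_of_nonneg hnφ]
      rw [Finset.sum_congr rfl (fun j _ => h1 j), ← Finset.mul_sum, hφ1 f, mul_one]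
    have hz : gz (ψf f) = fun k => scPhi n T i₀ f.1 k := by
      funext k
      show ψf f k / (∑ j, |ψf f j|) = _
      rw [hsum, happ, mul_comm, mul_div_assoc, div_self (inv_ne_zero (hφnorm f)), mul_one]
    have hbody : gf ⟨ψf f, hψmem f⟩ = scGF n T (scPhi n T i₀ f.1) := by
      rw [hgf]
      show scGF n T (gz (ψf f)) = _
      rw [hz]
    rw [hbody]
    funext v
    have hkey := scGF_scPhi hn hT hi₀ hcase f.2.1 f.2.2.2.1 f.2.2.2.2 (v:ℕ)
    rw [scWt_fin, scWt_fin] at hkey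
    rw [hkey]
    show _ = f.1 v + (1:ℝ) * scWt n f.1 (2*n+1) * _
    ring
  -- homotopy from id to g ∘ ψ
  have hRmem : ∀ (s : unitInterval) (f : X),
      (∀ v, 0 ≤ scR n i₀ (s:ℝ) f.1 v) ∧ (∑ v, scR n i₀ (s:ℝ) f.1 v = 1) ∧
        (pentFace n (scSupp n (scR n i₀ (s:ℝ) f.1)) ∧
          scSupp n (scR n i₀ (s:ℝ) f.1) ⊆ chi'Supp n T) :=
    fun s f => scR_mem hn hT hi₀ hcase f.2.1 f.2.2.1 f.2.2.2.1 f.2.2.2.2 s.2.1 s.2.2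
  have hHcont : Continuous fun p : unitInterval × X => scR n i₀ ((p.1 : ℝ)) p.2.1 := by
    apply continuous_pi
    intro v
    have h1 : Continuous fun p : unitInterval × X => p.2.1 v :=
      (continuous_apply v).comp (continuous_subtype_val.comp continuous_snd)
    have h2 : Continuous fun p : unitInterval × X => ((p.1 : ℝ)) :=
      continuous_subtype_val.comp continuous_fst
    have h3 : Continuous fun p : unitInterval × X => scWt n p.2.1 (2*n+1) :=
      scWt_cont (continuous_subtype_val.comp continuous_snd) _
    exact h1.add ((h2.mul h3).mul continuous_const)
  set ψc : C(X, S) := ⟨fun f => ⟨ψf f, hψmem f⟩, Continuous.subtype_mk hψcont _⟩ with hψc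
  set gc : C(S, X) := ⟨fun y => ⟨gf y, hgmem y⟩, Continuous.subtype_mk hgcont _⟩ with hgc
  refine ⟨ContinuousMap.HomotopyEquiv.mk ψc gc ?_ ?_⟩
  · -- (g ∘ ψ) homotopic to id
    refine ContinuousMap.Homotopic.symm ⟨ContinuousMap.Homotopy.mk
      ⟨fun p => ⟨scR n i₀ ((p.1 : ℝ)) p.2.1, hRmem p.1 p.2⟩, Continuous.subtype_mk hHcont _⟩
      ?_ ?_⟩
    · intro f
      refine Subtype.ext ?_
      show scR n i₀ ((0 : unitInterval) : ℝ) f.1 = f.1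
      funext v
      show f.1 v + ((0 : unitInterval) : ℝ) * _ * _ = f.1 v
      rw [show ((0 : unitInterval) : ℝ) = 0 from rfl]
      ring
    · intro f
      refine Subtype.ext ?_
      show scR n i₀ ((1 : unitInterval) : ℝ) f.1 = (gc.comp ψc f).1
      rw [show ((1 : unitInterval) : ℝ) = 1 from rfl]
      exact (hleft f).symm
  · -- ψ ∘ g = id
    have hcomp : ψc.comp gc = ContinuousMap.id S := by
      apply ContinuousMap.ext
      intro y
      exact Subtype.ext (hright y)
    rw [hcomp]

/-- Let `n ≥ 3` and let `T ⊆ {1,…,n}` contain exactly one of the two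
elements `n−1` and `n`. Then the realization of the induced subcomplex `K'_{χ',T}` is
homotopy equivalent to the sphere `S^{|T|−1}`. -/
theorem geomReal_pent_subcomplex_one (n : ℕ) (hn : 3 ≤ n) (T : Finset ℕ)
    (hT : T ⊆ Finset.Icc 1 n)
    (hone : (n - 1 ∈ T ∧ n ∉ T) ∨ (n - 1 ∉ T ∧ n ∈ T)) :
    Nonempty (ContinuousMap.HomotopyEquiv
      (GeomReal (2 * n + 2) (fun t => pentFace n t ∧ t ⊆ chi'Supp n T))
      (Metric.sphere (0 : EuclideanSpace ℝ (Fin T.card)) 1)) := by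
  rcases hone with ⟨h1, h2⟩ | ⟨h1, h2⟩
  · exact scMain hn hT h1 (Or.inl ⟨by omega, h2⟩)
  · exact scMain hn hT h2 (Or.inr ⟨rfl, h1⟩)
end
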